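/- arXiv:1012.3661 — 14 statements merged into one kernel-verified Lean document; each statement's English description precedes it below -/
import Mathlib

section
/- Let a, b, c, d, f, g : ℝ → ℝ be continuous real-valued functions of time and h₀ a real constant. Suppose α, β, γ, δ, ε, κ : ℝ → ℝ are differentiable and satisfy the Riccati-type system: α' + b + 2cα + 4aα² = 0, β' + (c + 4aα)β = 0, γ' + aβ² = 0, δ' + (c + 4aα)δ = f + 2αg, ε' = (g − 2aδ)β, κ' = gδ − aδ². Suppose μ : ℝ → ℝ is positive, differentiable, and satisfies μ' = (4aα + 2d)μ, and set h(t) = h₀ a(t) β(t)² μ(t). If χ : ℝ × ℝ → ℂ is twice continuously differentiable and satisfies the autonomous nonlinear Schrödinger equation i∂χ/∂τ + h₀|χ|²χ = ∂²χ/∂ξ², then the function ψ(x,t) = μ(t)^{−1/2} e^{i(α(t)x² + δ(t)x + κ(t))} χ(β(t)x + ε(t), γ(t)) satisfies the nonautonomous nonlinear Schrödinger equation i∂ψ/∂t = −a(t)∂²ψ/∂x² + b(t)x²ψ − ic(t)x∂ψ/∂x − id(t)ψ − f(t)xψ + ig(t)∂ψ/∂x + h(t)|ψ|²ψ. -/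
/-- The substitution
`ψ(x,t) = μ(t)^{-1/2} e^{i(α(t)x² + δ(t)x + κ(t))} χ(β(t)x + ε(t), γ(t))`
transforms solutions of the autonomous nonlinear Schrödinger equation
`iχ_τ + h₀|χ|²χ = χ_ξξ` into solutions of the nonautonomous nonlinear Schrödinger
equation `iψ_t = -aψ_xx + bx²ψ - icxψ_x - idψ - fxψ + igψ_x + h|ψ|²ψ`,
provided the Riccati-type system holds and `h = h₀ a β² μ`. -/
theorem nonautonomous_NLS_transform
    (a b c d f g : ℝ → ℝ) (h₀ : ℝ)
    (ha : Continuous a) (hb : Continuous b) (hc : Continuous c)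
    (hd : Continuous d) (hf : Continuous f) (hg : Continuous g)
    (α β γ δ ε κ : ℝ → ℝ)
    (hα : Differentiable ℝ α) (hβ : Differentiable ℝ β) (hγ : Differentiable ℝ γ)
    (hδ : Differentiable ℝ δ) (hε : Differentiable ℝ ε) (hκ : Differentiable ℝ κ)
    (eqA : ∀ t, deriv α t + b t + 2 * c t * α t + 4 * a t * (α t) ^ 2 = 0)
    (eqB : ∀ t, deriv β t + (c t + 4 * a t * α t) * β t = 0)
    (eqC : ∀ t, deriv γ t + a t * (β t) ^ 2 = 0)
    (eqD : ∀ t, deriv δ t + (c t + 4 * a t * α t) * δ t = f t + 2 * α t * g t)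
    (eqE : ∀ t, deriv ε t = (g t - 2 * a t * δ t) * β t)
    (eqF : ∀ t, deriv κ t = g t * δ t - a t * (δ t) ^ 2)
    (μ : ℝ → ℝ) (hμpos : ∀ t, 0 < μ t) (hμ : Differentiable ℝ μ)
    (eqM : ∀ t, deriv μ t = (4 * a t * α t + 2 * d t) * μ t)
    (h : ℝ → ℝ) (hh : ∀ t, h t = h₀ * a t * (β t) ^ 2 * μ t)
    (χ : ℝ → ℝ → ℂ)
    (hχ : ContDiff ℝ 2 (fun p : ℝ × ℝ => χ p.1 p.2))
    (hNLS : ∀ ξ τ : ℝ, Complex.I * deriv (fun s => χ ξ s) τ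
        + (h₀ : ℂ) * (‖χ ξ τ‖ : ℂ) ^ 2 * χ ξ τ
        = deriv (fun y => deriv (fun z => χ z τ) y) ξ)
    (ψ : ℝ → ℝ → ℂ)
    (hψ : ∀ x t, ψ x t = (Real.sqrt (μ t) : ℂ)⁻¹
        * Complex.exp (Complex.I * ((α t : ℂ) * (x : ℂ) ^ 2 + (δ t : ℂ) * (x : ℂ) + (κ t : ℂ)))
        * χ (β t * x + ε t) (γ t)) :
    ∀ x t : ℝ, Complex.I * deriv (fun s => ψ x s) t
        = -(a t : ℂ) * deriv (fun y => deriv (fun z => ψ z t) y) x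
          + (b t : ℂ) * (x : ℂ) ^ 2 * ψ x t
          - Complex.I * (c t : ℂ) * (x : ℂ) * deriv (fun y => ψ y t) x
          - Complex.I * (d t : ℂ) * ψ x t
          - (f t : ℂ) * (x : ℂ) * ψ x t
          + Complex.I * (g t : ℂ) * deriv (fun y => ψ y t) x
          + (h t : ℂ) * (‖ψ x t‖ : ℂ) ^ 2 * ψ x t := by
  intro x t
  have hFdiff : Differentiable ℝ (fun p : ℝ × ℝ => χ p.1 p.2) := hχ.differentiable (by norm_num)
  have hFd1 : ContDiff ℝ 1 (fderiv ℝ (fun p : ℝ × ℝ => χ p.1 p.2)) := hχ.fderiv_right (by norm_num)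
  -- partial derivatives
  have hpd1 : ∀ p q : ℝ, HasDerivAt (fun z => χ z q)
      (fderiv ℝ (fun p : ℝ × ℝ => χ p.1 p.2) (p, q) (1, 0)) p := fun p q =>
    (hFdiff (p, q)).hasFDerivAt.comp_hasDerivAt (f := fun z : ℝ => (z, q)) p ((hasDerivAt_id p).prodMk (hasDerivAt_const p q))
  have hpd2 : ∀ p q : ℝ, HasDerivAt (fun s => χ p s)
      (fderiv ℝ (fun p : ℝ × ℝ => χ p.1 p.2) (p, q) (0, 1)) q := fun p q =>
    (hFdiff (p, q)).hasFDerivAt.comp_hasDerivAt (f := fun s : ℝ => (p, s)) q ((hasDerivAt_const q p).prodMk (hasDerivAt_id q))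
  have hlin : ∀ p q u v : ℝ, fderiv ℝ (fun p : ℝ × ℝ => χ p.1 p.2) (p, q) (u, v)
      = (u : ℂ) * fderiv ℝ (fun p : ℝ × ℝ => χ p.1 p.2) (p, q) (1, 0)
        + (v : ℂ) * fderiv ℝ (fun p : ℝ × ℝ => χ p.1 p.2) (p, q) (0, 1) := by
    intro p q u v
    have huv : ((u, v) : ℝ × ℝ) = u • ((1:ℝ), (0:ℝ)) + v • ((0:ℝ), (1:ℝ)) := by simp
    rw [huv, map_add, map_smul, map_smul, Complex.real_smul, Complex.real_smul]
  -- abbreviation facts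
  have hμne : μ t ≠ 0 := ne_of_gt (hμpos t)
  have hsqpos : 0 < Real.sqrt (μ t) := Real.sqrt_pos.mpr (hμpos t)
  have hsq : Real.sqrt (μ t) ≠ 0 := ne_of_gt hsqpos
  have hs2 : Real.sqrt (μ t) ^ 2 = μ t := Real.sq_sqrt (le_of_lt (hμpos t))
  -- normalized form of ψ
  have hψ' : ∀ y s : ℝ, ψ y s = ((Real.sqrt (μ s))⁻¹ : ℝ)
      * Complex.exp (Complex.I * ((α s * y^2 + δ s * y + κ s : ℝ) : ℂ))
      * χ (β s * y + ε s) (γ s) := by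
    intro y s
    rw [hψ]
    push_cast
    ring_nf
  -- t-derivative of the μ-factor
  have hM : HasDerivAt (fun s => (((Real.sqrt (μ s))⁻¹ : ℝ) : ℂ))
      ((-(2 * a t * α t + d t) * (Real.sqrt (μ t))⁻¹ : ℝ) : ℂ) t := by
    have hMr : HasDerivAt (fun s => (Real.sqrt (μ s))⁻¹)
        (-(2 * a t * α t + d t) * (Real.sqrt (μ t))⁻¹) t := by
      have h1 : HasDerivAt (fun s => Real.sqrt (μ s)) (1 / (2 * Real.sqrt (μ t)) * deriv μ t) t :=
        (Real.hasDerivAt_sqrt (ne_of_gt (hμpos t))).comp t (hμ t).hasDerivAt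
      have h2 := h1.inv hsq
      refine h2.congr_deriv ?_
      rw [eqM, ← hs2]
      field_simp
      rw [Real.sqrt_sq (Real.sqrt_nonneg _)]
      ring
    exact hMr.ofReal_comp
  -- t-derivative of the exponential factor
  have hEt : HasDerivAt (fun s => Complex.exp (Complex.I * ((α s * x^2 + δ s * x + κ s : ℝ) : ℂ)))
      (Complex.I * ((deriv α t * x^2 + deriv δ t * x + deriv κ t : ℝ) : ℂ)
        * Complex.exp (Complex.I * ((α t * x^2 + δ t * x + κ t : ℝ) : ℂ))) t := by
    have hθ : HasDerivAt (fun s => α s * x^2 + δ s * x + κ s)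
        (deriv α t * x^2 + deriv δ t * x + deriv κ t) t :=
      (((hα t).hasDerivAt.mul_const (x^2)).add ((hδ t).hasDerivAt.mul_const x)).add
        (hκ t).hasDerivAt
    have := (hθ.ofReal_comp.const_mul Complex.I).cexp
    convert this using 1
    ring
  -- t-derivative of the χ factor
  have hCt : HasDerivAt (fun s => χ (β s * x + ε s) (γ s))
      (((deriv β t * x + deriv ε t : ℝ) : ℂ)
          * fderiv ℝ (fun p : ℝ × ℝ => χ p.1 p.2) (β t * x + ε t, γ t) (1, 0)
        + ((deriv γ t : ℝ) : ℂ)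
          * fderiv ℝ (fun p : ℝ × ℝ => χ p.1 p.2) (β t * x + ε t, γ t) (0, 1)) t := by
    have hptr : HasDerivAt (fun s => (β s * x + ε s, γ s))
        ((deriv β t * x + deriv ε t, deriv γ t)) t :=
      (((hβ t).hasDerivAt.mul_const x).add (hε t).hasDerivAt).prodMk (hγ t).hasDerivAt
    have h1 := (hFdiff (β t * x + ε t, γ t)).hasFDerivAt.comp_hasDerivAt t hptr
    rw [hlin] at h1
    exact h1
  -- derivative of ψ in t
  have hψt : HasDerivAt (fun s => ψ x s)
      (((-(2 * a t * α t + d t) * (Real.sqrt (μ t))⁻¹ : ℝ) : ℂ)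
          * Complex.exp (Complex.I * ((α t * x^2 + δ t * x + κ t : ℝ) : ℂ))
          * χ (β t * x + ε t) (γ t)
        + (((Real.sqrt (μ t))⁻¹ : ℝ) : ℂ)
          * (Complex.I * ((deriv α t * x^2 + deriv δ t * x + deriv κ t : ℝ) : ℂ)
            * Complex.exp (Complex.I * ((α t * x^2 + δ t * x + κ t : ℝ) : ℂ)))
          * χ (β t * x + ε t) (γ t)
        + (((Real.sqrt (μ t))⁻¹ : ℝ) : ℂ)
          * Complex.exp (Complex.I * ((α t * x^2 + δ t * x + κ t : ℝ) : ℂ))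
          * (((deriv β t * x + deriv ε t : ℝ) : ℂ)
              * fderiv ℝ (fun p : ℝ × ℝ => χ p.1 p.2) (β t * x + ε t, γ t) (1, 0)
            + ((deriv γ t : ℝ) : ℂ)
              * fderiv ℝ (fun p : ℝ × ℝ => χ p.1 p.2) (β t * x + ε t, γ t) (0, 1))) t := by
    have hfun : (fun s => ψ x s) = fun s => (((Real.sqrt (μ s))⁻¹ : ℝ) : ℂ)
        * Complex.exp (Complex.I * ((α s * x^2 + δ s * x + κ s : ℝ) : ℂ))
        * χ (β s * x + ε s) (γ s) := funext fun s => hψ' x s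
    rw [hfun]
    have := (hM.mul hEt).mul hCt
    refine this.congr_deriv ?_
    simp only [Pi.mul_apply]
    ring
  -- x-derivative of ψ at every point y
  have hψx : ∀ y : ℝ, HasDerivAt (fun z => ψ z t)
      ((((Real.sqrt (μ t))⁻¹ : ℝ) : ℂ)
        * Complex.exp (Complex.I * ((α t * y^2 + δ t * y + κ t : ℝ) : ℂ))
        * (Complex.I * ((2 * α t * y + δ t : ℝ) : ℂ) * χ (β t * y + ε t) (γ t)
          + ((β t : ℝ) : ℂ)
            * fderiv ℝ (fun p : ℝ × ℝ => χ p.1 p.2) (β t * y + ε t, γ t) (1, 0))) y := by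
    intro y
    have hfun : (fun z => ψ z t) = fun z => (((Real.sqrt (μ t))⁻¹ : ℝ) : ℂ)
        * Complex.exp (Complex.I * ((α t * z^2 + δ t * z + κ t : ℝ) : ℂ))
        * χ (β t * z + ε t) (γ t) := funext fun z => hψ' z t
    rw [hfun]
    have hp : HasDerivAt (fun z : ℝ => α t * z^2 + δ t * z + κ t) (α t * (2 * y) + δ t * 1) y := by
      have h1 : HasDerivAt (fun z : ℝ => z^2) (2 * y) y := by
        simpa using hasDerivAt_pow 2 y
      exact ((h1.const_mul (α t)).add ((hasDerivAt_id y).const_mul (δ t))).add_const (κ t)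
    have hE := (hp.ofReal_comp.const_mul Complex.I).cexp
    have hq : HasDerivAt (fun z : ℝ => (β t * z + ε t, γ t)) ((β t * 1, 0)) y :=
      (((hasDerivAt_id y).const_mul (β t)).add_const (ε t)).prodMk (hasDerivAt_const y (γ t))
    have hc := (hFdiff (β t * y + ε t, γ t)).hasFDerivAt.comp_hasDerivAt y hq
    rw [hlin] at hc
    have := ((hasDerivAt_const y ((((Real.sqrt (μ t))⁻¹ : ℝ) : ℂ))).mul hE).mul hc
    refine this.congr_deriv ?_
    all_goals
      try simp only [Function.comp_apply, Pi.mul_apply, Pi.add_apply]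
      try push_cast
      ring
  -- second x-derivative of ψ
  have hX11 : HasDerivAt
      (fun y => fderiv ℝ (fun p : ℝ × ℝ => χ p.1 p.2) (β t * y + ε t, γ t) (1, 0))
      (((β t : ℝ) : ℂ) * (fderiv ℝ (fderiv ℝ (fun p : ℝ × ℝ => χ p.1 p.2))
          (β t * x + ε t, γ t) (1, 0) (1, 0))) x := by
    have h1 : HasFDerivAt (fderiv ℝ (fun p : ℝ × ℝ => χ p.1 p.2))
        (fderiv ℝ (fderiv ℝ (fun p : ℝ × ℝ => χ p.1 p.2)) (β t * x + ε t, γ t))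
        (β t * x + ε t, γ t) := ((hFd1.differentiable one_ne_zero) _).hasFDerivAt
    have hq : HasDerivAt (fun y : ℝ => (β t * y + ε t, γ t)) ((β t * 1, 0)) x :=
      (((hasDerivAt_id x).const_mul (β t)).add_const (ε t)).prodMk (hasDerivAt_const x (γ t))
    have h2 := h1.comp_hasDerivAt x hq
    have h3 := ((ContinuousLinearMap.apply ℝ ℂ ((1:ℝ), (0:ℝ))).hasFDerivAt).comp_hasDerivAt x h2
    refine h3.congr_deriv ?_
    show (fderiv ℝ (fderiv ℝ (fun p : ℝ × ℝ => χ p.1 p.2)) (β t * x + ε t, γ t)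
      (β t * 1, 0)) (1, 0) = _
    have he : ((β t * 1, (0:ℝ)) : ℝ × ℝ) = (β t) • ((1:ℝ), (0:ℝ)) := by simp
    rw [he, map_smul]
    simp [Complex.real_smul]
  have hψxx : HasDerivAt (fun y => (((Real.sqrt (μ t))⁻¹ : ℝ) : ℂ)
        * Complex.exp (Complex.I * ((α t * y^2 + δ t * y + κ t : ℝ) : ℂ))
        * (Complex.I * ((2 * α t * y + δ t : ℝ) : ℂ) * χ (β t * y + ε t) (γ t)
          + ((β t : ℝ) : ℂ)
            * fderiv ℝ (fun p : ℝ × ℝ => χ p.1 p.2) (β t * y + ε t, γ t) (1, 0)))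
      ((((Real.sqrt (μ t))⁻¹ : ℝ) : ℂ)
        * Complex.exp (Complex.I * ((α t * x^2 + δ t * x + κ t : ℝ) : ℂ))
        * ((Complex.I * ((2 * α t * x + δ t : ℝ) : ℂ))
            * (Complex.I * ((2 * α t * x + δ t : ℝ) : ℂ) * χ (β t * x + ε t) (γ t)
              + ((β t : ℝ) : ℂ)
                * fderiv ℝ (fun p : ℝ × ℝ => χ p.1 p.2) (β t * x + ε t, γ t) (1, 0))
          + (Complex.I * ((2 * α t : ℝ) : ℂ) * χ (β t * x + ε t) (γ t)
            + Complex.I * ((2 * α t * x + δ t : ℝ) : ℂ) * (((β t : ℝ) : ℂ)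
                * fderiv ℝ (fun p : ℝ × ℝ => χ p.1 p.2) (β t * x + ε t, γ t) (1, 0))
            + ((β t : ℝ) : ℂ) * (((β t : ℝ) : ℂ)
                * (fderiv ℝ (fderiv ℝ (fun p : ℝ × ℝ => χ p.1 p.2))
                    (β t * x + ε t, γ t) (1, 0) (1, 0)))))) x := by
    have hp : HasDerivAt (fun z : ℝ => α t * z^2 + δ t * z + κ t) (α t * (2 * x) + δ t * 1) x := by
      have h1 : HasDerivAt (fun z : ℝ => z^2) (2 * x) x := by
        simpa using hasDerivAt_pow 2 x
      exact ((h1.const_mul (α t)).add ((hasDerivAt_id x).const_mul (δ t))).add_const (κ t)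
    have hE := (hp.ofReal_comp.const_mul Complex.I).cexp
    have hq : HasDerivAt (fun z : ℝ => (β t * z + ε t, γ t)) ((β t * 1, 0)) x :=
      (((hasDerivAt_id x).const_mul (β t)).add_const (ε t)).prodMk (hasDerivAt_const x (γ t))
    have hc := (hFdiff (β t * x + ε t, γ t)).hasFDerivAt.comp_hasDerivAt x hq
    rw [hlin] at hc
    have hlc : HasDerivAt (fun y : ℝ => ((2 * α t * y + δ t : ℝ) : ℂ)) ((2 * α t : ℝ) : ℂ) x := by
      have : HasDerivAt (fun y : ℝ => 2 * α t * y + δ t) (2 * α t) x := by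
        simpa using ((hasDerivAt_id x).const_mul (2 * α t)).add_const (δ t)
      exact this.ofReal_comp
    have hterm1 : HasDerivAt (fun y => Complex.I * ((2 * α t * y + δ t : ℝ) : ℂ)
        * χ (β t * y + ε t) (γ t))
        (Complex.I * ((2 * α t : ℝ) : ℂ) * χ (β t * x + ε t) (γ t)
          + Complex.I * ((2 * α t * x + δ t : ℝ) : ℂ)
            * (((β t * 1 : ℝ) : ℂ)
                * fderiv ℝ (fun p : ℝ × ℝ => χ p.1 p.2) (β t * x + ε t, γ t) (1, 0)
              + ((0 : ℝ) : ℂ)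
                * fderiv ℝ (fun p : ℝ × ℝ => χ p.1 p.2) (β t * x + ε t, γ t) (0, 1))) x := by
      have := (hlc.const_mul Complex.I).mul hc
      refine this.congr_deriv ?_
      all_goals
        try simp only [Function.comp_apply, Pi.mul_apply, Pi.add_apply]
        try push_cast
    have hG := hterm1.add (hX11.const_mul (((β t : ℝ) : ℂ)))
    have := ((hasDerivAt_const x ((((Real.sqrt (μ t))⁻¹ : ℝ) : ℂ))).mul hE).mul hG
    refine this.congr_deriv ?_
    all_goals
      try simp only [Function.comp_apply, Pi.mul_apply, Pi.add_apply]
      try push_cast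
      ring
  -- the autonomous NLS at the transformed point
  have e1 : deriv (fun s => χ (β t * x + ε t) s) (γ t)
      = fderiv ℝ (fun p : ℝ × ℝ => χ p.1 p.2) (β t * x + ε t, γ t) (0, 1) :=
    (hpd2 _ _).deriv
  have e2 : (fun y => deriv (fun z => χ z (γ t)) y)
      = fun y => fderiv ℝ (fun p : ℝ × ℝ => χ p.1 p.2) (y, γ t) (1, 0) :=
    funext fun y => (hpd1 y (γ t)).deriv
  have e3 : HasDerivAt (fun y => fderiv ℝ (fun p : ℝ × ℝ => χ p.1 p.2) (y, γ t) (1, 0))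
      (fderiv ℝ (fderiv ℝ (fun p : ℝ × ℝ => χ p.1 p.2)) (β t * x + ε t, γ t) (1, 0) (1, 0))
      (β t * x + ε t) := by
    have h1 : HasFDerivAt (fderiv ℝ (fun p : ℝ × ℝ => χ p.1 p.2))
        (fderiv ℝ (fderiv ℝ (fun p : ℝ × ℝ => χ p.1 p.2)) (β t * x + ε t, γ t))
        (β t * x + ε t, γ t) := ((hFd1.differentiable one_ne_zero) _).hasFDerivAt
    have hq : HasDerivAt (fun y : ℝ => (y, γ t)) (((1:ℝ), (0:ℝ))) (β t * x + ε t) :=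
      (hasDerivAt_id _).prodMk (hasDerivAt_const _ (γ t))
    have h2 := h1.comp_hasDerivAt (β t * x + ε t) hq
    exact ((ContinuousLinearMap.apply ℝ ℂ ((1:ℝ), (0:ℝ))).hasFDerivAt).comp_hasDerivAt
      (β t * x + ε t) h2
  have hKey : (h₀ : ℂ) * (‖χ (β t * x + ε t) (γ t)‖ : ℂ) ^ 2
        * χ (β t * x + ε t) (γ t)
      = fderiv ℝ (fderiv ℝ (fun p : ℝ × ℝ => χ p.1 p.2)) (β t * x + ε t, γ t) (1, 0) (1, 0)
        - Complex.I * fderiv ℝ (fun p : ℝ × ℝ => χ p.1 p.2) (β t * x + ε t, γ t) (0, 1) := by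
    have hn := hNLS (β t * x + ε t) (γ t)
    rw [e1, e2, e3.deriv] at hn
    linear_combination hn
  -- modulus computation
  have habsE : ‖Complex.exp (Complex.I * ((α t * x^2 + δ t * x + κ t : ℝ) : ℂ))‖ = 1 := by
    rw [mul_comm, Complex.norm_exp_ofReal_mul_I]
  have habs : (‖ψ x t‖) ^ 2 = (μ t)⁻¹ * (‖χ (β t * x + ε t) (γ t)‖) ^ 2 := by
    rw [hψ' x t, norm_mul, norm_mul, habsE, Complex.norm_real, Real.norm_eq_abs,
      abs_of_nonneg (inv_nonneg.mpr (Real.sqrt_nonneg _))]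
    rw [← hs2]
    field_simp
    rw [Real.sqrt_sq (Real.sqrt_nonneg _)]
  have hHC : (h t : ℂ) * (‖ψ x t‖ : ℂ) ^ 2
      = (h₀ : ℂ) * (a t : ℂ) * (β t : ℂ) ^ 2
        * (‖χ (β t * x + ε t) (γ t)‖ : ℂ) ^ 2 := by
    have hHr : h t * (‖ψ x t‖) ^ 2
        = h₀ * a t * (β t) ^ 2 * (‖χ (β t * x + ε t) (γ t)‖) ^ 2 := by
      rw [hh, habs]
      field_simp
    exact_mod_cast congrArg (fun r : ℝ => (r : ℂ)) hHr
  -- substitute everything into the goal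
  have edx : (fun y => deriv (fun z => ψ z t) y) = fun y => (((Real.sqrt (μ t))⁻¹ : ℝ) : ℂ)
      * Complex.exp (Complex.I * ((α t * y^2 + δ t * y + κ t : ℝ) : ℂ))
      * (Complex.I * ((2 * α t * y + δ t : ℝ) : ℂ) * χ (β t * y + ε t) (γ t)
        + ((β t : ℝ) : ℂ)
          * fderiv ℝ (fun p : ℝ × ℝ => χ p.1 p.2) (β t * y + ε t, γ t) (1, 0)) :=
    funext fun y => (hψx y).deriv
  rw [hψt.deriv, edx, hψxx.deriv, (hψx x).deriv, hHC, hψ' x t]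
  rw [eqE t, eqF t,
    show deriv α t = -(b t) - 2 * c t * α t - 4 * a t * (α t) ^ 2 by linarith [eqA t],
    show deriv β t = -((c t + 4 * a t * α t) * β t) by linarith [eqB t],
    show deriv γ t = -(a t * (β t) ^ 2) by linarith [eqC t],
    show deriv δ t = f t + 2 * α t * g t - (c t + 4 * a t * α t) * δ t by linarith [eqD t]]
  push_cast
  linear_combination (norm := (ring_nf; simp only [Complex.I_sq]; ring_nf))
    (-((a t : ℂ) * ((β t : ℂ))^2 * ((Real.sqrt (μ t) : ℝ) : ℂ)⁻¹
      * Complex.exp (Complex.I * ((α t : ℂ) * (x : ℂ)^2 + (δ t : ℂ) * (x : ℂ) + (κ t : ℂ)))))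
      * hKey
end

section
/- Let a, b, c, d : ℝ → ℝ be differentiable with a(t) ≠ 0 for all t, and let μ : ℝ → ℝ be twice differentiable with μ(t) ≠ 0. Define α(t) = μ'(t)/(4a(t)μ(t)) − d(t)/(2a(t)). Then α satisfies the Riccati equation α' + b + 2cα + 4aα² = 0 if and only if μ satisfies the characteristic equation μ'' − τ(t)μ' + 4σ(t)μ = 0, where τ(t) = a'/a − 2c + 4d and σ(t) = ab − cd + d² + (d a')/(2a) − d'/2. -/
private lemma riccati_aux (A A' B C D D' M M' M'' : ℝ) (hA : A ≠ 0) (hM : M ≠ 0) :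
    (4*A*M) * ((M''*(4*A*M) - M'*(4*A'*M + 4*A*M'))/(4*A*M)^2 - (D'*(2*A) - D*(2*A'))/(2*A)^2
      + B + 2*C*(M'/(4*A*M) - D/(2*A)) + 4*A*(M'/(4*A*M) - D/(2*A))^2)
    = M'' - (A'/A - 2*C + 4*D)*M' + 4*(A*B - C*D + D^2 + D*A'/(2*A) - D'/2)*M := by
  field_simp
  ring

/-- With `α = μ'/(4aμ) - d/(2a)`, the Riccati equation
`α' + b + 2cα + 4aα² = 0` holds if and only if `μ` satisfies the characteristic equation
`μ'' - τ(t)μ' + 4σ(t)μ = 0` with `τ = a'/a - 2c + 4d` and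
`σ = ab - cd + d² + da'/(2a) - d'/2`. -/
theorem riccati_iff_characteristic
    (a b c d : ℝ → ℝ)
    (ha : Differentiable ℝ a) (hb : Differentiable ℝ b)
    (hc : Differentiable ℝ c) (hd : Differentiable ℝ d)
    (hane : ∀ t, a t ≠ 0)
    (μ : ℝ → ℝ) (hμ : Differentiable ℝ μ) (hμ' : Differentiable ℝ (deriv μ))
    (hμne : ∀ t, μ t ≠ 0)
    (α : ℝ → ℝ)
    (hα : ∀ t, α t = deriv μ t / (4 * a t * μ t) - d t / (2 * a t)) :
    (∀ t, deriv α t + b t + 2 * c t * α t + 4 * a t * (α t) ^ 2 = 0) ↔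
    (∀ t, deriv (deriv μ) t - (deriv a t / a t - 2 * c t + 4 * d t) * deriv μ t
        + 4 * (a t * b t - c t * d t + (d t) ^ 2 + d t * deriv a t / (2 * a t)
            - deriv d t / 2) * μ t = 0) := by
  have hαfun : α = fun t => deriv μ t / (4 * a t * μ t) - d t / (2 * a t) := funext hα
  have hden : ∀ t, 4 * a t * μ t ≠ 0 := fun t =>
    mul_ne_zero (mul_ne_zero (by norm_num) (hane t)) (hμne t)
  have hden2 : ∀ t, 2 * a t ≠ 0 := fun t => mul_ne_zero (by norm_num) (hane t)
  have key : ∀ t, deriv α t =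
      (deriv (deriv μ) t * (4 * a t * μ t)
        - deriv μ t * (4 * deriv a t * μ t + 4 * a t * deriv μ t)) / (4 * a t * μ t) ^ 2
      - (deriv d t * (2 * a t) - d t * (2 * deriv a t)) / (2 * a t) ^ 2 := by
    intro t
    have h1 : HasDerivAt (fun t => 4 * a t * μ t)
        (4 * deriv a t * μ t + 4 * a t * deriv μ t) t := by
      have := (((ha t).hasDerivAt.const_mul 4).mul (hμ t).hasDerivAt)
      exact this
    have h2 : HasDerivAt (fun t => 2 * a t) (2 * deriv a t) t :=
      (ha t).hasDerivAt.const_mul 2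
    have h3 : HasDerivAt (fun t => deriv μ t / (4 * a t * μ t))
        ((deriv (deriv μ) t * (4 * a t * μ t)
          - deriv μ t * (4 * deriv a t * μ t + 4 * a t * deriv μ t)) / (4 * a t * μ t) ^ 2) t :=
      (hμ' t).hasDerivAt.div h1 (hden t)
    have h4 : HasDerivAt (fun t => d t / (2 * a t))
        ((deriv d t * (2 * a t) - d t * (2 * deriv a t)) / (2 * a t) ^ 2) t :=
      (hd t).hasDerivAt.div h2 (hden2 t)
    rw [hαfun]
    exact (h3.sub h4).deriv
  have main : ∀ t, (deriv α t + b t + 2 * c t * α t + 4 * a t * (α t) ^ 2 = 0) ↔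
      (deriv (deriv μ) t - (deriv a t / a t - 2 * c t + 4 * d t) * deriv μ t
        + 4 * (a t * b t - c t * d t + (d t) ^ 2 + d t * deriv a t / (2 * a t)
            - deriv d t / 2) * μ t = 0) := by
    intro t
    have hmul : (4 * a t * μ t) *
        (deriv α t + b t + 2 * c t * α t + 4 * a t * (α t) ^ 2) =
        deriv (deriv μ) t - (deriv a t / a t - 2 * c t + 4 * d t) * deriv μ t
        + 4 * (a t * b t - c t * d t + (d t) ^ 2 + d t * deriv a t / (2 * a t)
            - deriv d t / 2) * μ t := by
      rw [key t, hα t]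
      exact riccati_aux (a t) (deriv a t) (b t) (c t) (d t) (deriv d t) (μ t) (deriv μ t)
        (deriv (deriv μ) t) (hane t) (hμne t)
    constructor
    · intro h
      rw [← hmul, h, mul_zero]
    · intro h
      rw [← hmul] at h
      exact (mul_eq_zero.mp h).resolve_left (hden t)
  exact forall_congr' main
end

section
/- Let a, c, d : ℝ → ℝ be continuous with a(t) ≠ 0, let μ : ℝ → ℝ be positive and differentiable, define α(t) = μ'(t)/(4a(t)μ(t)) − d(t)/(2a(t)) and λ(t) = exp(−∫₀ᵗ (c(s) − 2d(s)) ds). If β : ℝ → ℝ is differentiable and satisfies β' + (c + 4aα)β = 0, then β(t) = β(0) μ(0) λ(t)/μ(t) for all t. -/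
/-- If `β' + (c + 4aα)β = 0` with `α = μ'/(4aμ) - d/(2a)` and
`λ(t) = exp(-∫₀ᵗ (c - 2d))`, then `β(t) = β(0) μ(0) λ(t)/μ(t)`. -/
theorem beta_formula
    (a c d : ℝ → ℝ) (ha : Continuous a) (hc : Continuous c) (hd : Continuous d)
    (hane : ∀ t, a t ≠ 0)
    (μ : ℝ → ℝ) (hμpos : ∀ t, 0 < μ t) (hμ : Differentiable ℝ μ)
    (α lam : ℝ → ℝ)
    (hα : ∀ t, α t = deriv μ t / (4 * a t * μ t) - d t / (2 * a t))
    (hlam : ∀ t, lam t = Real.exp (-∫ s in (0:ℝ)..t, (c s - 2 * d s)))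
    (β : ℝ → ℝ) (hβ : Differentiable ℝ β)
    (hode : ∀ t, deriv β t + (c t + 4 * a t * α t) * β t = 0) :
    ∀ t, β t = β 0 * μ 0 * lam t / μ t := by
  have hcd : Continuous fun s => c s - 2 * d s := by continuity
  set I : ℝ → ℝ := fun t => ∫ s in (0:ℝ)..t, (c s - 2 * d s) with hIdef
  have hI : ∀ t, HasDerivAt I (c t - 2 * d t) t := by
    intro t
    exact intervalIntegral.integral_hasDerivAt_right
      (hcd.intervalIntegrable 0 t) (hcd.stronglyMeasurableAtFilter _ _)
      hcd.continuousAt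
  set E : ℝ → ℝ := fun t => Real.exp (I t) with hEdef
  have hE : ∀ t, HasDerivAt E ((c t - 2 * d t) * E t) t := by
    intro t
    simpa [hEdef, mul_comm] using (hI t).exp
  have hEpos : ∀ t, 0 < E t := fun t => Real.exp_pos _
  set G : ℝ → ℝ := fun t => β t * μ t * E t with hGdef
  have hderivβ : ∀ t, deriv β t = -(c t + deriv μ t / μ t - 2 * d t) * β t := by
    intro t
    have h := hode t
    have hμne := (hμpos t).ne'
    have hat := hane t
    have : c t + 4 * a t * α t = c t + deriv μ t / μ t - 2 * d t := by
      rw [hα t]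
      field_simp
      ring
    rw [this] at h
    linarith
  have hG : ∀ t, HasDerivAt G 0 t := by
    intro t
    have hβt : HasDerivAt β (deriv β t) t := (hβ t).hasDerivAt
    have hμt : HasDerivAt μ (deriv μ t) t := (hμ t).hasDerivAt
    have h := ((hβt.mul hμt).mul (hE t))
    have key : (deriv β t * μ t + β t * deriv μ t) * E t
        + β t * μ t * ((c t - 2 * d t) * E t) = 0 := by
      rw [hderivβ t]
      have hμne := (hμpos t).ne'
      field_simp
      ring
    rw [Pi.mul_apply, key] at h
    exact h
  have hconst : ∀ t, G t = G 0 := by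
    intro t
    have : ∀ x y : ℝ, G x = G y :=
      is_const_of_deriv_eq_zero (fun x => (hG x).differentiableAt)
        (fun x => (hG x).deriv)
    exact this t 0
  intro t
  have h := hconst t
  have hμne := (hμpos t).ne'
  have hEne := (hEpos t).ne'
  have hI0 : I 0 = 0 := by simp [hIdef]
  have hE0 : E 0 = 1 := by simp [hEdef, hI0]
  have hlamE : lam t = 1 / E t := by
    rw [hlam t, hEdef]
    simp [Real.exp_neg]
    rfl
  rw [hlamE]
  have hG0 : G 0 = β 0 * μ 0 := by simp [hGdef, hE0]
  rw [hG0] at h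
  have : β t * μ t * E t = β 0 * μ 0 := h
  field_simp
  linarith [this]
end

section
/- Let a, b, c, d : ℝ → ℝ be continuous and let μ₀, α₀, β₀, γ₀ : I → ℝ be differentiable on an open interval I, satisfying α₀' + b + 2cα₀ + 4aα₀² = 0, β₀' + (c + 4aα₀)β₀ = 0, γ₀' + aβ₀² = 0, and μ₀' = (4aα₀ + 2d)μ₀ with μ₀ > 0 on I. Fix real constants α(0), β(0), γ(0), μ(0) and suppose α(0) + γ₀(t) ≠ 0 on I. Then the functions defined by μ(t) = 2μ(0)μ₀(t)(α(0) + γ₀(t)), α(t) = α₀(t) − β₀²(t)/(4(α(0) + γ₀(t))), β(t) = −β(0)β₀(t)/(2(α(0) + γ₀(t))), γ(t) = γ(0) − β²(0)/(4(α(0) + γ₀(t))) satisfy, on I: α' + b + 2cα + 4aα² = 0, β' + (c + 4aα)β = 0, γ' + aβ² = 0, and μ' = (4aα + 2d)μ. -/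
/-- Transformation formulas expressing the general solution of the
Riccati-type system (equations for μ, α, β, γ) in terms of a fundamental solution
`(μ₀, α₀, β₀, γ₀)` on an open interval `Ioo p q` and constants
`αc = α(0)`, `βc = β(0)`, `γc = γ(0)`, `μc = μ(0)`. -/
theorem riccati_general_solution_mabg
    (a b c d : ℝ → ℝ)
    (ha : Continuous a) (hb : Continuous b) (hc : Continuous c) (hd : Continuous d)
    (p q : ℝ)
    (μ₀ α₀ β₀ γ₀ : ℝ → ℝ)
    (hdiff : ∀ t ∈ Set.Ioo p q, DifferentiableAt ℝ μ₀ t ∧ DifferentiableAt ℝ α₀ t ∧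
        DifferentiableAt ℝ β₀ t ∧ DifferentiableAt ℝ γ₀ t)
    (hμ₀pos : ∀ t ∈ Set.Ioo p q, 0 < μ₀ t)
    (eqA₀ : ∀ t ∈ Set.Ioo p q, deriv α₀ t + b t + 2 * c t * α₀ t + 4 * a t * (α₀ t) ^ 2 = 0)
    (eqB₀ : ∀ t ∈ Set.Ioo p q, deriv β₀ t + (c t + 4 * a t * α₀ t) * β₀ t = 0)
    (eqC₀ : ∀ t ∈ Set.Ioo p q, deriv γ₀ t + a t * (β₀ t) ^ 2 = 0)
    (eqM₀ : ∀ t ∈ Set.Ioo p q, deriv μ₀ t = (4 * a t * α₀ t + 2 * d t) * μ₀ t)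
    (αc βc γc μc : ℝ)
    (hne : ∀ t ∈ Set.Ioo p q, αc + γ₀ t ≠ 0)
    (μ α β γ : ℝ → ℝ)
    (hμ : ∀ t, μ t = 2 * μc * μ₀ t * (αc + γ₀ t))
    (hα : ∀ t, α t = α₀ t - (β₀ t) ^ 2 / (4 * (αc + γ₀ t)))
    (hβ : ∀ t, β t = -(βc * β₀ t) / (2 * (αc + γ₀ t)))
    (hγ : ∀ t, γ t = γc - βc ^ 2 / (4 * (αc + γ₀ t))) :
    ∀ t ∈ Set.Ioo p q,
      deriv α t + b t + 2 * c t * α t + 4 * a t * (α t) ^ 2 = 0 ∧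
      deriv β t + (c t + 4 * a t * α t) * β t = 0 ∧
      deriv γ t + a t * (β t) ^ 2 = 0 ∧
      deriv μ t = (4 * a t * α t + 2 * d t) * μ t := by
  have hμf : μ = fun s => 2 * μc * μ₀ s * (αc + γ₀ s) := funext hμ
  have hαf : α = fun s => α₀ s - (β₀ s) ^ 2 / (4 * (αc + γ₀ s)) := funext hα
  have hβf : β = fun s => -(βc * β₀ s) / (2 * (αc + γ₀ s)) := funext hβ
  have hγf : γ = fun s => γc - βc ^ 2 / (4 * (αc + γ₀ s)) := funext hγ
  subst hμf hαf hβf hγf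
  intro t ht
  obtain ⟨hμd, hαd, hβd, hγd⟩ := hdiff t ht
  have hDne : αc + γ₀ t ≠ 0 := hne t ht
  have h4ne : (4 : ℝ) * (αc + γ₀ t) ≠ 0 := by positivity
  have h2ne : (2 : ℝ) * (αc + γ₀ t) ≠ 0 := by positivity
  have hA' : HasDerivAt α₀ (deriv α₀ t) t := hαd.hasDerivAt
  have hB' : HasDerivAt β₀ (deriv β₀ t) t := hβd.hasDerivAt
  have hG' : HasDerivAt γ₀ (deriv γ₀ t) t := hγd.hasDerivAt
  have hM' : HasDerivAt μ₀ (deriv μ₀ t) t := hμd.hasDerivAt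
  have hDen : HasDerivAt (fun s => αc + γ₀ s) (deriv γ₀ t) t := hG'.const_add αc
  have hDen4 : HasDerivAt (fun s => 4 * (αc + γ₀ s)) (4 * deriv γ₀ t) t := hDen.const_mul 4
  have hDen2 : HasDerivAt (fun s => 2 * (αc + γ₀ s)) (2 * deriv γ₀ t) t := hDen.const_mul 2
  have hβsq : HasDerivAt (fun s => (β₀ s) ^ 2) (2 * β₀ t * deriv β₀ t) t := by
    have := hB'.fun_pow 2; simpa [mul_comm] using this
  -- deriv of α
  have hαD : HasDerivAt (fun s => α₀ s - (β₀ s) ^ 2 / (4 * (αc + γ₀ s)))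
      (deriv α₀ t - (2 * β₀ t * deriv β₀ t * (4 * (αc + γ₀ t)) -
        (β₀ t) ^ 2 * (4 * deriv γ₀ t)) / (4 * (αc + γ₀ t)) ^ 2) t :=
    hA'.sub (hβsq.div hDen4 h4ne)
  -- deriv of β
  have hβnum : HasDerivAt (fun s => -(βc * β₀ s)) (-(βc * deriv β₀ t)) t :=
    ((hB'.const_mul βc)).neg
  have hβD : HasDerivAt (fun s => -(βc * β₀ s) / (2 * (αc + γ₀ s)))
      ((-(βc * deriv β₀ t) * (2 * (αc + γ₀ t)) -
        -(βc * β₀ t) * (2 * deriv γ₀ t)) / (2 * (αc + γ₀ t)) ^ 2) t :=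
    hβnum.div hDen2 h2ne
  -- deriv of γ
  have hγD : HasDerivAt (fun s => γc - βc ^ 2 / (4 * (αc + γ₀ s)))
      (0 - (0 * (4 * (αc + γ₀ t)) - βc ^ 2 * (4 * deriv γ₀ t)) / (4 * (αc + γ₀ t)) ^ 2) t :=
    (hasDerivAt_const t γc).sub ((hasDerivAt_const t (βc ^ 2)).div hDen4 h4ne)
  -- deriv of μ
  have hμD : HasDerivAt (fun s => 2 * μc * μ₀ s * (αc + γ₀ s))
      (2 * μc * deriv μ₀ t * (αc + γ₀ t) + 2 * μc * μ₀ t * deriv γ₀ t) t :=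
    (hM'.const_mul (2 * μc)).mul hDen
  rw [hαD.deriv, hβD.deriv, hγD.deriv, hμD.deriv]
  have eA : deriv α₀ t = -(b t + 2 * c t * α₀ t + 4 * a t * (α₀ t) ^ 2) := by
    linarith [eqA₀ t ht]
  have eB : deriv β₀ t = -((c t + 4 * a t * α₀ t) * β₀ t) := by linarith [eqB₀ t ht]
  have eG : deriv γ₀ t = -(a t * (β₀ t) ^ 2) := by linarith [eqC₀ t ht]
  have eM : deriv μ₀ t = (4 * a t * α₀ t + 2 * d t) * μ₀ t := eqM₀ t ht
  rw [eA, eB, eG, eM]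
  refine ⟨?_, ?_, ?_, ?_⟩
  · field_simp
    ring
  · field_simp
    ring
  · field_simp
    ring
  · field_simp
    ring
end

section
/- Under the hypotheses of the transformation formulas for μ, α, β, γ (namely: a, b, c, d, f, g : ℝ → ℝ continuous; μ₀, α₀, β₀, γ₀, δ₀, ε₀, κ₀ : I → ℝ differentiable satisfying the full Riccati-type system α₀' + b + 2cα₀ + 4aα₀² = 0, β₀' + (c+4aα₀)β₀ = 0, γ₀' + aβ₀² = 0, δ₀' + (c+4aα₀)δ₀ = f + 2α₀g, ε₀' = (g−2aδ₀)β₀, κ₀' = gδ₀ − aδ₀²; constants α(0), β(0), δ(0), ε(0), κ(0) with α(0) + γ₀(t) ≠ 0 on I), define α(t) = α₀ − β₀²/(4(α(0)+γ₀)) and β(t) = −β(0)β₀/(2(α(0)+γ₀)). Then the functions δ(t) = δ₀(t) − β₀(t)(δ(0)+ε₀(t))/(2(α(0)+γ₀(t))), ε(t) = ε(0) − β(0)(δ(0)+ε₀(t))/(2(α(0)+γ₀(t))), κ(t) = κ(0) + κ₀(t) − (δ(0)+ε₀(t))²/(4(α(0)+γ₀(t))) satisfy, on I: δ' + (c + 4aα)δ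 = f + 2αg, ε' = (g − 2aδ)β, and κ' = gδ − aδ². -/
/-- Transformation formulas expressing the general solution of the
Riccati-type system (equations for δ, ε, κ) in terms of a fundamental solution
`(μ₀, α₀, β₀, γ₀, δ₀, ε₀, κ₀)` on an open interval `Ioo p q` and constants
`αc = α(0)`, `βc = β(0)`, `δc = δ(0)`, `εc = ε(0)`, `κc = κ(0)`. -/
theorem riccati_general_solution_dek
    (a b c d f g : ℝ → ℝ)
    (ha : Continuous a) (hb : Continuous b) (hc : Continuous c)
    (hd : Continuous d) (hf : Continuous f) (hg : Continuous g)
    (p q : ℝ)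
    (μ₀ α₀ β₀ γ₀ δ₀ ε₀ κ₀ : ℝ → ℝ)
    (hdiff : ∀ t ∈ Set.Ioo p q, DifferentiableAt ℝ μ₀ t ∧ DifferentiableAt ℝ α₀ t ∧
        DifferentiableAt ℝ β₀ t ∧ DifferentiableAt ℝ γ₀ t ∧ DifferentiableAt ℝ δ₀ t ∧
        DifferentiableAt ℝ ε₀ t ∧ DifferentiableAt ℝ κ₀ t)
    (eqA₀ : ∀ t ∈ Set.Ioo p q, deriv α₀ t + b t + 2 * c t * α₀ t + 4 * a t * (α₀ t) ^ 2 = 0)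
    (eqB₀ : ∀ t ∈ Set.Ioo p q, deriv β₀ t + (c t + 4 * a t * α₀ t) * β₀ t = 0)
    (eqC₀ : ∀ t ∈ Set.Ioo p q, deriv γ₀ t + a t * (β₀ t) ^ 2 = 0)
    (eqD₀ : ∀ t ∈ Set.Ioo p q, deriv δ₀ t + (c t + 4 * a t * α₀ t) * δ₀ t = f t + 2 * α₀ t * g t)
    (eqE₀ : ∀ t ∈ Set.Ioo p q, deriv ε₀ t = (g t - 2 * a t * δ₀ t) * β₀ t)
    (eqF₀ : ∀ t ∈ Set.Ioo p q, deriv κ₀ t = g t * δ₀ t - a t * (δ₀ t) ^ 2)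
    (αc βc δc εc κc : ℝ)
    (hne : ∀ t ∈ Set.Ioo p q, αc + γ₀ t ≠ 0)
    (α β δ ε κ : ℝ → ℝ)
    (hα : ∀ t, α t = α₀ t - (β₀ t) ^ 2 / (4 * (αc + γ₀ t)))
    (hβ : ∀ t, β t = -(βc * β₀ t) / (2 * (αc + γ₀ t)))
    (hδ : ∀ t, δ t = δ₀ t - β₀ t * (δc + ε₀ t) / (2 * (αc + γ₀ t)))
    (hε : ∀ t, ε t = εc - βc * (δc + ε₀ t) / (2 * (αc + γ₀ t)))
    (hκ : ∀ t, κ t = κc + κ₀ t - (δc + ε₀ t) ^ 2 / (4 * (αc + γ₀ t))) :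
    ∀ t ∈ Set.Ioo p q,
      deriv δ t + (c t + 4 * a t * α t) * δ t = f t + 2 * α t * g t ∧
      deriv ε t = (g t - 2 * a t * δ t) * β t ∧
      deriv κ t = g t * δ t - a t * (δ t) ^ 2 := by

  intro t ht
  obtain ⟨hμ, hα₀, hβ₀, hγ₀, hδ₀, hε₀, hκ₀⟩ := hdiff t ht
  have hD : αc + γ₀ t ≠ 0 := hne t ht
  have hD2 : 2 * (αc + γ₀ t) ≠ 0 := by simpa using hD
  have hD4 : 4 * (αc + γ₀ t) ≠ 0 := by simpa using hD
  have dγ : deriv γ₀ t = -(a t * (β₀ t) ^ 2) := by linarith [eqC₀ t ht]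
  have dβ : deriv β₀ t = -((c t + 4 * a t * α₀ t) * β₀ t) := by linarith [eqB₀ t ht]
  have dδ : deriv δ₀ t = f t + 2 * α₀ t * g t - (c t + 4 * a t * α₀ t) * δ₀ t := by
    linarith [eqD₀ t ht]
  have dε : deriv ε₀ t = (g t - 2 * a t * δ₀ t) * β₀ t := eqE₀ t ht
  have dκ : deriv κ₀ t = g t * δ₀ t - a t * (δ₀ t) ^ 2 := eqF₀ t ht
  have hden : HasDerivAt (fun x => 2 * (αc + γ₀ x)) (2 * deriv γ₀ t) t :=
    (hγ₀.hasDerivAt.const_add αc).const_mul 2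
  have hden4 : HasDerivAt (fun x => 4 * (αc + γ₀ x)) (4 * deriv γ₀ t) t :=
    (hγ₀.hasDerivAt.const_add αc).const_mul 4
  have hnum : HasDerivAt (fun x => β₀ x * (δc + ε₀ x))
      (deriv β₀ t * (δc + ε₀ t) + β₀ t * deriv ε₀ t) t :=
    hβ₀.hasDerivAt.mul (hε₀.hasDerivAt.const_add δc)
  -- δ
  have hδ' : HasDerivAt δ
      ((deriv δ₀ t) -
        ((deriv β₀ t * (δc + ε₀ t) + β₀ t * deriv ε₀ t) * (2 * (αc + γ₀ t)) -
          β₀ t * (δc + ε₀ t) * (2 * deriv γ₀ t)) / (2 * (αc + γ₀ t)) ^ 2) t := by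
    have h := hδ₀.hasDerivAt.sub (hnum.div hden hD2)
    exact (h.congr_of_eventuallyEq (by filter_upwards with x using (hδ x)))
  have hdδ : deriv δ t = (deriv δ₀ t) -
        ((deriv β₀ t * (δc + ε₀ t) + β₀ t * deriv ε₀ t) * (2 * (αc + γ₀ t)) -
          β₀ t * (δc + ε₀ t) * (2 * deriv γ₀ t)) / (2 * (αc + γ₀ t)) ^ 2 := hδ'.deriv
  -- ε
  have hε' : HasDerivAt ε
      (-(((0 : ℝ) * (δc + ε₀ t) + βc * deriv ε₀ t) * (2 * (αc + γ₀ t)) -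
          βc * (δc + ε₀ t) * (2 * deriv γ₀ t)) / (2 * (αc + γ₀ t)) ^ 2) t := by
    have hnum2 : HasDerivAt (fun x => βc * (δc + ε₀ x))
        ((0 : ℝ) * (δc + ε₀ t) + βc * deriv ε₀ t) t :=
      (hasDerivAt_const t βc).mul (hε₀.hasDerivAt.const_add δc)
    have h := (hnum2.div hden hD2).const_sub εc
    have h2 := h.congr_of_eventuallyEq (by filter_upwards with x using (hε x))
    rw [neg_div]
    exact h2
  have hdε : deriv ε t = -(((0 : ℝ) * (δc + ε₀ t) + βc * deriv ε₀ t) * (2 * (αc + γ₀ t)) -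
          βc * (δc + ε₀ t) * (2 * deriv γ₀ t)) / (2 * (αc + γ₀ t)) ^ 2 := hε'.deriv
  -- κ
  have hκ' : HasDerivAt κ
      ((deriv κ₀ t) -
        (((2 : ℕ) * (δc + ε₀ t) ^ 1 * deriv ε₀ t) * (4 * (αc + γ₀ t)) -
          (δc + ε₀ t) ^ 2 * (4 * deriv γ₀ t)) / (4 * (αc + γ₀ t)) ^ 2) t := by
    have hnum3 : HasDerivAt (fun x => (δc + ε₀ x) ^ 2)
        ((2 : ℕ) * (δc + ε₀ t) ^ 1 * deriv ε₀ t) t :=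
      (hε₀.hasDerivAt.const_add δc).pow 2
    have h := ((hκ₀.hasDerivAt.const_add κc).sub (hnum3.div hden4 hD4))
    exact h.congr_of_eventuallyEq (by filter_upwards with x using (hκ x))
  have hdκ : deriv κ t = (deriv κ₀ t) -
        (((2 : ℕ) * (δc + ε₀ t) ^ 1 * deriv ε₀ t) * (4 * (αc + γ₀ t)) -
          (δc + ε₀ t) ^ 2 * (4 * deriv γ₀ t)) / (4 * (αc + γ₀ t)) ^ 2 := hκ'.deriv
  refine ⟨?_, ?_, ?_⟩
  · rw [hdδ, hδ t, hα t, dβ, dδ, dε, dγ]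
    field_simp
    ring
  · rw [hdε, hδ t, hβ t, dε, dγ]
    field_simp
    ring
  · rw [hdκ, hδ t, dε, dγ, dκ]
    field_simp
    ring
end

section
/- Let a, b, c, d : ℝ → ℝ be differentiable with a(t) ≠ 0, and set τ(t) = a'/a − 2c + 4d and σ(t) = ab − cd + d² + (d a')/(2a) − d'/2, and λ(t) = exp(−∫₀ᵗ (c(s) − 2d(s)) ds). Let μ₀, μ₁ be twice-differentiable solutions of the characteristic equation μ'' − τ(t)μ' + 4σ(t)μ = 0 with initial data μ₀(0) = 0, μ₀'(0) = 2a(0) ≠ 0 and μ₁(0) ≠ 0, μ₁'(0) = 0, and suppose μ₀(t) ≠ 0 on an interval (0, T). Then on (0, T) the functions α₀(t) = μ₀'/(4aμ₀) − d/(2a), β₀(t) = −λ(t)/μ₀(t), γ₀(t) = μ₁(t)/(2μ₁(0)μ₀(t)) + d(0)/(2a(0)) satisfy α₀' + b + 2cα₀ + 4aα₀² = 0, β₀' + (c + 4aα₀)β₀ = 0, and γ₀' + aβ₀² = 0. -/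
/-- The fundamental solution `(α₀, β₀, γ₀)` of the Riccati-type system,
built from the standard solutions `μ₀, μ₁` of the characteristic equation
`μ'' - τ(t)μ' + 4σ(t)μ = 0`. -/
theorem fundamental_solution_abg
    (a b c d : ℝ → ℝ)
    (ha : Differentiable ℝ a) (hb : Differentiable ℝ b)
    (hc : Differentiable ℝ c) (hd : Differentiable ℝ d)
    (hane : ∀ t, a t ≠ 0)
    (T : ℝ)
    (τ σ lam : ℝ → ℝ)
    (hτ : ∀ t, τ t = deriv a t / a t - 2 * c t + 4 * d t)
    (hσ : ∀ t, σ t = a t * b t - c t * d t + (d t) ^ 2 + d t * deriv a t / (2 * a t)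
        - deriv d t / 2)
    (hlam : ∀ t, lam t = Real.exp (-∫ s in (0:ℝ)..t, (c s - 2 * d s)))
    (μ₀ μ₁ : ℝ → ℝ)
    (hμ₀ : Differentiable ℝ μ₀) (hμ₀' : Differentiable ℝ (deriv μ₀))
    (hμ₁ : Differentiable ℝ μ₁) (hμ₁' : Differentiable ℝ (deriv μ₁))
    (hode₀ : ∀ t, deriv (deriv μ₀) t - τ t * deriv μ₀ t + 4 * σ t * μ₀ t = 0)
    (hode₁ : ∀ t, deriv (deriv μ₁) t - τ t * deriv μ₁ t + 4 * σ t * μ₁ t = 0)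
    (h₀0 : μ₀ 0 = 0) (h₀0' : deriv μ₀ 0 = 2 * a 0)
    (h₁0 : μ₁ 0 ≠ 0) (h₁0' : deriv μ₁ 0 = 0)
    (hμ₀ne : ∀ t ∈ Set.Ioo (0:ℝ) T, μ₀ t ≠ 0)
    (α₀ β₀ γ₀ : ℝ → ℝ)
    (hα₀ : ∀ t, α₀ t = deriv μ₀ t / (4 * a t * μ₀ t) - d t / (2 * a t))
    (hβ₀ : ∀ t, β₀ t = -(lam t / μ₀ t))
    (hγ₀ : ∀ t, γ₀ t = μ₁ t / (2 * μ₁ 0 * μ₀ t) + d 0 / (2 * a 0)) :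
    ∀ t ∈ Set.Ioo (0:ℝ) T,
      deriv α₀ t + b t + 2 * c t * α₀ t + 4 * a t * (α₀ t) ^ 2 = 0 ∧
      deriv β₀ t + (c t + 4 * a t * α₀ t) * β₀ t = 0 ∧
      deriv γ₀ t + a t * (β₀ t) ^ 2 = 0 := by
  -- basic facts about lam
  have hcont : Continuous (fun s => c s - 2 * d s) :=
    hc.continuous.sub (continuous_const.mul hd.continuous)
  have hlamfun : lam = fun u => Real.exp (-∫ s in (0:ℝ)..u, (c s - 2 * d s)) := funext hlam
  have hlamd : ∀ u, HasDerivAt lam (-(c u - 2 * d u) * lam u) u := by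
    intro u
    rw [hlamfun]
    have hI : HasDerivAt (fun v => ∫ s in (0:ℝ)..v, (c s - 2 * d s)) (c u - 2 * d u) u :=
      intervalIntegral.integral_hasDerivAt_right (hcont.intervalIntegrable _ _)
        (hcont.stronglyMeasurableAtFilter _ _) hcont.continuousAt
    simpa [mul_comm] using hI.neg.exp
  have hlamne : ∀ u, lam u ≠ 0 := by
    intro u; rw [hlam]; exact (Real.exp_pos _).ne'
  have hlam0 : lam 0 = 1 := by simp [hlam]
  -- Wronskian
  set W : ℝ → ℝ := fun u => μ₀ u * deriv μ₁ u - deriv μ₀ u * μ₁ u with hW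
  have hWd : ∀ u, HasDerivAt W (τ u * W u) u := by
    intro u
    have h := ((hμ₀ u).hasDerivAt.mul (hμ₁' u).hasDerivAt).sub
      ((hμ₀' u).hasDerivAt.mul (hμ₁ u).hasDerivAt)
    refine h.congr_deriv ?_
    symm
    simp only [hW]
    linear_combination (-(μ₀ u)) * hode₁ u + μ₁ u * hode₀ u
  set G : ℝ → ℝ := fun u => W u / (a u * lam u ^ 2) with hG
  have hGd : ∀ u, HasDerivAt G 0 u := by
    intro u
    have hden : a u * lam u ^ 2 ≠ 0 := mul_ne_zero (hane u) (pow_ne_zero 2 (hlamne u))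
    have hdd : HasDerivAt (fun v => a v * lam v ^ 2)
        (deriv a u * lam u ^ 2 + a u * (2 * lam u ^ 1 * (-(c u - 2 * d u) * lam u))) u :=
      (ha u).hasDerivAt.mul ((hlamd u).pow 2)
    have h := (hWd u).div hdd hden
    refine h.congr_deriv ?_
    rw [div_eq_zero_iff]
    left
    rw [hτ u]
    field_simp
    have h2 : a u * (a u)⁻¹ = 1 := mul_inv_cancel₀ (hane u)
    linear_combination (deriv a u * μ₀ u * deriv μ₁ u * lam u ^ 2
      - deriv a u * deriv μ₀ u * μ₁ u * lam u ^ 2) * h2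
  have hGconst : ∀ u, G u = G 0 := fun u =>
    is_const_of_deriv_eq_zero (fun v => (hGd v).differentiableAt) (fun v => (hGd v).deriv) u 0
  have hWval : ∀ u, W u = -2 * μ₁ 0 * (a u * lam u ^ 2) := by
    intro u
    have h := hGconst u
    have hden : a u * lam u ^ 2 ≠ 0 := mul_ne_zero (hane u) (pow_ne_zero 2 (hlamne u))
    have hG0 : G 0 = -2 * μ₁ 0 := by
      simp only [hG, hW, h₀0, h₀0', h₁0', hlam0]
      field_simp [hane 0]
      ring
    rw [hG0] at h
    simp only [hG] at h
    rw [div_eq_iff hden] at h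
    rw [h]
  -- main proof
  intro t ht
  have hMt : μ₀ t ≠ 0 := hμ₀ne t ht
  have hAt : a t ≠ 0 := hane t
  have hM'' : deriv (deriv μ₀) t = τ t * deriv μ₀ t - 4 * σ t * μ₀ t := by
    linarith [hode₀ t]
  refine ⟨?_, ?_, ?_⟩
  · -- α₀ equation
    have hden : 4 * a t * μ₀ t ≠ 0 := by
      simp [hAt, hMt]
    have h1 : HasDerivAt (fun u => 4 * a u * μ₀ u)
        (4 * deriv a t * μ₀ t + 4 * a t * deriv μ₀ t) t := by
      exact ((ha t).hasDerivAt.const_mul 4).mul (hμ₀ t).hasDerivAt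
    have h2 : HasDerivAt (fun u => deriv μ₀ u / (4 * a u * μ₀ u))
        ((deriv (deriv μ₀) t * (4 * a t * μ₀ t)
          - deriv μ₀ t * (4 * deriv a t * μ₀ t + 4 * a t * deriv μ₀ t))
          / (4 * a t * μ₀ t) ^ 2) t :=
      (hμ₀' t).hasDerivAt.div h1 hden
    have h3 : HasDerivAt (fun u => d u / (2 * a u))
        ((deriv d t * (2 * a t) - d t * (2 * deriv a t)) / (2 * a t) ^ 2) t := by
      have hden2 : 2 * a t ≠ 0 := by simp [hAt]
      exact (hd t).hasDerivAt.div (by simpa using (ha t).hasDerivAt.const_mul 2) hden2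
    have hαd : HasDerivAt α₀
        ((deriv (deriv μ₀) t * (4 * a t * μ₀ t)
          - deriv μ₀ t * (4 * deriv a t * μ₀ t + 4 * a t * deriv μ₀ t))
          / (4 * a t * μ₀ t) ^ 2
        - (deriv d t * (2 * a t) - d t * (2 * deriv a t)) / (2 * a t) ^ 2) t := by
      rw [funext hα₀]
      exact h2.sub h3
    rw [hαd.deriv, hα₀ t, hM'', hτ t, hσ t]
    field_simp
    ring
  · -- β₀ equation
    have hβd : HasDerivAt β₀
        (-((-(c t - 2 * d t) * lam t * μ₀ t - lam t * deriv μ₀ t) / μ₀ t ^ 2)) t := by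
      rw [funext hβ₀]
      exact ((hlamd t).div (hμ₀ t).hasDerivAt hMt).neg
    rw [hβd.deriv, hβ₀ t, hα₀ t]
    field_simp
    ring
  · -- γ₀ equation
    have hden : 2 * μ₁ 0 * μ₀ t ≠ 0 := by
      simp [h₁0, hMt]
    have h1 : HasDerivAt (fun u => 2 * μ₁ 0 * μ₀ u) (2 * μ₁ 0 * deriv μ₀ t) t :=
      (hμ₀ t).hasDerivAt.const_mul _
    have hγd : HasDerivAt γ₀
        ((deriv μ₁ t * (2 * μ₁ 0 * μ₀ t) - μ₁ t * (2 * μ₁ 0 * deriv μ₀ t))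
          / (2 * μ₁ 0 * μ₀ t) ^ 2) t := by
      rw [funext hγ₀]
      exact ((hμ₁ t).hasDerivAt.div h1 hden).add_const _
    rw [hγd.deriv, hβ₀ t]
    have hWt := hWval t
    simp only [hW] at hWt
    rw [show (deriv μ₁ t * (2 * μ₁ 0 * μ₀ t) - μ₁ t * (2 * μ₁ 0 * deriv μ₀ t))
        = 2 * μ₁ 0 * (μ₀ t * deriv μ₁ t - deriv μ₀ t * μ₁ t) from by ring, hWt]
    field_simp
    ring
end

section
/- Under the hypotheses of the previous statement (a, b, c, d, f, g : ℝ → ℝ with a nonvanishing; λ(t) = exp(−∫₀ᵗ(c − 2d) ds); μ₀ a twice-differentiable solution of the characteristic equation μ'' − τμ' + 4σμ = 0 with μ₀(0) = 0, μ₀'(0) = 2a(0) ≠ 0 and μ₀ ≠ 0 on (0,T); α₀ = μ₀'/(4aμ₀) − d/(2a)), the function δ₀(t) = (λ(t)/μ₀(t)) ∫₀ᵗ [ (f(s) − (d(s)/a(s))g(s)) μ₀(s) + (g(s)/(2a(s))) μ₀'(s) ] ds/λ(s) satisfies on (0, T) the equation δ₀' + (c + 4aα₀)δ₀ = f + 2α₀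 g. -/
/-- The fundamental solution component
`δ₀(t) = (λ(t)/μ₀(t)) ∫₀ᵗ [(f - (d/a)g)μ₀ + (g/(2a))μ₀'] ds/λ(s)` satisfies
`δ₀' + (c + 4aα₀)δ₀ = f + 2α₀g` on `(0, T)`. -/
theorem fundamental_solution_delta
    (a b c d f g : ℝ → ℝ)
    (ha : Differentiable ℝ a) (hb : Differentiable ℝ b)
    (hc : Differentiable ℝ c) (hd : Differentiable ℝ d)
    (hf : Continuous f) (hg : Continuous g)
    (hane : ∀ t, a t ≠ 0)
    (T : ℝ)
    (τ σ lam : ℝ → ℝ)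
    (hτ : ∀ t, τ t = deriv a t / a t - 2 * c t + 4 * d t)
    (hσ : ∀ t, σ t = a t * b t - c t * d t + (d t) ^ 2 + d t * deriv a t / (2 * a t)
        - deriv d t / 2)
    (hlam : ∀ t, lam t = Real.exp (-∫ s in (0:ℝ)..t, (c s - 2 * d s)))
    (μ₀ : ℝ → ℝ)
    (hμ₀ : Differentiable ℝ μ₀) (hμ₀' : Differentiable ℝ (deriv μ₀))
    (hode₀ : ∀ t, deriv (deriv μ₀) t - τ t * deriv μ₀ t + 4 * σ t * μ₀ t = 0)
    (h₀0 : μ₀ 0 = 0) (h₀0' : deriv μ₀ 0 = 2 * a 0)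
    (hμ₀ne : ∀ t ∈ Set.Ioo (0:ℝ) T, μ₀ t ≠ 0)
    (α₀ δ₀ : ℝ → ℝ)
    (hα₀ : ∀ t, α₀ t = deriv μ₀ t / (4 * a t * μ₀ t) - d t / (2 * a t))
    (hδ₀ : ∀ t, δ₀ t = lam t / μ₀ t *
        ∫ s in (0:ℝ)..t,
          ((f s - d s / a s * g s) * μ₀ s + g s / (2 * a s) * deriv μ₀ s) / lam s) :
    ∀ t ∈ Set.Ioo (0:ℝ) T,
      deriv δ₀ t + (c t + 4 * a t * α₀ t) * δ₀ t = f t + 2 * α₀ t * g t := by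
  intro t ht
  have hμne : μ₀ t ≠ 0 := hμ₀ne t ht
  have hane2 : ∀ s, (2 : ℝ) * a s ≠ 0 := fun s => mul_ne_zero two_ne_zero (hane s)
  have hlampos : ∀ u, 0 < lam u := by
    intro u; rw [hlam]; exact Real.exp_pos _
  have hlamne : ∀ u, lam u ≠ 0 := fun u => (hlampos u).ne'
  have hcd : Continuous fun s => c s - 2 * d s :=
    hc.continuous.sub (continuous_const.mul hd.continuous)
  have he : lam = fun u => Real.exp (-∫ s in (0:ℝ)..u, (c s - 2 * d s)) := funext hlam
  have hlamd : ∀ u, HasDerivAt lam (-(c u - 2 * d u) * lam u) u := by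
    intro u
    have hG : HasDerivAt (fun v => ∫ s in (0:ℝ)..v, (c s - 2 * d s)) (c u - 2 * d u) u :=
      (hcd.integral_hasStrictDerivAt 0 u).hasDerivAt
    have h := (hG.neg).exp
    rw [he]
    simpa [mul_comm] using h
  have hlamcont : Continuous lam :=
    Differentiable.continuous (fun u => (hlamd u).differentiableAt)
  -- continuity of the integrand
  set F : ℝ → ℝ := fun s =>
    ((f s - d s / a s * g s) * μ₀ s + g s / (2 * a s) * deriv μ₀ s) / lam s with hFdef
  have hFcont : Continuous F := by
    apply Continuous.div _ hlamcont hlamne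
    exact ((hf.sub ((hd.continuous.div ha.continuous hane).mul hg)).mul hμ₀.continuous).add
      ((hg.div (continuous_const.mul ha.continuous) hane2).mul hμ₀'.continuous)
  -- derivative of the integral
  have hI : HasDerivAt (fun u => ∫ s in (0:ℝ)..u, F s) (F t) t :=
    (hFcont.integral_hasStrictDerivAt 0 t).hasDerivAt
  -- derivative of δ₀
  have hquot : HasDerivAt (fun u => lam u / μ₀ u)
      ((-(c t - 2 * d t) * lam t * μ₀ t - lam t * deriv μ₀ t) / (μ₀ t) ^ 2) t :=
    (hlamd t).div ((hμ₀ t).hasDerivAt) hμne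
  have hδeq : δ₀ = fun u => lam u / μ₀ u * ∫ s in (0:ℝ)..u, F s := funext hδ₀
  have hδd : HasDerivAt δ₀
      ((-(c t - 2 * d t) * lam t * μ₀ t - lam t * deriv μ₀ t) / (μ₀ t) ^ 2 *
        (∫ s in (0:ℝ)..t, F s) + lam t / μ₀ t * F t) t := by
    rw [hδeq]; exact hquot.mul hI
  have hderiv : deriv δ₀ t = (-(c t - 2 * d t) * lam t * μ₀ t - lam t * deriv μ₀ t) / (μ₀ t) ^ 2 *
        (∫ s in (0:ℝ)..t, F s) + lam t / μ₀ t * F t := hδd.deriv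
  -- express δ₀ t in terms of the integral
  have hδt : δ₀ t = lam t / μ₀ t * ∫ s in (0:ℝ)..t, F s := hδ₀ t
  rw [hderiv, hδt, hα₀, hFdef]
  have h1 : lam t ≠ 0 := hlamne t
  have h2 : a t ≠ 0 := hane t
  field_simp
  ring
end

section
/- Let a, b, c, d, f, g : ℝ → ℝ be continuous and suppose μ₀, α₀, β₀, γ₀, δ₀, ε₀, κ₀ : I → ℝ are differentiable on an interval I with μ₀ > 0, satisfying α₀' + b + 2cα₀ + 4aα₀² = 0, β₀' + (c+4aα₀)β₀ = 0, γ₀' + aβ₀² = 0, δ₀' + (c+4aα₀)δ₀ = f + 2α₀g, ε₀' = (g − 2aδ₀)β₀, κ₀' = gδ₀ − aδ₀², and μ₀' = (4aα₀ + 2d)μ₀. Then for each fixed y ∈ ℝ, the function G(x, t) = (2πiμ₀(t))^{−1/2} exp[ i(α₀(t)x² + β₀(t)xy + γ₀(t)y² + δ₀(t)x + ε₀(t)y + κ₀(t)) ] satisfies the linear Schrödinger equation iG_t = −a(t)G_xx + b(t)x²G − ic(t)xG_x − id(t)G − f(t)xG + ig(t)G_x on ℝ × I. -/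
/-- The Gaussian
`G(x,t) = (2πiμ₀(t))^{-1/2} exp[i(α₀x² + β₀xy + γ₀y² + δ₀x + ε₀y + κ₀)]`, built from the
fundamental solution of the Riccati-type system, satisfies the linear Schrödinger equation
of generalized harmonic oscillators on `ℝ × Ioo p q` for each fixed `y`. -/
theorem green_function_solves_linear_schrodinger
    (a b c d f g : ℝ → ℝ)
    (ha : Continuous a) (hb : Continuous b) (hc : Continuous c)
    (hd : Continuous d) (hf : Continuous f) (hg : Continuous g)
    (p q : ℝ)
    (μ₀ α₀ β₀ γ₀ δ₀ ε₀ κ₀ : ℝ → ℝ)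
    (hdiff : ∀ t ∈ Set.Ioo p q, DifferentiableAt ℝ μ₀ t ∧ DifferentiableAt ℝ α₀ t ∧
        DifferentiableAt ℝ β₀ t ∧ DifferentiableAt ℝ γ₀ t ∧ DifferentiableAt ℝ δ₀ t ∧
        DifferentiableAt ℝ ε₀ t ∧ DifferentiableAt ℝ κ₀ t)
    (hμ₀pos : ∀ t ∈ Set.Ioo p q, 0 < μ₀ t)
    (eqA₀ : ∀ t ∈ Set.Ioo p q, deriv α₀ t + b t + 2 * c t * α₀ t + 4 * a t * (α₀ t) ^ 2 = 0)
    (eqB₀ : ∀ t ∈ Set.Ioo p q, deriv β₀ t + (c t + 4 * a t * α₀ t) * β₀ t = 0)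
    (eqC₀ : ∀ t ∈ Set.Ioo p q, deriv γ₀ t + a t * (β₀ t) ^ 2 = 0)
    (eqD₀ : ∀ t ∈ Set.Ioo p q, deriv δ₀ t + (c t + 4 * a t * α₀ t) * δ₀ t = f t + 2 * α₀ t * g t)
    (eqE₀ : ∀ t ∈ Set.Ioo p q, deriv ε₀ t = (g t - 2 * a t * δ₀ t) * β₀ t)
    (eqF₀ : ∀ t ∈ Set.Ioo p q, deriv κ₀ t = g t * δ₀ t - a t * (δ₀ t) ^ 2)
    (eqM₀ : ∀ t ∈ Set.Ioo p q, deriv μ₀ t = (4 * a t * α₀ t + 2 * d t) * μ₀ t)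
    (y : ℝ) (G : ℝ → ℝ → ℂ)
    (hG : ∀ x t : ℝ, G x t =
        (2 * (Real.pi : ℂ) * Complex.I * (μ₀ t : ℂ)) ^ (-(1/2) : ℂ) *
          Complex.exp (Complex.I *
            ((α₀ t : ℂ) * (x : ℂ) ^ 2 + (β₀ t : ℂ) * (x : ℂ) * (y : ℂ)
              + (γ₀ t : ℂ) * (y : ℂ) ^ 2 + (δ₀ t : ℂ) * (x : ℂ)
              + (ε₀ t : ℂ) * (y : ℂ) + (κ₀ t : ℂ)))) :
    ∀ x : ℝ, ∀ t ∈ Set.Ioo p q,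
      Complex.I * deriv (fun s => G x s) t
        = -(a t : ℂ) * deriv (fun u => deriv (fun v => G v t) u) x
          + (b t : ℂ) * (x : ℂ) ^ 2 * G x t
          - Complex.I * (c t : ℂ) * (x : ℂ) * deriv (fun u => G u t) x
          - Complex.I * (d t : ℂ) * G x t
          - (f t : ℂ) * (x : ℂ) * G x t
          + Complex.I * (g t : ℂ) * deriv (fun u => G u t) x := by
  intro x t ht
  obtain ⟨hμd, hαd, hβd, hγd, hδd, hεd, hκd⟩ := hdiff t ht
  have hμpos := hμ₀pos t ht
  set z : ℂ := 2 * (Real.pi : ℂ) * Complex.I * (μ₀ t : ℂ) with hz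
  have hzne : z ≠ 0 := by
    rw [hz]
    refine mul_ne_zero (mul_ne_zero (mul_ne_zero two_ne_zero ?_) Complex.I_ne_zero) ?_
    · exact_mod_cast Real.pi_ne_zero
    · exact_mod_cast hμpos.ne'
  have hzslit : z ∈ Complex.slitPlane := by
    rw [Complex.mem_slitPlane_iff]
    right
    have h2 : z = ((2 * Real.pi * μ₀ t : ℝ) : ℂ) * Complex.I := by rw [hz]; push_cast; ring
    rw [h2]
    simp only [Complex.mul_im, Complex.I_im, Complex.I_re, Complex.ofReal_re,
      Complex.ofReal_im, mul_one, mul_zero, add_zero, ne_eq]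
    positivity
  -- abbreviations
  set A : ℂ := z ^ (-(1/2) : ℂ) with hA
  set W : ℂ := z ^ ((-(1/2) : ℂ) - 1) with hW
  have hred : W * z = A := by
    have h1 : W * z = z ^ ((-(1/2) : ℂ) - 1) * z ^ (1 : ℂ) := by rw [hW, Complex.cpow_one]
    rw [h1, ← Complex.cpow_add _ _ hzne, hA]
    norm_num
  -- spatial derivative, at every point u
  have hx : ∀ u : ℝ, HasDerivAt (fun v : ℝ => G v t)
      (G u t * (Complex.I * (2 * (α₀ t : ℂ) * (u : ℂ) + (β₀ t : ℂ) * (y : ℂ) + (δ₀ t : ℂ)))) u := by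
    intro u
    have hfun : (fun v : ℝ => G v t) = fun v : ℝ =>
        A * Complex.exp (Complex.I *
          ((α₀ t : ℂ) * (v : ℂ) ^ 2 + (β₀ t : ℂ) * (v : ℂ) * (y : ℂ)
            + (γ₀ t : ℂ) * (y : ℂ) ^ 2 + (δ₀ t : ℂ) * (v : ℂ)
            + (ε₀ t : ℂ) * (y : ℂ) + (κ₀ t : ℂ))) := funext fun v => hG v t
    rw [hfun, hG u t]
    have h1 : HasDerivAt (fun w : ℂ =>
        (α₀ t : ℂ) * w ^ 2 + (β₀ t : ℂ) * w * (y : ℂ)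
          + (γ₀ t : ℂ) * (y : ℂ) ^ 2 + (δ₀ t : ℂ) * w
          + (ε₀ t : ℂ) * (y : ℂ) + (κ₀ t : ℂ))
        (2 * (α₀ t : ℂ) * (u : ℂ) + (β₀ t : ℂ) * (y : ℂ) + (δ₀ t : ℂ)) (u : ℂ) := by
      have h2 := (((((hasDerivAt_pow 2 ((u : ℝ) : ℂ)).const_mul ((α₀ t : ℝ) : ℂ)).add
        (((hasDerivAt_id ((u : ℝ) : ℂ)).const_mul ((β₀ t : ℝ) : ℂ)).mul_const ((y : ℝ) : ℂ))).add_const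
          (((γ₀ t : ℝ) : ℂ) * ((y : ℝ) : ℂ) ^ 2)).add
        ((hasDerivAt_id ((u : ℝ) : ℂ)).const_mul ((δ₀ t : ℝ) : ℂ))).add_const
          (((ε₀ t : ℝ) : ℂ) * ((y : ℝ) : ℂ)) |>.add_const ((κ₀ t : ℝ) : ℂ)
      convert h2 using 1 <;> first
        | rfl
        | (funext w; simp only [id_eq]; push_cast; ring)
        | (funext w; push_cast; ring)
        | (simp only [id_eq]; push_cast; ring)
        | (push_cast; ring)
    have h3 := ((h1.const_mul Complex.I).cexp.const_mul A).comp_ofReal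
    convert h3 using 1 <;> first
      | (funext w; simp only [id_eq]; push_cast; ring)
      | (funext w; push_cast; ring)
      | (simp only [id_eq]; push_cast; ring)
      | (push_cast; ring)
  -- second spatial derivative
  have hfun2 : (fun u : ℝ => deriv (fun v : ℝ => G v t) u) = fun u : ℝ =>
      G u t * (Complex.I * (2 * (α₀ t : ℂ) * (u : ℂ) + (β₀ t : ℂ) * (y : ℂ) + (δ₀ t : ℂ))) :=
    funext fun u => (hx u).deriv
  have hx2 : HasDerivAt (fun u : ℝ =>
      G u t * (Complex.I * (2 * (α₀ t : ℂ) * (u : ℂ) + (β₀ t : ℂ) * (y : ℂ) + (δ₀ t : ℂ))))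
      ((G x t * (Complex.I * (2 * (α₀ t : ℂ) * (x : ℂ) + (β₀ t : ℂ) * (y : ℂ) + (δ₀ t : ℂ))))
          * (Complex.I * (2 * (α₀ t : ℂ) * (x : ℂ) + (β₀ t : ℂ) * (y : ℂ) + (δ₀ t : ℂ)))
        + G x t * (Complex.I * (2 * (α₀ t : ℂ)))) x := by
    refine (hx x).mul ?_
    have h4 : HasDerivAt (fun w : ℂ =>
        Complex.I * (2 * (α₀ t : ℂ) * w + (β₀ t : ℂ) * (y : ℂ) + (δ₀ t : ℂ)))
        (Complex.I * (2 * (α₀ t : ℂ))) (x : ℂ) := by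
      have h5 := (((hasDerivAt_id ((x : ℝ) : ℂ)).const_mul (2 * ((α₀ t : ℝ) : ℂ))).add_const
        (((β₀ t : ℝ) : ℂ) * ((y : ℝ) : ℂ) + ((δ₀ t : ℝ) : ℂ))).const_mul Complex.I
      convert h5 using 1 <;> first
        | rfl
        | (funext w; simp only [id_eq]; push_cast; ring)
        | (funext w; push_cast; ring)
        | (simp only [id_eq]; push_cast; ring)
        | (push_cast; ring)
    exact h4.comp_ofReal
  -- time derivative
  have hApow : HasDerivAt (fun s : ℝ => (2 * (Real.pi : ℂ) * Complex.I * (μ₀ s : ℂ)) ^ (-(1/2) : ℂ))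
      (((deriv μ₀ t : ℝ) : ℂ) * ((-(1/2) : ℂ) * W * (2 * (Real.pi : ℂ) * Complex.I))) t := by
    have hF : HasDerivAt (fun w : ℂ => (2 * (Real.pi : ℂ) * Complex.I * w) ^ (-(1/2) : ℂ))
        ((-(1/2) : ℂ) * z ^ ((-(1/2) : ℂ) - 1) * (2 * (Real.pi : ℂ) * Complex.I)) ((μ₀ t : ℝ) : ℂ) := by
      have hin : HasDerivAt (fun w : ℂ => 2 * (Real.pi : ℂ) * Complex.I * w)
          (2 * (Real.pi : ℂ) * Complex.I) ((μ₀ t : ℝ) : ℂ) := by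
        simpa using (hasDerivAt_id ((μ₀ t : ℝ) : ℂ)).const_mul (2 * (Real.pi : ℂ) * Complex.I)
      exact hin.cpow_const hzslit
    have h3 := hF.comp_ofReal.scomp t hμd.hasDerivAt
    rw [hW]
    simp [Function.comp, Complex.real_smul] at h3 ⊢
    exact h3
  have hΦ : HasDerivAt (fun s : ℝ => Complex.I *
      ((α₀ s : ℂ) * (x : ℂ) ^ 2 + (β₀ s : ℂ) * (x : ℂ) * (y : ℂ)
        + (γ₀ s : ℂ) * (y : ℂ) ^ 2 + (δ₀ s : ℂ) * (x : ℂ)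
        + (ε₀ s : ℂ) * (y : ℂ) + (κ₀ s : ℂ)))
      (Complex.I *
      (((deriv α₀ t : ℝ) : ℂ) * (x : ℂ) ^ 2 + ((deriv β₀ t : ℝ) : ℂ) * (x : ℂ) * (y : ℂ)
        + ((deriv γ₀ t : ℝ) : ℂ) * (y : ℂ) ^ 2 + ((deriv δ₀ t : ℝ) : ℂ) * (x : ℂ)
        + ((deriv ε₀ t : ℝ) : ℂ) * (y : ℂ) + ((deriv κ₀ t : ℝ) : ℂ))) t := by
    have h6 := (((((hαd.hasDerivAt.ofReal_comp.mul_const (((x : ℝ) : ℂ) ^ 2))).add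
      ((hβd.hasDerivAt.ofReal_comp.mul_const ((x : ℝ) : ℂ)).mul_const ((y : ℝ) : ℂ))).add
      (hγd.hasDerivAt.ofReal_comp.mul_const (((y : ℝ) : ℂ) ^ 2))).add
      (hδd.hasDerivAt.ofReal_comp.mul_const ((x : ℝ) : ℂ))).add
      (hεd.hasDerivAt.ofReal_comp.mul_const ((y : ℝ) : ℂ)) |>.add
      hκd.hasDerivAt.ofReal_comp |>.const_mul Complex.I
    convert h6 using 1 <;> first
      | rfl
      | (funext w; simp only [id_eq]; push_cast; ring)
      | (funext w; push_cast; ring)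
      | (simp only [id_eq]; push_cast; ring)
      | (push_cast; ring)
  have hGt : HasDerivAt (fun s : ℝ => G x s)
      (((deriv μ₀ t : ℝ) : ℂ) * ((-(1/2) : ℂ) * W * (2 * (Real.pi : ℂ) * Complex.I))
          * Complex.exp (Complex.I *
            ((α₀ t : ℂ) * (x : ℂ) ^ 2 + (β₀ t : ℂ) * (x : ℂ) * (y : ℂ)
              + (γ₀ t : ℂ) * (y : ℂ) ^ 2 + (δ₀ t : ℂ) * (x : ℂ)
              + (ε₀ t : ℂ) * (y : ℂ) + (κ₀ t : ℂ)))
        + A * (Complex.exp (Complex.I *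
            ((α₀ t : ℂ) * (x : ℂ) ^ 2 + (β₀ t : ℂ) * (x : ℂ) * (y : ℂ)
              + (γ₀ t : ℂ) * (y : ℂ) ^ 2 + (δ₀ t : ℂ) * (x : ℂ)
              + (ε₀ t : ℂ) * (y : ℂ) + (κ₀ t : ℂ)))
          * (Complex.I *
      (((deriv α₀ t : ℝ) : ℂ) * (x : ℂ) ^ 2 + ((deriv β₀ t : ℝ) : ℂ) * (x : ℂ) * (y : ℂ)
        + ((deriv γ₀ t : ℝ) : ℂ) * (y : ℂ) ^ 2 + ((deriv δ₀ t : ℝ) : ℂ) * (x : ℂ)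
        + ((deriv ε₀ t : ℝ) : ℂ) * (y : ℂ) + ((deriv κ₀ t : ℝ) : ℂ))))) t := by
    have hfun : (fun s : ℝ => G x s) = fun s : ℝ =>
        (2 * (Real.pi : ℂ) * Complex.I * (μ₀ s : ℂ)) ^ (-(1/2) : ℂ) *
          Complex.exp (Complex.I *
            ((α₀ s : ℂ) * (x : ℂ) ^ 2 + (β₀ s : ℂ) * (x : ℂ) * (y : ℂ)
              + (γ₀ s : ℂ) * (y : ℂ) ^ 2 + (δ₀ s : ℂ) * (x : ℂ)
              + (ε₀ s : ℂ) * (y : ℂ) + (κ₀ s : ℂ))) := funext fun s => hG x s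
    rw [hfun]
    exact hApow.mul hΦ.cexp
  -- real ODE facts
  have hα' : deriv α₀ t = -(b t + 2 * c t * α₀ t + 4 * a t * (α₀ t) ^ 2) := by
    have := eqA₀ t ht; linarith
  have hβ' : deriv β₀ t = -((c t + 4 * a t * α₀ t) * β₀ t) := by
    have := eqB₀ t ht; linarith
  have hγ' : deriv γ₀ t = -(a t * (β₀ t) ^ 2) := by
    have := eqC₀ t ht; linarith
  have hδ' : deriv δ₀ t = f t + 2 * α₀ t * g t - (c t + 4 * a t * α₀ t) * δ₀ t := by
    have := eqD₀ t ht; linarith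
  have hε' := eqE₀ t ht
  have hκ' := eqF₀ t ht
  have hμ' := eqM₀ t ht
  -- assemble
  rw [hGt.deriv, hfun2, hx2.deriv, (hx x).deriv, hG x t, hα', hβ', hγ', hδ', hε', hκ', hμ']
  simp only [hW, hA, hz] at hred ⊢
  push_cast
  set E : ℂ := Complex.exp (Complex.I *
      ((α₀ t : ℂ) * (x : ℂ) ^ 2 + (β₀ t : ℂ) * (x : ℂ) * (y : ℂ)
        + (γ₀ t : ℂ) * (y : ℂ) ^ 2 + (δ₀ t : ℂ) * (x : ℂ)
        + (ε₀ t : ℂ) * (y : ℂ) + (κ₀ t : ℂ))) with hE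
  linear_combination
    (Complex.I * (-(1/2 : ℂ)) * (4 * (a t : ℂ) * (α₀ t : ℂ) + 2 * (d t : ℂ)) * E) * hred
    + (((2 * (Real.pi : ℂ) * Complex.I * ((μ₀ t : ℝ) : ℂ)) ^ (-(1/2) : ℂ)) * E *
        ((-((b t : ℂ) + 2 * (c t : ℂ) * (α₀ t : ℂ) + 4 * (a t : ℂ) * (α₀ t : ℂ) ^ 2)) * (x : ℂ) ^ 2
          + (-(((c t : ℂ) + 4 * (a t : ℂ) * (α₀ t : ℂ)) * (β₀ t : ℂ))) * (x : ℂ) * (y : ℂ)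
          + (-((a t : ℂ) * (β₀ t : ℂ) ^ 2)) * (y : ℂ) ^ 2
          + ((f t : ℂ) + 2 * (α₀ t : ℂ) * (g t : ℂ)
              - ((c t : ℂ) + 4 * (a t : ℂ) * (α₀ t : ℂ)) * (δ₀ t : ℂ)) * (x : ℂ)
          + (((g t : ℂ) - 2 * (a t : ℂ) * (δ₀ t : ℂ)) * (β₀ t : ℂ)) * (y : ℂ)
          + ((g t : ℂ) * (δ₀ t : ℂ) - (a t : ℂ) * (δ₀ t : ℂ) ^ 2)
          + (a t : ℂ) * (2 * (α₀ t : ℂ) * (x : ℂ) + (β₀ t : ℂ) * (y : ℂ) + (δ₀ t : ℂ)) ^ 2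
          + (c t : ℂ) * (x : ℂ) * (2 * (α₀ t : ℂ) * (x : ℂ) + (β₀ t : ℂ) * (y : ℂ) + (δ₀ t : ℂ))
          - (g t : ℂ) * (2 * (α₀ t : ℂ) * (x : ℂ) + (β₀ t : ℂ) * (y : ℂ) + (δ₀ t : ℂ)))) *
      Complex.I_sq
end

section
/- Let a, b, c, d, f, g : ℝ → ℝ be continuous and h₀, g₀, y, φ real constants. Suppose α, β, γ, δ, ε, κ : ℝ → ℝ are differentiable and satisfy the Riccati-type system α' + b + 2cα + 4aα² = 0, β' + (c+4aα)β = 0, γ' + aβ² = 0, δ' + (c+4aα)δ = f + 2αg, ε' = (g−2aδ)β, κ' = gδ − aδ²; suppose μ > 0 is differentiable with μ' = (4aα + 2d)μ; set h(t) = h₀a(t)β²(t)μ(t); and let F : ℝ → ℝ be twice differentiable with F'' = g₀F + h₀F³. Then ψ(x,t) = (e^{iφ}/√(μ(t))) exp( i(α(t)x² + β(t)xy + γ(t)(y² − g₀) + δ(t)x + ε(t)y + κ(t)) ) F(β(t)x + 2γ(t)y + ε(t)) satisfies iψ_t = −a(t)ψ_xx + b(t)x²ψ − ic(t)xψ_x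 − id(t)ψ − f(t)xψ + ig(t)ψ_x + h(t)|ψ|²ψ. -/
set_option maxHeartbeats 3200000 in
/-- The soliton-like solution
`ψ(x,t) = (e^{iφ}/√μ) exp(i(αx² + βxy + γ(y² - g₀) + δx + εy + κ)) F(βx + 2γy + ε)`
of the nonautonomous nonlinear Schrödinger equation with quadratic Hamiltonian,
built from a solution of the Riccati-type system and a profile `F'' = g₀F + h₀F³`. -/
theorem soliton_like_solution_nonautonomous_NLS
    (a b c d f g : ℝ → ℝ) (h₀ g₀ y φ : ℝ)
    (ha : Continuous a) (hb : Continuous b) (hc : Continuous c)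
    (hd : Continuous d) (hf : Continuous f) (hg : Continuous g)
    (α β γ δ ε κ : ℝ → ℝ)
    (hα : Differentiable ℝ α) (hβ : Differentiable ℝ β) (hγ : Differentiable ℝ γ)
    (hδ : Differentiable ℝ δ) (hε : Differentiable ℝ ε) (hκ : Differentiable ℝ κ)
    (eqA : ∀ t, deriv α t + b t + 2 * c t * α t + 4 * a t * (α t) ^ 2 = 0)
    (eqB : ∀ t, deriv β t + (c t + 4 * a t * α t) * β t = 0)
    (eqC : ∀ t, deriv γ t + a t * (β t) ^ 2 = 0)
    (eqD : ∀ t, deriv δ t + (c t + 4 * a t * α t) * δ t = f t + 2 * α t * g t)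
    (eqE : ∀ t, deriv ε t = (g t - 2 * a t * δ t) * β t)
    (eqF : ∀ t, deriv κ t = g t * δ t - a t * (δ t) ^ 2)
    (μ : ℝ → ℝ) (hμpos : ∀ t, 0 < μ t) (hμ : Differentiable ℝ μ)
    (eqM : ∀ t, deriv μ t = (4 * a t * α t + 2 * d t) * μ t)
    (h : ℝ → ℝ) (hh : ∀ t, h t = h₀ * a t * (β t) ^ 2 * μ t)
    (F : ℝ → ℝ)
    (hF : Differentiable ℝ F) (hF' : Differentiable ℝ (deriv F))
    (hode : ∀ z, deriv (deriv F) z = g₀ * F z + h₀ * (F z) ^ 3)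
    (ψ : ℝ → ℝ → ℂ)
    (hψ : ∀ x t : ℝ, ψ x t =
        Complex.exp (Complex.I * (φ : ℂ)) / (Real.sqrt (μ t) : ℂ) *
          Complex.exp (Complex.I *
            ((α t : ℂ) * (x : ℂ) ^ 2 + (β t : ℂ) * (x : ℂ) * (y : ℂ)
              + (γ t : ℂ) * ((y : ℂ) ^ 2 - (g₀ : ℂ)) + (δ t : ℂ) * (x : ℂ)
              + (ε t : ℂ) * (y : ℂ) + (κ t : ℂ))) *
          (F (β t * x + 2 * γ t * y + ε t) : ℂ)) :
    ∀ x t : ℝ, Complex.I * deriv (fun s => ψ x s) t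
        = -(a t : ℂ) * deriv (fun u => deriv (fun v => ψ v t) u) x
          + (b t : ℂ) * (x : ℂ) ^ 2 * ψ x t
          - Complex.I * (c t : ℂ) * (x : ℂ) * deriv (fun u => ψ u t) x
          - Complex.I * (d t : ℂ) * ψ x t
          - (f t : ℂ) * (x : ℂ) * ψ x t
          + Complex.I * (g t : ℂ) * deriv (fun u => ψ u t) x
          + (h t : ℂ) * (‖ψ x t‖ : ℂ) ^ 2 * ψ x t := by

  intro x t
  have hμt := hμpos t
  have hst : Real.sqrt (μ t) ≠ 0 := ne_of_gt (Real.sqrt_pos.mpr hμt)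
  set pr : ℝ → ℝ → ℝ := fun u s => α s * u ^ 2 + β s * (u * y) + γ s * (y ^ 2 - g₀) + δ s * u + ε s * y + κ s with hpr
  set zr : ℝ → ℝ → ℝ := fun u s => β s * u + 2 * γ s * y + ε s with hzr
  set k : ℂ := Complex.exp (Complex.I * (φ : ℂ)) with hk
  have hΦ : ∀ u s : ℝ, ψ u s = k * (((Real.sqrt (μ s))⁻¹ : ℝ) : ℂ) *
      Complex.exp (Complex.I * ((pr u s : ℝ) : ℂ)) * ((F (zr u s) : ℝ) : ℂ) := by
    intro u s
    rw [hψ u s]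
    rw [show Complex.I * ((α s : ℂ) * (u : ℂ) ^ 2 + (β s : ℂ) * (u : ℂ) * (y : ℂ)
        + (γ s : ℂ) * ((y : ℂ) ^ 2 - (g₀ : ℂ)) + (δ s : ℂ) * (u : ℂ)
        + (ε s : ℂ) * (y : ℂ) + (κ s : ℂ)) = Complex.I * ((pr u s : ℝ) : ℂ) from by
      simp only [hpr]; push_cast; ring]
    rw [show (F (β s * u + 2 * γ s * y + ε s) : ℂ) = ((F (zr u s) : ℝ) : ℂ) from by
      simp only [hzr]]
    rw [div_eq_mul_inv, ← Complex.ofReal_inv]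
  -- |ψ|²
  have habsr : ‖ψ x t‖ ^ 2 = (F (zr x t)) ^ 2 * (μ t)⁻¹ := by
    rw [hΦ x t, norm_mul, norm_mul, norm_mul, hk, Complex.norm_exp, Complex.norm_exp,
      Complex.norm_real, Complex.norm_real, Real.norm_eq_abs, Real.norm_eq_abs]
    rw [show (Complex.I * (φ : ℂ)).re = 0 from by simp,
      show (Complex.I * ((pr x t : ℝ) : ℂ)).re = 0 from by simp, Real.exp_zero]
    rw [abs_inv, abs_of_nonneg (Real.sqrt_nonneg (μ t))]
    rw [mul_pow, mul_pow, mul_pow, one_pow, sq_abs, inv_pow, Real.sq_sqrt hμt.le]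
    ring
  have hcombR : h t * ‖ψ x t‖ ^ 2 = h₀ * a t * (β t) ^ 2 * (F (zr x t)) ^ 2 := by
    rw [habsr, hh t]; field_simp
  rw [show (h t : ℂ) * ((‖ψ x t‖ : ℝ) : ℂ) ^ 2
      = ((h₀ * a t * (β t) ^ 2 * (F (zr x t)) ^ 2 : ℝ) : ℂ) from by
    rw [← Complex.ofReal_pow, ← Complex.ofReal_mul, hcombR]]
  -- time derivative pieces
  have hprt : HasDerivAt (fun s => pr x s)
      (deriv α t * x ^ 2 + deriv β t * (x * y) + deriv γ t * (y ^ 2 - g₀)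
        + deriv δ t * x + deriv ε t * y + deriv κ t) t := by
    simp only [hpr]
    exact (((((((hα t).hasDerivAt.mul_const (x ^ 2)).add
      ((hβ t).hasDerivAt.mul_const (x * y))).add
      ((hγ t).hasDerivAt.mul_const (y ^ 2 - g₀))).add
      ((hδ t).hasDerivAt.mul_const x)).add
      ((hε t).hasDerivAt.mul_const y)).add (hκ t).hasDerivAt)
  have hzrt : HasDerivAt (fun s => zr x s)
      (deriv β t * x + 2 * deriv γ t * y + deriv ε t) t := by
    simp only [hzr]
    have H := (((hβ t).hasDerivAt.mul_const x).add
      (((hγ t).hasDerivAt.const_mul 2).mul_const y)).add (hε t).hasDerivAt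
    exact H.congr_deriv (by ring)
  have hinvC := (((hμ t).hasDerivAt.sqrt (ne_of_gt hμt)).inv hst).ofReal_comp
  have hexpt := ((hprt.ofReal_comp).const_mul Complex.I).cexp
  have hFt := (((hF (zr x t)).hasDerivAt.comp t hzrt)).ofReal_comp
  have hdtc : HasDerivAt (fun s => k * (((Real.sqrt (μ s))⁻¹ : ℝ) : ℂ) *
      Complex.exp (Complex.I * ((pr x s : ℝ) : ℂ)) * ((F (zr x s) : ℝ) : ℂ)) _ t :=
    ((hinvC.const_mul k).mul hexpt).mul hFt
  -- space derivative pieces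
  have hprx : ∀ u : ℝ, HasDerivAt (fun v => pr v t) (2 * α t * u + β t * y + δ t) u := by
    intro u
    simp only [hpr]
    have H := ((((((hasDerivAt_pow 2 u).const_mul (α t)).add
      (((hasDerivAt_id u).mul_const y).const_mul (β t))).add
      (hasDerivAt_const u (γ t * (y ^ 2 - g₀)))).add
      ((hasDerivAt_id u).const_mul (δ t))).add
      (hasDerivAt_const u (ε t * y))).add (hasDerivAt_const u (κ t))
    exact H.congr_deriv (by norm_num; ring)
  have hzrx : ∀ u : ℝ, HasDerivAt (fun v => zr v t) (β t) u := by
    intro u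
    simp only [hzr]
    have H := (((hasDerivAt_id u).const_mul (β t)).add
      (hasDerivAt_const u (2 * γ t * y))).add (hasDerivAt_const u (ε t))
    exact H.congr_deriv (by ring)
  have hΨx : ∀ u : ℝ, HasDerivAt
      (fun v => k * (((Real.sqrt (μ t))⁻¹ : ℝ) : ℂ) *
        Complex.exp (Complex.I * ((pr v t : ℝ) : ℂ)) * ((F (zr v t) : ℝ) : ℂ))
      (k * (((Real.sqrt (μ t))⁻¹ : ℝ) : ℂ) *
          (Complex.exp (Complex.I * ((pr u t : ℝ) : ℂ)) *
            (Complex.I * ((2 * α t * u + β t * y + δ t : ℝ) : ℂ))) *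
          ((F (zr u t) : ℝ) : ℂ)
        + k * (((Real.sqrt (μ t))⁻¹ : ℝ) : ℂ) *
          Complex.exp (Complex.I * ((pr u t : ℝ) : ℂ)) *
          ((deriv F (zr u t) * β t : ℝ) : ℂ)) u := by
    intro u
    have hE := (((hprx u).ofReal_comp).const_mul Complex.I).cexp
    have hFf := ((hF (zr u t)).hasDerivAt.comp u (hzrx u)).ofReal_comp
    exact ((hE.const_mul (k * (((Real.sqrt (μ t))⁻¹ : ℝ) : ℂ))).mul hFf).congr_deriv (by simp only [Function.comp]; try push_cast; try ring)
  have hd1 : (deriv fun v : ℝ => k * (((Real.sqrt (μ t))⁻¹ : ℝ) : ℂ) *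
      Complex.exp (Complex.I * ((pr v t : ℝ) : ℂ)) * ((F (zr v t) : ℝ) : ℂ)) =
      fun u => k * (((Real.sqrt (μ t))⁻¹ : ℝ) : ℂ) *
          (Complex.exp (Complex.I * ((pr u t : ℝ) : ℂ)) *
            (Complex.I * ((2 * α t * u + β t * y + δ t : ℝ) : ℂ))) *
          ((F (zr u t) : ℝ) : ℂ)
        + k * (((Real.sqrt (μ t))⁻¹ : ℝ) : ℂ) *
          Complex.exp (Complex.I * ((pr u t : ℝ) : ℂ)) *
          ((deriv F (zr u t) * β t : ℝ) : ℂ) :=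
    funext fun u => (hΨx u).deriv
  have hq : HasDerivAt (fun u : ℝ => 2 * α t * u + β t * y + δ t) (2 * α t) x := by
    have H := (((hasDerivAt_id x).const_mul (2 * α t)).add
      (hasDerivAt_const x (β t * y))).add (hasDerivAt_const x (δ t))
    exact H.congr_deriv (by ring)
  have hE2 := (((hprx x).ofReal_comp).const_mul Complex.I).cexp
  have hIq := (hq.ofReal_comp).const_mul Complex.I
  have hFf2 := ((hF (zr x t)).hasDerivAt.comp x (hzrx x)).ofReal_comp
  have hdFf2 := (((hF' (zr x t)).hasDerivAt.comp x (hzrx x)).mul_const (β t)).ofReal_comp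
  have hdd : HasDerivAt (fun u : ℝ =>
      k * (((Real.sqrt (μ t))⁻¹ : ℝ) : ℂ) *
          (Complex.exp (Complex.I * ((pr u t : ℝ) : ℂ)) *
            (Complex.I * ((2 * α t * u + β t * y + δ t : ℝ) : ℂ))) *
          ((F (zr u t) : ℝ) : ℂ)
        + k * (((Real.sqrt (μ t))⁻¹ : ℝ) : ℂ) *
          Complex.exp (Complex.I * ((pr u t : ℝ) : ℂ)) *
          ((deriv F (zr u t) * β t : ℝ) : ℂ)) _ x :=
    (((hE2.mul hIq).const_mul (k * (((Real.sqrt (μ t))⁻¹ : ℝ) : ℂ))).mul hFf2).add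
      ((hE2.const_mul (k * (((Real.sqrt (μ t))⁻¹ : ℝ) : ℂ))).mul hdFf2)
  -- rewrite the goal
  simp only [hΦ]
  rw [hdtc.deriv]
  simp only [hd1]
  rw [hdd.deriv]
  simp only [Function.comp, Pi.mul_apply, Pi.inv_apply]
  -- substitute the ODEs
  have dα : deriv α t = -(b t) - 2 * c t * α t - 4 * a t * (α t) ^ 2 := by linarith [eqA t]
  have dβ : deriv β t = -((c t + 4 * a t * α t) * β t) := by linarith [eqB t]
  have dγ : deriv γ t = -(a t * (β t) ^ 2) := by linarith [eqC t]
  have dδ : deriv δ t = f t + 2 * α t * g t - (c t + 4 * a t * α t) * δ t := by linarith [eqD t]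
  rw [hode (zr x t), dα, dβ, dγ, dδ, eqE t, eqF t, eqM t]
  rw [show -((4 * a t * α t + 2 * d t) * μ t / (2 * Real.sqrt (μ t))) / Real.sqrt (μ t) ^ 2
      = -((2 * a t * α t + d t) * (Real.sqrt (μ t))⁻¹) from by
    have h2 : μ t = Real.sqrt (μ t) ^ 2 := (Real.sq_sqrt hμt.le).symm
    set r := Real.sqrt (μ t) with hr
    rw [h2]
    field_simp
    ring]
  push_cast
  ring_nf
  simp only [Complex.I_sq, show Complex.I ^ 3 = -Complex.I from by
    rw [pow_succ, Complex.I_sq]; ring, show Complex.I ^ 4 = 1 from by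
    rw [show (4:ℕ) = 2*2 from rfl, pow_mul, Complex.I_sq]; ring]
  ring
end

section
/- The two-soliton function Ψ₂(X, T) = 4e^{iT} · (cosh(3X) + 3e^{8iT} cosh(X)) / (cosh(4X) + 4cosh(2X) + 3cos(8T)) satisfies the focusing nonlinear Schrödinger equation iΨ_T + Ψ_XX + 2|Ψ|²Ψ = 0 for all (X, T) ∈ ℝ × ℝ (the denominator cosh 4X + 4cosh 2X + 3cos 8T is strictly positive). -/
/-- The two-soliton solution of the focusing nonlinear Schrödinger equation. -/
noncomputable def Psi₂ (X T : ℝ) : ℂ :=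
  4 * Complex.exp (Complex.I * T) *
      (Complex.cosh (3 * X) + 3 * Complex.exp (8 * Complex.I * T) * Complex.cosh X) /
    ((Real.cosh (4 * X) + 4 * Real.cosh (2 * X) + 3 * Real.cos (8 * T) : ℝ) : ℂ)

noncomputable section TwoSolitonAux

namespace TwoSoliton

def NN (X T : ℝ) : ℂ :=
  4 * Complex.exp (Complex.I * T) * (Real.cosh (3 * X) : ℂ)
    + 12 * Complex.exp (9 * (Complex.I * T)) * (Real.cosh X : ℂ)

def NB (X T : ℝ) : ℂ :=
  4 * Complex.exp (-(Complex.I * T)) * (Real.cosh (3 * X) : ℂ)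
    + 12 * Complex.exp (-(9 * (Complex.I * T))) * (Real.cosh X : ℂ)

def NNx (X T : ℝ) : ℂ :=
  12 * Complex.exp (Complex.I * T) * (Real.sinh (3 * X) : ℂ)
    + 12 * Complex.exp (9 * (Complex.I * T)) * (Real.sinh X : ℂ)

def NNxx (X T : ℝ) : ℂ :=
  36 * Complex.exp (Complex.I * T) * (Real.cosh (3 * X) : ℂ)
    + 12 * Complex.exp (9 * (Complex.I * T)) * (Real.cosh X : ℂ)

def NNt (X T : ℝ) : ℂ :=
  4 * Complex.I * Complex.exp (Complex.I * T) * (Real.cosh (3 * X) : ℂ)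
    + 108 * Complex.I * Complex.exp (9 * (Complex.I * T)) * (Real.cosh X : ℂ)

def DD (X T : ℝ) : ℝ := Real.cosh (4 * X) + 4 * Real.cosh (2 * X) + 3 * Real.cos (8 * T)
def DDx (X T : ℝ) : ℝ := 4 * Real.sinh (4 * X) + 8 * Real.sinh (2 * X)
def DDxx (X T : ℝ) : ℝ := 16 * Real.cosh (4 * X) + 16 * Real.cosh (2 * X)
def DDt (X T : ℝ) : ℝ := -24 * Real.sin (8 * T)

lemma DD_pos (X T : ℝ) : 0 < DD X T := by
  unfold DD
  nlinarith [Real.one_le_cosh (4*X), Real.one_le_cosh (2*X), Real.neg_one_le_cos (8*T)]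

lemma DD_ne (X T : ℝ) : ((DD X T : ℝ) : ℂ) ≠ 0 := by
  exact_mod_cast (DD_pos X T).ne'

lemma hcosh (c x : ℝ) : HasDerivAt (fun v : ℝ => Real.cosh (c*v)) (c * Real.sinh (c*x)) x := by
  simpa [mul_comm] using ((hasDerivAt_id x).const_mul c).cosh

lemma hsinh (c x : ℝ) : HasDerivAt (fun v : ℝ => Real.sinh (c*v)) (c * Real.cosh (c*x)) x := by
  simpa [mul_comm] using ((hasDerivAt_id x).const_mul c).sinh

lemma hcos (c x : ℝ) : HasDerivAt (fun v : ℝ => Real.cos (c*v)) (-(c * Real.sin (c*x))) x := by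
  simpa [mul_comm] using ((hasDerivAt_id x).const_mul c).cos

lemma hcoshc (c x : ℝ) :
    HasDerivAt (fun v : ℝ => ((Real.cosh (c*v) : ℝ) : ℂ)) ((c * Real.sinh (c*x) : ℝ) : ℂ) x :=
  (hcosh c x).ofReal_comp

lemma hsinhc (c x : ℝ) :
    HasDerivAt (fun v : ℝ => ((Real.sinh (c*v) : ℝ) : ℂ)) ((c * Real.cosh (c*x) : ℝ) : ℂ) x :=
  (hsinh c x).ofReal_comp

lemma hcexp (k : ℂ) (x : ℝ) :
    HasDerivAt (fun s : ℝ => Complex.exp (k*(Complex.I*s))) (k*Complex.I*Complex.exp (k*(Complex.I*x))) x := by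
  have h0 : HasDerivAt (fun s : ℝ => ((s:ℝ):ℂ)) ((1:ℝ):ℂ) x := (hasDerivAt_id x).ofReal_comp
  simpa [mul_comm, mul_assoc, mul_left_comm] using ((h0.const_mul Complex.I).const_mul k).cexp

lemma hcexp1 (x : ℝ) :
    HasDerivAt (fun s : ℝ => Complex.exp (Complex.I*s)) (Complex.I*Complex.exp (Complex.I*x)) x := by
  have h0 : HasDerivAt (fun s : ℝ => ((s:ℝ):ℂ)) ((1:ℝ):ℂ) x := (hasDerivAt_id x).ofReal_comp
  have h := (h0.const_mul Complex.I).cexp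
  convert h using 1
  push_cast
  ring

lemma hNN_X (X T : ℝ) : HasDerivAt (fun v : ℝ => NN v T) (NNx X T) X := by
  have h1 := (hcoshc 3 X).const_mul (4 * Complex.exp (Complex.I * T))
  have h2 := ((Real.hasDerivAt_cosh X).ofReal_comp).const_mul (12 * Complex.exp (9 * (Complex.I * T)))
  have h := h1.add h2
  refine h.congr_deriv ?_
  unfold NNx; push_cast; ring

lemma hNNx_X (X T : ℝ) : HasDerivAt (fun v : ℝ => NNx v T) (NNxx X T) X := by
  have h1 := (hsinhc 3 X).const_mul (12 * Complex.exp (Complex.I * T))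
  have h2 := ((Real.hasDerivAt_sinh X).ofReal_comp).const_mul (12 * Complex.exp (9 * (Complex.I * T)))
  have h := h1.add h2
  refine h.congr_deriv ?_
  unfold NNxx; push_cast; ring

lemma hNN_T (X T : ℝ) : HasDerivAt (fun s : ℝ => NN X s) (NNt X T) T := by
  have h1 := ((hcexp1 T).const_mul (4:ℂ)).mul_const ((Real.cosh (3*X) : ℝ) : ℂ)
  have h2 := ((hcexp 9 T).const_mul (12:ℂ)).mul_const ((Real.cosh X : ℝ) : ℂ)
  have h := h1.add h2
  refine h.congr_deriv ?_
  unfold NNt; push_cast; ring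

lemma hDD_X (X T : ℝ) : HasDerivAt (fun v : ℝ => ((DD v T : ℝ):ℂ)) ((DDx X T : ℝ):ℂ) X := by
  have h : HasDerivAt (fun v : ℝ => DD v T) (DDx X T) X := by
    have h0 := ((hcosh 4 X).add ((hcosh 2 X).const_mul 4)).add_const (3 * Real.cos (8*T))
    refine h0.congr_deriv ?_
    unfold DDx; ring
  exact h.ofReal_comp

lemma hDDx_X (X T : ℝ) : HasDerivAt (fun v : ℝ => ((DDx v T : ℝ):ℂ)) ((DDxx X T : ℝ):ℂ) X := by
  have h : HasDerivAt (fun v : ℝ => DDx v T) (DDxx X T) X := by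
    have h0 := ((hsinh 4 X).const_mul 4).add ((hsinh 2 X).const_mul 8)
    refine h0.congr_deriv ?_
    unfold DDxx; ring
  exact h.ofReal_comp

lemma hDD_T (X T : ℝ) : HasDerivAt (fun s : ℝ => ((DD X s : ℝ):ℂ)) ((DDt X T : ℝ):ℂ) T := by
  have h : HasDerivAt (fun s : ℝ => DD X s) (DDt X T) T := by
    have h0 := ((hcos 8 T).const_mul 3).const_add (Real.cosh (4*X) + 4 * Real.cosh (2*X))
    refine h0.congr_deriv ?_
    unfold DDt; ring
  exact h.ofReal_comp

lemma Psi2_eq (X T : ℝ) : Psi₂ X T = NN X T / ((DD X T : ℝ) : ℂ) := by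
  unfold Psi₂ NN DD
  congr 1
  have h3 : ((3:ℂ) * (X:ℂ)) = ((3*X : ℝ) : ℂ) := by push_cast; ring
  rw [h3, ← Complex.ofReal_cosh, ← Complex.ofReal_cosh,
    show (9:ℂ)*(Complex.I*(T:ℂ)) = Complex.I*(T:ℂ) + 8*Complex.I*(T:ℂ) by ring, Complex.exp_add]
  ring

lemma deriv_T (X T : ℝ) : deriv (fun s => Psi₂ X s) T
    = (NNt X T * ((DD X T:ℝ):ℂ) - NN X T * ((DDt X T:ℝ):ℂ)) / ((DD X T:ℝ):ℂ)^2 := by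
  have hfun : (fun s => Psi₂ X s) = fun s => NN X s / ((DD X s : ℝ):ℂ) :=
    funext fun s => Psi2_eq X s
  rw [hfun]
  exact ((hNN_T X T).div (hDD_T X T) (DD_ne X T)).deriv

lemma deriv_X (X T : ℝ) : deriv (fun v => Psi₂ v T) X
    = (NNx X T * ((DD X T:ℝ):ℂ) - NN X T * ((DDx X T:ℝ):ℂ)) / ((DD X T:ℝ):ℂ)^2 := by
  have hfun : (fun v => Psi₂ v T) = fun v => NN v T / ((DD v T : ℝ):ℂ) :=
    funext fun v => Psi2_eq v T
  rw [hfun]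
  exact ((hNN_X X T).div (hDD_X X T) (DD_ne X T)).deriv

lemma deriv_XX (X T : ℝ) : deriv (fun u => deriv (fun v => Psi₂ v T) u) X
    = ((NNxx X T * ((DD X T:ℝ):ℂ) - NN X T * ((DDxx X T:ℝ):ℂ)) * (((DD X T:ℝ):ℂ)^2)
        - (NNx X T * ((DD X T:ℝ):ℂ) - NN X T * ((DDx X T:ℝ):ℂ)) * (2 * ((DD X T:ℝ):ℂ) * ((DDx X T:ℝ):ℂ)))
      / (((DD X T:ℝ):ℂ)^2)^2 := by
  have hfun : (fun u => deriv (fun v => Psi₂ v T) u)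
      = fun u => (NNx u T * ((DD u T:ℝ):ℂ) - NN u T * ((DDx u T:ℝ):ℂ)) / ((DD u T:ℝ):ℂ)^2 :=
    funext fun u => deriv_X u T
  rw [hfun]
  have hG : HasDerivAt (fun u : ℝ => NNx u T * ((DD u T:ℝ):ℂ) - NN u T * ((DDx u T:ℝ):ℂ))
      (NNxx X T * ((DD X T:ℝ):ℂ) - NN X T * ((DDxx X T:ℝ):ℂ)) X := by
    have h := ((hNNx_X X T).mul (hDD_X X T)).sub ((hNN_X X T).mul (hDDx_X X T))
    refine h.congr_deriv ?_
    ring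
  have hD2 : HasDerivAt (fun u : ℝ => ((DD u T:ℝ):ℂ)^2) (2 * ((DD X T:ℝ):ℂ) * ((DDx X T:ℝ):ℂ)) X := by
    have h := (hDD_X X T).mul (hDD_X X T)
    have hfe : (fun u : ℝ => ((DD u T:ℝ):ℂ)^2) = fun u : ℝ => ((DD u T:ℝ):ℂ) * ((DD u T:ℝ):ℂ) := by
      funext u; ring
    rw [hfe]
    refine h.congr_deriv ?_; ring
  exact (hG.div hD2 (pow_ne_zero 2 (DD_ne X T))).deriv

lemma conj_exp_IT (T : ℝ) :
    (starRingEnd ℂ) (Complex.exp (Complex.I * T)) = Complex.exp (-(Complex.I * T)) := by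
  rw [← Complex.exp_conj]
  congr 1
  simp [map_mul, Complex.conj_I, Complex.conj_ofReal]

lemma conj_exp_9IT (T : ℝ) :
    (starRingEnd ℂ) (Complex.exp (9 * (Complex.I * T))) = Complex.exp (-(9 * (Complex.I * T))) := by
  rw [← Complex.exp_conj]
  congr 1
  simp [map_mul, map_ofNat, Complex.conj_I, Complex.conj_ofReal]

lemma conj_Psi2 (X T : ℝ) : (starRingEnd ℂ) (Psi₂ X T) = NB X T / ((DD X T : ℝ) : ℂ) := by
  rw [Psi2_eq]
  unfold NN NB
  rw [map_div₀, map_add, map_mul, map_mul, map_mul, map_mul]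
  rw [conj_exp_IT, conj_exp_9IT, Complex.conj_ofReal, Complex.conj_ofReal, Complex.conj_ofReal]
  norm_num [map_ofNat]

lemma habs (X T : ℝ) :
    ((‖Psi₂ X T‖ : ℝ) : ℂ)^2 = NN X T * NB X T / ((DD X T : ℝ) : ℂ)^2 := by
  have h1 : ((‖Psi₂ X T‖ : ℝ) : ℂ)^2 = Psi₂ X T * (starRingEnd ℂ) (Psi₂ X T) := by
    rw [Complex.mul_conj]
    norm_cast
    exact Complex.sq_norm _
  rw [h1, conj_Psi2, Psi2_eq]
  ring


section AB
open Complex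

lemma coshn (n : ℕ) (x : ℝ) :
    ((Real.cosh ((n:ℝ)*x) : ℝ):ℂ) = ((Complex.exp x)^n + ((Complex.exp x)^n)⁻¹)/2 := by
  rw [Real.cosh_eq]
  push_cast
  rw [Complex.exp_neg, Complex.exp_nat_mul]

lemma sinhn (n : ℕ) (x : ℝ) :
    ((Real.sinh ((n:ℝ)*x) : ℝ):ℂ) = ((Complex.exp x)^n - ((Complex.exp x)^n)⁻¹)/2 := by
  rw [Real.sinh_eq]
  push_cast
  rw [Complex.exp_neg, Complex.exp_nat_mul]

lemma cosh3 (x : ℝ) : ((Real.cosh (3*x) : ℝ):ℂ) = ((Complex.exp x)^3 + ((Complex.exp x)^3)⁻¹)/2 := by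
  simpa using coshn 3 x
lemma cosh4 (x : ℝ) : ((Real.cosh (4*x) : ℝ):ℂ) = ((Complex.exp x)^4 + ((Complex.exp x)^4)⁻¹)/2 := by
  simpa using coshn 4 x
lemma cosh2 (x : ℝ) : ((Real.cosh (2*x) : ℝ):ℂ) = ((Complex.exp x)^2 + ((Complex.exp x)^2)⁻¹)/2 := by
  simpa using coshn 2 x
lemma cosh1 (x : ℝ) : ((Real.cosh x : ℝ):ℂ) = (Complex.exp x + (Complex.exp x)⁻¹)/2 := by
  simpa using coshn 1 x
lemma sinh3 (x : ℝ) : ((Real.sinh (3*x) : ℝ):ℂ) = ((Complex.exp x)^3 - ((Complex.exp x)^3)⁻¹)/2 := by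
  simpa using sinhn 3 x
lemma sinh4 (x : ℝ) : ((Real.sinh (4*x) : ℝ):ℂ) = ((Complex.exp x)^4 - ((Complex.exp x)^4)⁻¹)/2 := by
  simpa using sinhn 4 x
lemma sinh2 (x : ℝ) : ((Real.sinh (2*x) : ℝ):ℂ) = ((Complex.exp x)^2 - ((Complex.exp x)^2)⁻¹)/2 := by
  simpa using sinhn 2 x
lemma sinh1 (x : ℝ) : ((Real.sinh x : ℝ):ℂ) = (Complex.exp x - (Complex.exp x)⁻¹)/2 := by
  simpa using sinhn 1 x

lemma exp9 (T : ℝ) : Complex.exp (9*(Complex.I*T)) = (Complex.exp (Complex.I*T))^9 := by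
  rw [show (9:ℂ)*(Complex.I*(T:ℂ)) = ((9:ℕ):ℂ)*(Complex.I*(T:ℂ)) by norm_num, Complex.exp_nat_mul]

lemma expneg (T : ℝ) : Complex.exp (-(Complex.I*T)) = (Complex.exp (Complex.I*T))⁻¹ :=
  Complex.exp_neg _

lemma expneg9 (T : ℝ) : Complex.exp (-(9*(Complex.I*T))) = ((Complex.exp (Complex.I*T))^9)⁻¹ := by
  rw [Complex.exp_neg, exp9]

lemma cos8 (T : ℝ) : ((Real.cos (8*T) : ℝ):ℂ)
    = ((Complex.exp (Complex.I*T))^8 + ((Complex.exp (Complex.I*T))^8)⁻¹)/2 := by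
  rw [Complex.ofReal_cos]
  have h := Complex.two_cos (((8*T:ℝ)):ℂ)
  have h2 : Complex.cos (((8*T:ℝ)):ℂ)
      = (Complex.exp ((((8*T:ℝ)):ℂ)*Complex.I) + Complex.exp (-(((8*T:ℝ)):ℂ)*Complex.I))/2 := by
    linear_combination h/2
  rw [h2, show ((((8*T:ℝ)):ℂ))*Complex.I = ((8:ℕ):ℂ)*(Complex.I*(T:ℂ)) by push_cast; ring,
    show (-(((8*T:ℝ)):ℂ))*Complex.I = -(((8:ℕ):ℂ)*(Complex.I*(T:ℂ))) by push_cast; ring,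
    Complex.exp_neg, Complex.exp_nat_mul]

lemma sin8 (T : ℝ) : ((Real.sin (8*T) : ℝ):ℂ)
    = (((Complex.exp (Complex.I*T))^8)⁻¹ - (Complex.exp (Complex.I*T))^8) * Complex.I / 2 := by
  rw [Complex.ofReal_sin]
  have h := Complex.two_sin (((8*T:ℝ)):ℂ)
  have h2 : Complex.sin (((8*T:ℝ)):ℂ)
      = (Complex.exp (-(((8*T:ℝ)):ℂ)*Complex.I) - Complex.exp ((((8*T:ℝ)):ℂ)*Complex.I)) * Complex.I / 2 := by
    linear_combination h / 2
  rw [h2, show ((((8*T:ℝ)):ℂ))*Complex.I = ((8:ℕ):ℂ)*(Complex.I*(T:ℂ)) by push_cast; ring,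
    show (-(((8*T:ℝ)):ℂ))*Complex.I = -(((8:ℕ):ℂ)*(Complex.I*(T:ℂ))) by push_cast; ring,
    Complex.exp_neg, Complex.exp_nat_mul]

end AB

section ABvals
open Complex

variable (X T : ℝ)

local notation "a" => Complex.exp (Complex.I*(T:ℂ))
local notation "b" => Complex.exp ((X:ℝ):ℂ)

lemma NN_ab : NN X T = 2*a*((b)^3 + ((b)^3)⁻¹) + 6*(a)^9*((b) + (b)⁻¹) := by
  unfold NN
  rw [cosh3, cosh1, exp9]
  ring

lemma NB_ab : NB X T = 2*(a)⁻¹*((b)^3 + ((b)^3)⁻¹) + 6*((a)^9)⁻¹*((b) + (b)⁻¹) := by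
  unfold NB
  rw [cosh3, cosh1, expneg, expneg9]
  ring

lemma NNx_ab : NNx X T = 6*a*((b)^3 - ((b)^3)⁻¹) + 6*(a)^9*((b) - (b)⁻¹) := by
  unfold NNx
  rw [sinh3, sinh1, exp9]
  ring

lemma NNxx_ab : NNxx X T = 18*a*((b)^3 + ((b)^3)⁻¹) + 6*(a)^9*((b) + (b)⁻¹) := by
  unfold NNxx
  rw [cosh3, cosh1, exp9]
  ring

lemma NNt_ab : NNt X T
    = Complex.I * (2*a*((b)^3 + ((b)^3)⁻¹) + 54*(a)^9*((b) + (b)⁻¹)) := by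
  unfold NNt
  rw [cosh3, cosh1, exp9]
  ring

lemma DD_ab : ((DD X T : ℝ):ℂ)
    = ((b)^4 + ((b)^4)⁻¹)/2 + 4*(((b)^2 + ((b)^2)⁻¹)/2) + 3*(((a)^8 + ((a)^8)⁻¹)/2) := by
  unfold DD
  push_cast [-Complex.ofReal_cosh, -Complex.ofReal_cos]
  rw [cosh4, cosh2, cos8]

lemma DDx_ab : ((DDx X T : ℝ):ℂ) = 2*((b)^4 - ((b)^4)⁻¹) + 4*((b)^2 - ((b)^2)⁻¹) := by
  unfold DDx
  push_cast [-Complex.ofReal_sinh]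
  rw [sinh4, sinh2]
  ring

lemma DDxx_ab : ((DDxx X T : ℝ):ℂ) = 8*((b)^4 + ((b)^4)⁻¹) + 8*((b)^2 + ((b)^2)⁻¹) := by
  unfold DDxx
  push_cast [-Complex.ofReal_cosh]
  rw [cosh4, cosh2]
  ring

lemma DDt_ab : ((DDt X T : ℝ):ℂ) = Complex.I * (-12*(((a)^8)⁻¹ - (a)^8)) := by
  unfold DDt
  push_cast [-Complex.ofReal_sin]
  rw [sin8]
  ring

end ABvals

set_option maxHeartbeats 1000000 in
lemma key_poly (a A b Bb n nb nx nxx m k d dx dxx : ℂ)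
    (ha1 : a * A = 1) (hb1 : b * Bb = 1)
    (hn : n = 2*a*(b^3 + Bb^3) + 6*a^9*(b + Bb))
    (hnb : nb = 2*A*(b^3 + Bb^3) + 6*A^9*(b + Bb))
    (hnx : nx = 6*a*(b^3 - Bb^3) + 6*a^9*(b - Bb))
    (hnxx : nxx = 18*a*(b^3 + Bb^3) + 6*a^9*(b + Bb))
    (hm : m = 2*a*(b^3 + Bb^3) + 54*a^9*(b + Bb))
    (hk : k = -12*(A^8 - a^8))
    (hd : d = (b^4 + Bb^4)/2 + 4*((b^2 + Bb^2)/2) + 3*((a^8 + A^8)/2))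
    (hdx : dx = 2*(b^4 - Bb^4) + 4*(b^2 - Bb^2))
    (hdxx : dxx = 8*(b^4 + Bb^4) + 8*(b^2 + Bb^2)) :
    (-(m*d - n*k) + (nxx*d - n*dxx))*d - 2*dx*(nx*d - n*dx) + 2*n^2*nb = 0 := by
  subst hn hnb hnx hnxx hm hk hd hdx hdxx
  linear_combination ((-144:ℂ)*a*Bb + (-24:ℂ)*a*Bb^3 + (72:ℂ)*a*Bb^5 + (16:ℂ)*a*Bb^9 + (-144:ℂ)*a*b + (-24:ℂ)*a*b^3 + (72:ℂ)*a*b^5 + (16:ℂ)*a*b^9 + (-120:ℂ)*a*A^8*Bb + (48:ℂ)*a*A^8*Bb^5 + (48:ℂ)*a*A^8*Bb^7 + (-120:ℂ)*a*A^8*b + (48:ℂ)*a*A^8*b^5 + (48:ℂ)*a*A^8*b^7 + (-144:ℂ)*a^2*A*Bb + (-72:ℂ)*a^2*A*Bb^3 + (72:ℂ)*a^2*A*Bb^5 + (-144:ℂ)*a^2*A*b + (-72:ℂ)*a^2*A*b^3 + (72:ℂ)*a^2*A*b^5 + (-216:ℂ)*a^2*A^9*Bb + (-216:ℂ)*a^2*A^9*b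 + (-144:ℂ)*a^3*A^2*Bb + (-72:ℂ)*a^3*A^2*Bb^3 + (72:ℂ)*a^3*A^2*Bb^5 + (-144:ℂ)*a^3*A^2*b + (-72:ℂ)*a^3*A^2*b^3 + (72:ℂ)*a^3*A^2*b^5 + (-216:ℂ)*a^3*A^10*Bb + (-216:ℂ)*a^3*A^10*b + (-144:ℂ)*a^4*A^3*Bb + (-72:ℂ)*a^4*A^3*Bb^3 + (72:ℂ)*a^4*A^3*Bb^5 + (-144:ℂ)*a^4*A^3*b + (-72:ℂ)*a^4*A^3*b^3 + (72:ℂ)*a^4*A^3*b^5 + (-216:ℂ)*a^4*A^11*Bb + (-216:ℂ)*a^4*A^11*b + (-144:ℂ)*a^5*A^4*Bb + (-72:ℂ)*a^5*A^4*Bb^3 + (72:ℂ)*a^5*A^4*Bb^5 + (-144:ℂ)*a^5*A^4*b + (-72:ℂ)*a^5*A^4*b^3 + (72:ℂ)*a^5*A^4*b^5 + (-216:ℂ)*a^5*A^12*Bb + (-216:ℂ)*a^5*A^12*b + (-144:ℂ)*a^6*A^5*Bb + (-72:ℂ)*a^6*A^5*Bb^3 + (72:ℂ)*a^6*A^5*Bb^5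 + (-144:ℂ)*a^6*A^5*b + (-72:ℂ)*a^6*A^5*b^3 + (72:ℂ)*a^6*A^5*b^5 + (-216:ℂ)*a^6*A^13*Bb + (-216:ℂ)*a^6*A^13*b + (-144:ℂ)*a^7*A^6*Bb + (-72:ℂ)*a^7*A^6*Bb^3 + (72:ℂ)*a^7*A^6*Bb^5 + (-144:ℂ)*a^7*A^6*b + (-72:ℂ)*a^7*A^6*b^3 + (72:ℂ)*a^7*A^6*b^5 + (-216:ℂ)*a^7*A^14*Bb + (-216:ℂ)*a^7*A^14*b + (-144:ℂ)*a^8*A^7*Bb + (-72:ℂ)*a^8*A^7*Bb^3 + (72:ℂ)*a^8*A^7*Bb^5 + (-144:ℂ)*a^8*A^7*b + (-72:ℂ)*a^8*A^7*b^3 + (72:ℂ)*a^8*A^7*b^5 + (-216:ℂ)*a^8*A^15*Bb + (-216:ℂ)*a^8*A^15*b + (1272:ℂ)*a^9*Bb + (432:ℂ)*a^9*Bb^3 + (96:ℂ)*a^9*Bb^5 + (96:ℂ)*a^9*Bb^7 + (1272:ℂ)*a^9*b + (432:ℂ)*a^9*b^3 + (96:ℂ)*a^9*b^5 + (96:ℂ)*a^9*b^7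 + (288:ℂ)*a^9*A^8*Bb + (576:ℂ)*a^9*A^8*Bb^3 + (288:ℂ)*a^9*A^8*Bb^5 + (288:ℂ)*a^9*A^8*b + (576:ℂ)*a^9*A^8*b^3 + (288:ℂ)*a^9*A^8*b^5 + (1080:ℂ)*a^10*A*Bb + (432:ℂ)*a^10*A*Bb^3 + (1080:ℂ)*a^10*A*b + (432:ℂ)*a^10*A*b^3 + (1080:ℂ)*a^11*A^2*Bb + (432:ℂ)*a^11*A^2*Bb^3 + (1080:ℂ)*a^11*A^2*b + (432:ℂ)*a^11*A^2*b^3 + (1080:ℂ)*a^12*A^3*Bb + (432:ℂ)*a^12*A^3*Bb^3 + (1080:ℂ)*a^12*A^3*b + (432:ℂ)*a^12*A^3*b^3 + (1080:ℂ)*a^13*A^4*Bb + (432:ℂ)*a^13*A^4*Bb^3 + (1080:ℂ)*a^13*A^4*b + (432:ℂ)*a^13*A^4*b^3 + (1080:ℂ)*a^14*A^5*Bb + (432:ℂ)*a^14*A^5*Bb^3 + (1080:ℂ)*a^14*A^5*b + (432:ℂ)*a^14*A^5*b^3 + (1080:ℂ)*a^15*A^6*Bb + (432:ℂ)*a^15*A^6*Bb^3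 + (1080:ℂ)*a^15*A^6*b + (432:ℂ)*a^15*A^6*b^3 + (1080:ℂ)*a^16*A^7*Bb + (432:ℂ)*a^16*A^7*Bb^3 + (1080:ℂ)*a^16*A^7*b + (432:ℂ)*a^16*A^7*b^3 + (144:ℂ)*a^17*Bb + (288:ℂ)*a^17*Bb^3 + (144:ℂ)*a^17*Bb^5 + (144:ℂ)*a^17*b + (288:ℂ)*a^17*b^3 + (144:ℂ)*a^17*b^5 + (1296:ℂ)*a^17*A^8*Bb + (432:ℂ)*a^17*A^8*Bb^3 + (1296:ℂ)*a^17*A^8*b + (432:ℂ)*a^17*A^8*b^3) * ha1 + ((144:ℂ)*a*Bb + (24:ℂ)*a*Bb^3 + (-72:ℂ)*a*Bb^5 + (144:ℂ)*a*b + (144:ℂ)*a*b*Bb^2 + (24:ℂ)*a*b*Bb^4 + (-72:ℂ)*a*b*Bb^6 + (144:ℂ)*a*b^2*Bb + (144:ℂ)*a*b^2*Bb^3 + (88:ℂ)*a*b^2*Bb^5 + (24:ℂ)*a*b^2*Bb^7 + (24:ℂ)*a*b^3 + (144:ℂ)*a*b^3*Bb^2 + (-48:ℂ)*a*b^3*Bb^4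 + (-40:ℂ)*a*b^3*Bb^6 + (24:ℂ)*a*b^4*Bb + (-48:ℂ)*a*b^4*Bb^3 + (-72:ℂ)*a*b^5 + (88:ℂ)*a*b^5*Bb^2 + (-72:ℂ)*a*b^6*Bb + (-40:ℂ)*a*b^6*Bb^3 + (24:ℂ)*a*b^7*Bb^2 + (120:ℂ)*a*A^8*Bb + (120:ℂ)*a*A^8*b + (120:ℂ)*a*A^8*b*Bb^2 + (120:ℂ)*a*A^8*b^2*Bb + (24:ℂ)*a*A^8*b^2*Bb^3 + (24:ℂ)*a*A^8*b^3*Bb^2 + (48:ℂ)*a^2*A*Bb^3 + (48:ℂ)*a^2*A*b*Bb^4 + (48:ℂ)*a^2*A*b^2*Bb^5 + (48:ℂ)*a^2*A*b^3 + (48:ℂ)*a^2*A*b^4*Bb + (48:ℂ)*a^2*A*b^5*Bb^2 + (96:ℂ)*a^2*A^9*Bb + (48:ℂ)*a^2*A^9*Bb^5 + (96:ℂ)*a^2*A^9*b + (96:ℂ)*a^2*A^9*b*Bb^2 + (96:ℂ)*a^2*A^9*b^2*Bb + (96:ℂ)*a^2*A^9*b^2*Bb^3 + (96:ℂ)*a^2*A^9*b^3*Bb^2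 + (48:ℂ)*a^2*A^9*b^5 + (-1272:ℂ)*a^9*Bb + (-432:ℂ)*a^9*Bb^3 + (48:ℂ)*a^9*Bb^5 + (24:ℂ)*a^9*Bb^7 + (-1272:ℂ)*a^9*b + (-1272:ℂ)*a^9*b*Bb^2 + (-432:ℂ)*a^9*b*Bb^4 + (-1272:ℂ)*a^9*b^2*Bb + (-504:ℂ)*a^9*b^2*Bb^3 + (-432:ℂ)*a^9*b^3 + (-504:ℂ)*a^9*b^3*Bb^2 + (-168:ℂ)*a^9*b^3*Bb^4 + (-432:ℂ)*a^9*b^4*Bb + (-168:ℂ)*a^9*b^4*Bb^3 + (48:ℂ)*a^9*b^5 + (24:ℂ)*a^9*b^7 + (-432:ℂ)*a^9*A^8*Bb + (-144:ℂ)*a^9*A^8*Bb^3 + (-432:ℂ)*a^9*A^8*b + (-144:ℂ)*a^9*A^8*b^3 + (192:ℂ)*a^10*A*Bb + (96:ℂ)*a^10*A*Bb^5 + (192:ℂ)*a^10*A*b + (192:ℂ)*a^10*A*b*Bb^2 + (192:ℂ)*a^10*A*b^2*Bb + (192:ℂ)*a^10*A*b^2*Bb^3 + (192:ℂ)*a^10*A*b^3*Bb^2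 + (96:ℂ)*a^10*A*b^5 + (288:ℂ)*a^10*A^9*Bb + (576:ℂ)*a^10*A^9*Bb^3 + (288:ℂ)*a^10*A^9*b + (288:ℂ)*a^10*A^9*b*Bb^2 + (288:ℂ)*a^10*A^9*b^2*Bb + (576:ℂ)*a^10*A^9*b^3 + (-144:ℂ)*a^17*Bb + (-72:ℂ)*a^17*Bb^3 + (-144:ℂ)*a^17*b + (-72:ℂ)*a^17*b^3 + (144:ℂ)*a^18*A*Bb + (288:ℂ)*a^18*A*Bb^3 + (144:ℂ)*a^18*A*b + (144:ℂ)*a^18*A*b*Bb^2 + (144:ℂ)*a^18*A*b^2*Bb + (288:ℂ)*a^18*A*b^3 + (1296:ℂ)*a^18*A^9*Bb + (1296:ℂ)*a^18*A^9*b) * hb1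

set_option maxHeartbeats 1000000 in
lemma key_alg (i a b d n nb nx nxx nt dt m k dx dxx : ℂ)
    (hi : i * i = -1) (ha : a ≠ 0) (hb : b ≠ 0) (hd : d ≠ 0)
    (hnt : nt = i * m) (hdt : dt = i * k)
    (hn : n = 2*a*(b^3 + (b^3)⁻¹) + 6*a^9*(b + b⁻¹))
    (hnb : nb = 2*a⁻¹*(b^3 + (b^3)⁻¹) + 6*(a^9)⁻¹*(b + b⁻¹))
    (hnx : nx = 6*a*(b^3 - (b^3)⁻¹) + 6*a^9*(b - b⁻¹))
    (hnxx : nxx = 18*a*(b^3 + (b^3)⁻¹) + 6*a^9*(b + b⁻¹))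
    (hm : m = 2*a*(b^3 + (b^3)⁻¹) + 54*a^9*(b + b⁻¹))
    (hk : k = -12*((a^8)⁻¹ - a^8))
    (hd' : d = (b^4 + (b^4)⁻¹)/2 + 4*((b^2 + (b^2)⁻¹)/2) + 3*((a^8 + (a^8)⁻¹)/2))
    (hdx : dx = 2*(b^4 - (b^4)⁻¹) + 4*(b^2 - (b^2)⁻¹))
    (hdxx : dxx = 8*(b^4 + (b^4)⁻¹) + 8*(b^2 + (b^2)⁻¹)) :
    i * ((nt*d - n*dt)/d^2)
      + ((nxx*d - n*dxx)*(d^2) - (nx*d - n*dx)*(2*d*dx))/((d^2)^2)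
      + 2 * (n*nb/d^2) * (n/d) = 0 := by
  have ha1 : a * a⁻¹ = 1 := mul_inv_cancel₀ ha
  have hb1 : b * b⁻¹ = 1 := mul_inv_cancel₀ hb
  simp only [← inv_pow] at hn hnb hnx hnxx hm hk hd' hdx hdxx
  have hQ := key_poly a a⁻¹ b b⁻¹ n nb nx nxx m k d dx dxx ha1 hb1
    hn hnb hnx hnxx hm hk hd' hdx hdxx
  rw [hnt, hdt]
  have hstep : i * ((i*m*d - n*(i*k))/d^2) = (i*i) * ((m*d - n*k)/d^2) := by ring
  rw [hstep, hi]
  have heq : (-1 : ℂ) * ((m * d - n * k) / d ^ 2)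
      + ((nxx*d - n*dxx)*(d^2) - (nx*d - n*dx)*(2*d*dx))/((d^2)^2)
      + 2*(n*nb/d^2)*(n/d)
      = (d * ((-(m*d - n*k) + (nxx*d - n*dxx))*d - 2*dx*(nx*d - n*dx) + 2*n^2*nb))
        / ((d^2)^2) := by
    field_simp
    ring
  rw [heq, hQ, mul_zero, zero_div]

end TwoSoliton
end TwoSolitonAux

/-- The two-soliton function
`Ψ₂(X,T) = 4e^{iT}(cosh 3X + 3e^{8iT} cosh X)/(cosh 4X + 4cosh 2X + 3cos 8T)` satisfies the
focusing nonlinear Schrödinger equation `iΨ_T + Ψ_XX + 2|Ψ|²Ψ = 0` for all `(X,T)`,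
the denominator being strictly positive. -/
theorem two_soliton_solves_focusing_NLS :
    ∀ X T : ℝ,
      0 < Real.cosh (4 * X) + 4 * Real.cosh (2 * X) + 3 * Real.cos (8 * T) ∧
      Complex.I * deriv (fun s => Psi₂ X s) T
        + deriv (fun u => deriv (fun v => Psi₂ v T) u) X
        + 2 * (‖Psi₂ X T‖ : ℂ) ^ 2 * Psi₂ X T = 0 := by
  intro X T
  constructor
  · exact TwoSoliton.DD_pos X T
  · rw [TwoSoliton.deriv_T, TwoSoliton.deriv_XX, TwoSoliton.habs, TwoSoliton.Psi2_eq]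
    exact TwoSoliton.key_alg Complex.I (Complex.exp (Complex.I*(T:ℂ))) (Complex.exp ((X:ℝ):ℂ))
      _ _ _ _ _ _ _ _ _ _ _
      Complex.I_mul_I (Complex.exp_ne_zero _) (Complex.exp_ne_zero _) (TwoSoliton.DD_ne X T)
      (TwoSoliton.NNt_ab X T) (TwoSoliton.DDt_ab X T) (TwoSoliton.NN_ab X T)
      (TwoSoliton.NB_ab X T) (TwoSoliton.NNx_ab X T) (TwoSoliton.NNxx_ab X T)
      rfl rfl (TwoSoliton.DD_ab X T) (TwoSoliton.DDx_ab X T) (TwoSoliton.DDxx_ab X T)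
end

section
/- Let ω ≠ 0 and α₀, β₀, γ₀, δ₀, ε₀, κ₀, μ₀ be real constants (values at t = 0), and let I be an interval containing 0 on which D(t) := 4α₀ sin ωt + ω cos ωt ≠ 0. Then the functions α(t) = (ω/4)(4α₀ cos ωt − ω sin ωt)/D(t), β(t) = ωβ₀/D(t), γ(t) = γ₀ − β₀² sin ωt / D(t), δ(t) = ωδ₀/D(t), ε(t) = ε₀ − 2β₀δ₀ sin ωt / D(t), κ(t) = κ₀ − δ₀² sin ωt / D(t) satisfy on I the Riccati-type system with coefficients a = 1, b = ω²/4, c = d = f = g = 0: namely α' + ω²/4 + 4α² = 0, β' + 4αβ = 0, γ' + β² = 0, δ' + 4αδ = 0, ε' = −2δβ, κ' = −δ², and moreover μ(t) = μ₀ D(t)/ω satisfies μ' = 4αμ. -/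
set_option maxHeartbeats 1000000


/-- Explicit general solution of the Riccati-type system for the harmonic
oscillator (`a = 1`, `b = ω²/4`, `c = d = f = g = 0`), with
`D(t) = 4α₀ sin ωt + ω cos ωt` nonvanishing on an interval `S` containing `0`. -/
theorem riccati_solution_harmonic_oscillator
    (ω α₀ β₀ γ₀ δ₀ ε₀ κ₀ μ₀ : ℝ) (hω : ω ≠ 0)
    (S : Set ℝ) (hS : Set.OrdConnected S) (h0S : (0:ℝ) ∈ S)
    (D : ℝ → ℝ)
    (hD : ∀ t, D t = 4 * α₀ * Real.sin (ω * t) + ω * Real.cos (ω * t))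
    (hDne : ∀ t ∈ S, D t ≠ 0)
    (α β γ δ ε κ μ : ℝ → ℝ)
    (hα : ∀ t, α t = ω / 4 * (4 * α₀ * Real.cos (ω * t) - ω * Real.sin (ω * t)) / D t)
    (hβ : ∀ t, β t = ω * β₀ / D t)
    (hγ : ∀ t, γ t = γ₀ - β₀ ^ 2 * Real.sin (ω * t) / D t)
    (hδ : ∀ t, δ t = ω * δ₀ / D t)
    (hε : ∀ t, ε t = ε₀ - 2 * β₀ * δ₀ * Real.sin (ω * t) / D t)
    (hκ : ∀ t, κ t = κ₀ - δ₀ ^ 2 * Real.sin (ω * t) / D t)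
    (hμ : ∀ t, μ t = μ₀ * D t / ω) :
    ∀ t ∈ S,
      deriv α t + ω ^ 2 / 4 + 4 * (α t) ^ 2 = 0 ∧
      deriv β t + 4 * α t * β t = 0 ∧
      deriv γ t + (β t) ^ 2 = 0 ∧
      deriv δ t + 4 * α t * δ t = 0 ∧
      deriv ε t = -(2 * δ t * β t) ∧
      deriv κ t = -(δ t) ^ 2 ∧
      deriv μ t = 4 * α t * μ t := by
  intro t ht
  have hDt : D t ≠ 0 := hDne t ht
  have hs : HasDerivAt (fun u => Real.sin (ω * u)) (ω * Real.cos (ω * t)) t := by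
    have := (Real.hasDerivAt_sin (ω * t)).comp t ((hasDerivAt_id t).const_mul ω)
    simpa [mul_comm, Function.comp_def] using this
  have hc : HasDerivAt (fun u => Real.cos (ω * u)) (-(ω * Real.sin (ω * t))) t := by
    have := (Real.hasDerivAt_cos (ω * t)).comp t ((hasDerivAt_id t).const_mul ω)
    simpa [mul_comm, Function.comp_def] using this
  have hDfun : D = fun u => 4 * α₀ * Real.sin (ω * u) + ω * Real.cos (ω * u) :=
    funext hD
  have hD' : HasDerivAt D (4 * α₀ * (ω * Real.cos (ω * t)) + ω * (-(ω * Real.sin (ω * t)))) t := by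
    rw [hDfun]; exact (hs.const_mul (4 * α₀)).add (hc.const_mul ω)
  have hN : HasDerivAt (fun u => ω / 4 * (4 * α₀ * Real.cos (ω * u) - ω * Real.sin (ω * u)))
      (ω / 4 * (4 * α₀ * (-(ω * Real.sin (ω * t))) - ω * (ω * Real.cos (ω * t)))) t :=
    ((hc.const_mul (4 * α₀)).sub (hs.const_mul ω)).const_mul (ω / 4)
  have hα' : HasDerivAt α
      ((ω / 4 * (4 * α₀ * (-(ω * Real.sin (ω * t))) - ω * (ω * Real.cos (ω * t))) * D t
        - ω / 4 * (4 * α₀ * Real.cos (ω * t) - ω * Real.sin (ω * t)) *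
          (4 * α₀ * (ω * Real.cos (ω * t)) + ω * (-(ω * Real.sin (ω * t))))) / D t ^ 2) t := by
    rw [funext hα]; exact hN.div hD' hDt
  have hβ' : HasDerivAt β
      ((0 * D t - ω * β₀ * (4 * α₀ * (ω * Real.cos (ω * t)) + ω * (-(ω * Real.sin (ω * t))))) / D t ^ 2) t := by
    rw [funext hβ]; exact (hasDerivAt_const t (ω * β₀)).div hD' hDt
  have hδ' : HasDerivAt δ
      ((0 * D t - ω * δ₀ * (4 * α₀ * (ω * Real.cos (ω * t)) + ω * (-(ω * Real.sin (ω * t))))) / D t ^ 2) t := by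
    rw [funext hδ]; exact (hasDerivAt_const t (ω * δ₀)).div hD' hDt
  have hq : ∀ c : ℝ, HasDerivAt (fun u => c * Real.sin (ω * u) / D u)
      ((c * (ω * Real.cos (ω * t)) * D t - c * Real.sin (ω * t) *
        (4 * α₀ * (ω * Real.cos (ω * t)) + ω * (-(ω * Real.sin (ω * t))))) / D t ^ 2) t := by
    intro c
    exact (hs.const_mul c).div hD' hDt
  have hγ' : HasDerivAt γ
      (0 - (β₀ ^ 2 * (ω * Real.cos (ω * t)) * D t - β₀ ^ 2 * Real.sin (ω * t) *
        (4 * α₀ * (ω * Real.cos (ω * t)) + ω * (-(ω * Real.sin (ω * t))))) / D t ^ 2) t := by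
    rw [funext hγ]; exact (hasDerivAt_const t γ₀).sub (hq (β₀ ^ 2))
  have hε' : HasDerivAt ε
      (0 - (2 * β₀ * δ₀ * (ω * Real.cos (ω * t)) * D t - 2 * β₀ * δ₀ * Real.sin (ω * t) *
        (4 * α₀ * (ω * Real.cos (ω * t)) + ω * (-(ω * Real.sin (ω * t))))) / D t ^ 2) t := by
    rw [funext hε]; exact (hasDerivAt_const t ε₀).sub (hq (2 * β₀ * δ₀))
  have hκ' : HasDerivAt κ
      (0 - (δ₀ ^ 2 * (ω * Real.cos (ω * t)) * D t - δ₀ ^ 2 * Real.sin (ω * t) *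
        (4 * α₀ * (ω * Real.cos (ω * t)) + ω * (-(ω * Real.sin (ω * t))))) / D t ^ 2) t := by
    rw [funext hκ]; exact (hasDerivAt_const t κ₀).sub (hq (δ₀ ^ 2))
  have hμ' : HasDerivAt μ
      (μ₀ * (4 * α₀ * (ω * Real.cos (ω * t)) + ω * (-(ω * Real.sin (ω * t)))) / ω) t := by
    rw [funext hμ]; exact (hD'.const_mul μ₀).div_const ω
  have pyth : Real.sin (ω * t) ^ 2 + Real.cos (ω * t) ^ 2 = 1 := Real.sin_sq_add_cos_sq _
  have hDt2 : 4 * α₀ * Real.sin (ω * t) + ω * Real.cos (ω * t) ≠ 0 := by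
    rw [← hD t]; exact hDt
  refine ⟨?_, ?_, ?_, ?_, ?_, ?_, ?_⟩
  · rw [hα'.deriv, hα t, hD t]
    field_simp [hDt2]
    ring
  · rw [hβ'.deriv, hα t, hβ t, hD t]
    field_simp [hDt2]
    ring
  · rw [hγ'.deriv, hβ t, hD t]
    field_simp [hDt2]
    linear_combination (-β₀ ^ 2 * ω ^ 2) * pyth
  · rw [hδ'.deriv, hα t, hδ t, hD t]
    field_simp [hDt2]
    ring
  · rw [hε'.deriv, hδ t, hβ t, hD t]
    field_simp [hDt2]
    linear_combination (-2 * β₀ * δ₀ * ω ^ 2) * pyth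
  · rw [hκ'.deriv, hδ t, hD t]
    field_simp [hDt2]
    linear_combination (-δ₀ ^ 2 * ω ^ 2) * pyth
  · rw [hμ'.deriv, hα t, hμ t, hD t]
    field_simp [hDt2]
    ring
end

section
/- Let ω ≠ 0 and h₀ be real constants, and let χ : ℝ × ℝ → ℂ be twice continuously differentiable satisfying iχ_τ + h₀|χ|²χ = χ_ξξ. Then on the strip { (x,t) : cos ωt > 0 } the function ψ(x, t) = (cos ωt)^{−1/2} e^{−i(ω/4)x² tan ωt} χ( x/cos ωt, −tan(ωt)/ω ) satisfies the modified harmonic-soliton equation iψ_t + ψ_xx = (ω²/4)x²ψ + (h₀/cos ωt)|ψ|²ψ. -/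
set_option maxHeartbeats 2000000 in
/-- On the strip `cos ωt > 0`, the substitution
`ψ(x,t) = (cos ωt)^{-1/2} e^{-i(ω/4)x² tan ωt} χ(x/cos ωt, -tan(ωt)/ω)` maps solutions of
the autonomous equation `iχ_τ + h₀|χ|²χ = χ_ξξ` to solutions of the modified
harmonic-soliton equation `iψ_t + ψ_xx = (ω²/4)x²ψ + (h₀/cos ωt)|ψ|²ψ`. -/
theorem harmonic_soliton_transform
    (ω h₀ : ℝ) (hω : ω ≠ 0)
    (χ : ℝ → ℝ → ℂ)
    (hχ : ContDiff ℝ 2 (fun p : ℝ × ℝ => χ p.1 p.2))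
    (hNLS : ∀ ξ τ : ℝ, Complex.I * deriv (fun s => χ ξ s) τ
        + (h₀ : ℂ) * (‖χ ξ τ‖ : ℂ) ^ 2 * χ ξ τ
        = deriv (fun u => deriv (fun v => χ v τ) u) ξ)
    (ψ : ℝ → ℝ → ℂ)
    (hψ : ∀ x t : ℝ, ψ x t =
        (Real.sqrt (Real.cos (ω * t)) : ℂ)⁻¹ *
          Complex.exp (-Complex.I * ((ω : ℂ) / 4) * (x : ℂ) ^ 2 * (Real.tan (ω * t) : ℂ)) *
          χ (x / Real.cos (ω * t)) (-Real.tan (ω * t) / ω)) :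
    ∀ x t : ℝ, 0 < Real.cos (ω * t) →
      Complex.I * deriv (fun s => ψ x s) t
          + deriv (fun u => deriv (fun v => ψ v t) u) x
        = ((ω : ℂ) ^ 2 / 4) * (x : ℂ) ^ 2 * ψ x t
          + ((h₀ / Real.cos (ω * t) : ℝ) : ℂ) * (‖ψ x t‖ : ℂ) ^ 2 * ψ x t := by
  intro x t hc
  have hc0 : Real.cos (ω * t) ≠ 0 := ne_of_gt hc
  have hrpos : 0 < Real.sqrt (Real.cos (ω * t)) := Real.sqrt_pos.mpr hc
  have hr0 : Real.sqrt (Real.cos (ω * t)) ≠ 0 := ne_of_gt hrpos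
  set F : ℝ × ℝ → ℂ := fun p => χ p.1 p.2 with hFdef
  have hFd : Differentiable ℝ F := hχ.differentiable (by norm_num)
  set Φ : ℝ × ℝ → ℂ := fun p => fderiv ℝ F p (1, 0) with hΦdef
  have hΦd : Differentiable ℝ Φ :=
    ((hχ.fderiv_right (m := 1) (by norm_num)).differentiable one_ne_zero).clm_apply (differentiable_const _)
  -- linearity of the differentials
  have hsplitF : ∀ (p : ℝ × ℝ) (a b : ℝ),
      fderiv ℝ F p (a, b) = (a : ℂ) * Φ p + (b : ℂ) * fderiv ℝ F p (0, 1) := by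
    intro p a b
    have h : (a, b) = a • ((1:ℝ), (0:ℝ)) + b • ((0:ℝ), (1:ℝ)) := by simp [Prod.ext_iff]
    rw [h, map_add, map_smul, map_smul]
    simp [Complex.real_smul, hΦdef]
  have hsplitΦ : ∀ (p : ℝ × ℝ) (a b : ℝ),
      fderiv ℝ Φ p (a, b) = (a : ℂ) * fderiv ℝ Φ p (1, 0) + (b : ℂ) * fderiv ℝ Φ p (0, 1) := by
    intro p a b
    have h : (a, b) = a • ((1:ℝ), (0:ℝ)) + b • ((0:ℝ), (1:ℝ)) := by simp [Prod.ext_iff]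
    rw [h, map_add, map_smul, map_smul]
    simp [Complex.real_smul]
  -- partial derivatives of χ
  have hχx : ∀ (u τ' : ℝ), HasDerivAt (fun v => χ v τ') (Φ (u, τ')) u := by
    intro u τ'
    exact (hFd (u, τ')).hasFDerivAt.comp_hasDerivAt u
      ((hasDerivAt_id u).prodMk (hasDerivAt_const u τ'))
  have hχt : ∀ (ξ τ' : ℝ), HasDerivAt (fun s' => χ ξ s') (fderiv ℝ F (ξ, τ') (0, 1)) τ' := by
    intro ξ τ'
    exact (hFd (ξ, τ')).hasFDerivAt.comp_hasDerivAt τ'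
      ((hasDerivAt_const τ' ξ).prodMk (hasDerivAt_id τ'))
  -- the NLS equation in terms of fderivs
  have key : fderiv ℝ Φ (x / Real.cos (ω*t), -Real.tan (ω*t) / ω) (1, 0)
      = Complex.I * fderiv ℝ F (x / Real.cos (ω*t), -Real.tan (ω*t) / ω) (0, 1)
        + (h₀ : ℂ) * (‖χ (x / Real.cos (ω*t)) (-Real.tan (ω*t) / ω)‖ : ℂ) ^ 2
          * χ (x / Real.cos (ω*t)) (-Real.tan (ω*t) / ω) := by
    have h1 := hNLS (x / Real.cos (ω*t)) (-Real.tan (ω*t) / ω)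
    rw [(hχt _ _).deriv] at h1
    rw [show (fun u => deriv (fun v => χ v (-Real.tan (ω*t) / ω)) u)
        = fun u => Φ (u, -Real.tan (ω*t) / ω) from
      funext fun u => (hχx u _).deriv] at h1
    rw [show deriv (fun u => Φ (u, -Real.tan (ω*t) / ω)) (x / Real.cos (ω*t))
        = fderiv ℝ Φ (x / Real.cos (ω*t), -Real.tan (ω*t) / ω) (1, 0) from
      ((hΦd _).hasFDerivAt.comp_hasDerivAt _
        ((hasDerivAt_id _).prodMk (hasDerivAt_const _ _))).deriv] at h1
    exact h1.symm
  -- time derivative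
  have hωs : HasDerivAt (fun s' : ℝ => ω * s') ω t := by
    simpa using (hasDerivAt_id t).const_mul ω
  have hcos' : HasDerivAt (fun s' : ℝ => Real.cos (ω * s')) (-Real.sin (ω*t) * ω) t := by
    simpa [Function.comp_def] using (Real.hasDerivAt_cos (ω*t)).comp t hωs
  have htan : HasDerivAt (fun s' : ℝ => Real.tan (ω * s')) (1 / Real.cos (ω*t)^2 * ω) t := by
    simpa [Function.comp_def] using (Real.hasDerivAt_tan hc0).comp t hωs
  have hg1r : HasDerivAt (fun s' : ℝ => (Real.sqrt (Real.cos (ω*s')))⁻¹)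
      (-(-Real.sin (ω*t) * ω / (2 * Real.sqrt (Real.cos (ω*t)))) / Real.sqrt (Real.cos (ω*t)) ^ 2) t :=
    (hcos'.sqrt hc0).inv hr0
  have hg1 : HasDerivAt (fun s' : ℝ => ((Real.sqrt (Real.cos (ω*s')) : ℝ) : ℂ)⁻¹)
      ((-(-Real.sin (ω*t) * ω / (2 * Real.sqrt (Real.cos (ω*t)))) / Real.sqrt (Real.cos (ω*t)) ^ 2 : ℝ) : ℂ) t := by
    have := hg1r.ofReal_comp
    simp only [Complex.ofReal_inv] at this
    exact this
  have hg2 : HasDerivAt (fun s' : ℝ =>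
        Complex.exp (-Complex.I * ((ω:ℂ)/4) * (x:ℂ)^2 * ((Real.tan (ω*s') : ℝ) : ℂ)))
      (Complex.exp (-Complex.I * ((ω:ℂ)/4) * (x:ℂ)^2 * ((Real.tan (ω*t) : ℝ) : ℂ))
        * (-Complex.I * ((ω:ℂ)/4) * (x:ℂ)^2 * ((1 / Real.cos (ω*t)^2 * ω : ℝ) : ℂ))) t :=
    ((htan.ofReal_comp).const_mul (-Complex.I * ((ω:ℂ)/4) * (x:ℂ)^2)).cexp
  have hg3 : HasDerivAt (fun s' : ℝ => χ (x / Real.cos (ω*s')) (-Real.tan (ω*s') / ω))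
      (fderiv ℝ F (x / Real.cos (ω*t), -Real.tan (ω*t) / ω)
        ((0 * Real.cos (ω*t) - x * (-Real.sin (ω*t) * ω)) / Real.cos (ω*t)^2,
          -(1 / Real.cos (ω*t)^2 * ω) / ω)) t :=
    (hFd _).hasFDerivAt.comp_hasDerivAt t
      (((hasDerivAt_const t x).div hcos' hc0).prodMk ((htan.neg).div_const ω))
  have hft : HasDerivAt (fun s' : ℝ =>
        ((Real.sqrt (Real.cos (ω*s')) : ℝ) : ℂ)⁻¹
          * Complex.exp (-Complex.I * ((ω:ℂ)/4) * (x:ℂ)^2 * ((Real.tan (ω*s') : ℝ) : ℂ))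
          * χ (x / Real.cos (ω*s')) (-Real.tan (ω*s') / ω))
      ((((-(-Real.sin (ω*t) * ω / (2 * Real.sqrt (Real.cos (ω*t)))) / Real.sqrt (Real.cos (ω*t)) ^ 2 : ℝ) : ℂ)
          * Complex.exp (-Complex.I * ((ω:ℂ)/4) * (x:ℂ)^2 * ((Real.tan (ω*t) : ℝ) : ℂ))
        + ((Real.sqrt (Real.cos (ω*t)) : ℝ) : ℂ)⁻¹
          * (Complex.exp (-Complex.I * ((ω:ℂ)/4) * (x:ℂ)^2 * ((Real.tan (ω*t) : ℝ) : ℂ))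
            * (-Complex.I * ((ω:ℂ)/4) * (x:ℂ)^2 * ((1 / Real.cos (ω*t)^2 * ω : ℝ) : ℂ))))
        * χ (x / Real.cos (ω*t)) (-Real.tan (ω*t) / ω)
      + (((Real.sqrt (Real.cos (ω*t)) : ℝ) : ℂ)⁻¹
          * Complex.exp (-Complex.I * ((ω:ℂ)/4) * (x:ℂ)^2 * ((Real.tan (ω*t) : ℝ) : ℂ)))
        * fderiv ℝ F (x / Real.cos (ω*t), -Real.tan (ω*t) / ω)
          ((0 * Real.cos (ω*t) - x * (-Real.sin (ω*t) * ω)) / Real.cos (ω*t)^2,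
            -(1 / Real.cos (ω*t)^2 * ω) / ω)) t :=
    (hg1.mul hg2).mul hg3
  have Hdt : deriv (fun s => ψ x s) t =
      (((-(-Real.sin (ω*t) * ω / (2 * Real.sqrt (Real.cos (ω*t)))) / Real.sqrt (Real.cos (ω*t)) ^ 2 : ℝ) : ℂ)
          * Complex.exp (-Complex.I * ((ω:ℂ)/4) * (x:ℂ)^2 * ((Real.tan (ω*t) : ℝ) : ℂ))
        + ((Real.sqrt (Real.cos (ω*t)) : ℝ) : ℂ)⁻¹
          * (Complex.exp (-Complex.I * ((ω:ℂ)/4) * (x:ℂ)^2 * ((Real.tan (ω*t) : ℝ) : ℂ))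
            * (-Complex.I * ((ω:ℂ)/4) * (x:ℂ)^2 * ((1 / Real.cos (ω*t)^2 * ω : ℝ) : ℂ))))
        * χ (x / Real.cos (ω*t)) (-Real.tan (ω*t) / ω)
      + (((Real.sqrt (Real.cos (ω*t)) : ℝ) : ℂ)⁻¹
          * Complex.exp (-Complex.I * ((ω:ℂ)/4) * (x:ℂ)^2 * ((Real.tan (ω*t) : ℝ) : ℂ)))
        * fderiv ℝ F (x / Real.cos (ω*t), -Real.tan (ω*t) / ω)
          ((0 * Real.cos (ω*t) - x * (-Real.sin (ω*t) * ω)) / Real.cos (ω*t)^2,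
            -(1 / Real.cos (ω*t)^2 * ω) / ω) := by
    rw [funext fun s' : ℝ => hψ x s']
    exact hft.deriv
  -- inner spatial derivative, at an arbitrary point u
  have hinner : ∀ u : ℝ, HasDerivAt (fun v : ℝ =>
        ((Real.sqrt (Real.cos (ω*t)) : ℝ) : ℂ)⁻¹
          * Complex.exp (-Complex.I * ((ω:ℂ)/4) * (v:ℂ)^2 * ((Real.tan (ω*t) : ℝ) : ℂ))
          * χ (v / Real.cos (ω*t)) (-Real.tan (ω*t) / ω))
      ((0 * Complex.exp (-Complex.I * ((ω:ℂ)/4) * (u:ℂ)^2 * ((Real.tan (ω*t) : ℝ) : ℂ))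
        + ((Real.sqrt (Real.cos (ω*t)) : ℝ) : ℂ)⁻¹
          * (Complex.exp (-Complex.I * ((ω:ℂ)/4) * (u:ℂ)^2 * ((Real.tan (ω*t) : ℝ) : ℂ))
            * (-Complex.I * ((ω:ℂ)/4) * (((2*u : ℝ)) : ℂ) * ((Real.tan (ω*t) : ℝ) : ℂ))))
        * χ (u / Real.cos (ω*t)) (-Real.tan (ω*t) / ω)
      + (((Real.sqrt (Real.cos (ω*t)) : ℝ) : ℂ)⁻¹
          * Complex.exp (-Complex.I * ((ω:ℂ)/4) * (u:ℂ)^2 * ((Real.tan (ω*t) : ℝ) : ℂ)))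
        * fderiv ℝ F (u / Real.cos (ω*t), -Real.tan (ω*t) / ω) (1 / Real.cos (ω*t), 0)) u := by
    intro u
    have hE0 : HasDerivAt (fun v : ℝ => ((v:ℂ))^2) (((2*u : ℝ)) : ℂ) u := by
      simpa using (hasDerivAt_pow 2 u).ofReal_comp
    have hE : HasDerivAt (fun v : ℝ =>
          Complex.exp (-Complex.I * ((ω:ℂ)/4) * (v:ℂ)^2 * ((Real.tan (ω*t) : ℝ) : ℂ)))
        (Complex.exp (-Complex.I * ((ω:ℂ)/4) * (u:ℂ)^2 * ((Real.tan (ω*t) : ℝ) : ℂ))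
          * (-Complex.I * ((ω:ℂ)/4) * (((2*u : ℝ)) : ℂ) * ((Real.tan (ω*t) : ℝ) : ℂ))) u :=
      ((hE0.const_mul (-Complex.I * ((ω:ℂ)/4))).mul_const ((Real.tan (ω*t) : ℝ) : ℂ)).cexp
    have hχu : HasDerivAt (fun v : ℝ => χ (v / Real.cos (ω*t)) (-Real.tan (ω*t) / ω))
        (fderiv ℝ F (u / Real.cos (ω*t), -Real.tan (ω*t) / ω) (1 / Real.cos (ω*t), 0)) u :=
      (hFd _).hasFDerivAt.comp_hasDerivAt u
        (((hasDerivAt_id u).div_const _).prodMk (hasDerivAt_const _ _))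
    exact ((hasDerivAt_const u (((Real.sqrt (Real.cos (ω*t)) : ℝ) : ℂ)⁻¹)).mul hE).mul hχu
  -- outer spatial derivative
  have hid : HasDerivAt (fun v : ℝ => (v : ℂ)) (((1:ℝ)) : ℂ) x := (hasDerivAt_id x).ofReal_comp
  have hE0x : HasDerivAt (fun v : ℝ => ((v:ℂ))^2) (((2*x : ℝ)) : ℂ) x := by
    simpa using (hasDerivAt_pow 2 x).ofReal_comp
  have hEx : HasDerivAt (fun v : ℝ =>
        Complex.exp (-Complex.I * ((ω:ℂ)/4) * (v:ℂ)^2 * ((Real.tan (ω*t) : ℝ) : ℂ)))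
      (Complex.exp (-Complex.I * ((ω:ℂ)/4) * (x:ℂ)^2 * ((Real.tan (ω*t) : ℝ) : ℂ))
        * (-Complex.I * ((ω:ℂ)/4) * (((2*x : ℝ)) : ℂ) * ((Real.tan (ω*t) : ℝ) : ℂ))) x :=
    ((hE0x.const_mul (-Complex.I * ((ω:ℂ)/4))).mul_const ((Real.tan (ω*t) : ℝ) : ℂ)).cexp
  have hχux : HasDerivAt (fun v : ℝ => χ (v / Real.cos (ω*t)) (-Real.tan (ω*t) / ω))
      (fderiv ℝ F (x / Real.cos (ω*t), -Real.tan (ω*t) / ω) (1 / Real.cos (ω*t), 0)) x :=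
    (hFd _).hasFDerivAt.comp_hasDerivAt x
      (((hasDerivAt_id x).div_const _).prodMk (hasDerivAt_const _ _))
  have hB1 : HasDerivAt (fun u : ℝ => -Complex.I * ((ω:ℂ)/2) * (u:ℂ) * ((Real.tan (ω*t) : ℝ) : ℂ)
        * χ (u / Real.cos (ω*t)) (-Real.tan (ω*t) / ω))
      ((-Complex.I * ((ω:ℂ)/2) * (((1:ℝ)) : ℂ) * ((Real.tan (ω*t) : ℝ) : ℂ))
          * χ (x / Real.cos (ω*t)) (-Real.tan (ω*t) / ω)
        + (-Complex.I * ((ω:ℂ)/2) * (x:ℂ) * ((Real.tan (ω*t) : ℝ) : ℂ))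
          * fderiv ℝ F (x / Real.cos (ω*t), -Real.tan (ω*t) / ω) (1 / Real.cos (ω*t), 0)) x :=
    (((hid.const_mul (-Complex.I * ((ω:ℂ)/2))).mul_const ((Real.tan (ω*t) : ℝ) : ℂ)).mul hχux)
  have hB2 : HasDerivAt (fun u : ℝ =>
        ((Real.cos (ω*t) : ℝ) : ℂ)⁻¹ * Φ (u / Real.cos (ω*t), -Real.tan (ω*t) / ω))
      (((Real.cos (ω*t) : ℝ) : ℂ)⁻¹
        * fderiv ℝ Φ (x / Real.cos (ω*t), -Real.tan (ω*t) / ω) (1 / Real.cos (ω*t), 0)) x :=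
    HasDerivAt.const_mul _ ((hΦd _).hasFDerivAt.comp_hasDerivAt x
      (((hasDerivAt_id x).div_const _).prodMk (hasDerivAt_const _ _)))
  have hgx := ((hasDerivAt_const x (((Real.sqrt (Real.cos (ω*t)) : ℝ) : ℂ)⁻¹)).mul hEx).mul
    (hB1.add hB2)
  have Hdxx : deriv (fun u => deriv (fun v => ψ v t) u) x =
      ((0 * Complex.exp (-Complex.I * ((ω:ℂ)/4) * (x:ℂ)^2 * ((Real.tan (ω*t) : ℝ) : ℂ))
        + ((Real.sqrt (Real.cos (ω*t)) : ℝ) : ℂ)⁻¹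
          * (Complex.exp (-Complex.I * ((ω:ℂ)/4) * (x:ℂ)^2 * ((Real.tan (ω*t) : ℝ) : ℂ))
            * (-Complex.I * ((ω:ℂ)/4) * (((2*x : ℝ)) : ℂ) * ((Real.tan (ω*t) : ℝ) : ℂ))))
        * (-Complex.I * ((ω:ℂ)/2) * (x:ℂ) * ((Real.tan (ω*t) : ℝ) : ℂ)
            * χ (x / Real.cos (ω*t)) (-Real.tan (ω*t) / ω)
          + ((Real.cos (ω*t) : ℝ) : ℂ)⁻¹ * Φ (x / Real.cos (ω*t), -Real.tan (ω*t) / ω))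
      + (((Real.sqrt (Real.cos (ω*t)) : ℝ) : ℂ)⁻¹
          * Complex.exp (-Complex.I * ((ω:ℂ)/4) * (x:ℂ)^2 * ((Real.tan (ω*t) : ℝ) : ℂ)))
        * ((-Complex.I * ((ω:ℂ)/2) * (((1:ℝ)) : ℂ) * ((Real.tan (ω*t) : ℝ) : ℂ))
            * χ (x / Real.cos (ω*t)) (-Real.tan (ω*t) / ω)
          + (-Complex.I * ((ω:ℂ)/2) * (x:ℂ) * ((Real.tan (ω*t) : ℝ) : ℂ))
            * fderiv ℝ F (x / Real.cos (ω*t), -Real.tan (ω*t) / ω) (1 / Real.cos (ω*t), 0)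
          + ((Real.cos (ω*t) : ℝ) : ℂ)⁻¹
            * fderiv ℝ Φ (x / Real.cos (ω*t), -Real.tan (ω*t) / ω) (1 / Real.cos (ω*t), 0))) := by
    have h1 : (fun u : ℝ => deriv (fun v => ψ v t) u) = (fun u : ℝ =>
        ((Real.sqrt (Real.cos (ω*t)) : ℝ) : ℂ)⁻¹
          * Complex.exp (-Complex.I * ((ω:ℂ)/4) * (u:ℂ)^2 * ((Real.tan (ω*t) : ℝ) : ℂ))
          * (-Complex.I * ((ω:ℂ)/2) * (u:ℂ) * ((Real.tan (ω*t) : ℝ) : ℂ)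
              * χ (u / Real.cos (ω*t)) (-Real.tan (ω*t) / ω)
            + ((Real.cos (ω*t) : ℝ) : ℂ)⁻¹ * Φ (u / Real.cos (ω*t), -Real.tan (ω*t) / ω))) := by
      funext u
      rw [funext fun v : ℝ => hψ v t, (hinner u).deriv, hsplitF]
      push_cast [-Complex.ofReal_cos, -Complex.ofReal_sin, -Complex.ofReal_tan]
      ring
    rw [h1]
    exact hgx.deriv
  -- modulus computation
  have habs : ‖ψ x t‖ = (Real.sqrt (Real.cos (ω*t)))⁻¹
      * ‖χ (x / Real.cos (ω*t)) (-Real.tan (ω*t) / ω)‖ := by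
    have hre : (-Complex.I * ((ω:ℂ)/4) * (x:ℂ)^2 * ((Real.tan (ω*t) : ℝ) : ℂ)).re = 0 := by
      simp [Complex.mul_re, Complex.mul_im, -Complex.ofReal_tan, pow_two]
    rw [hψ x t, norm_mul, norm_mul, norm_inv, Complex.norm_real, Complex.norm_exp, hre,
      Real.exp_zero, Real.norm_eq_abs, abs_of_pos hrpos]
    ring
  have hTc : ((Real.tan (ω*t) : ℝ) : ℂ) = ((Real.sin (ω*t) : ℝ) : ℂ) / ((Real.cos (ω*t) : ℝ) : ℂ) := by
    rw [Real.tan_eq_sin_div_cos]; push_cast; ring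
  have hSQ2 : ((Real.cos (ω*t) : ℝ) : ℂ) = ((Real.sqrt (Real.cos (ω*t)) : ℝ) : ℂ)^2 := by
    rw [← Complex.ofReal_pow, Real.sq_sqrt hc.le]
  have hSC : ((Real.sin (ω*t) : ℝ) : ℂ)^2 + ((Real.sqrt (Real.cos (ω*t)) : ℝ) : ℂ)^4 = 1 := by
    have h2 : Real.sqrt (Real.cos (ω*t))^4 = Real.cos (ω*t)^2 := by
      rw [show (4:ℕ) = 2*2 from rfl, pow_mul, Real.sq_sqrt hc.le]
    have h1 : Real.sin (ω*t)^2 + Real.sqrt (Real.cos (ω*t))^4 = 1 := by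
      rw [h2]; exact Real.sin_sq_add_cos_sq (ω*t)
    exact_mod_cast h1
  have hSQC : ((Real.sqrt (Real.cos (ω*t)) : ℝ) : ℂ) ≠ 0 := Complex.ofReal_ne_zero.mpr hr0
  have hωC : ((ω:ℝ) : ℂ) ≠ 0 := Complex.ofReal_ne_zero.mpr hω
  rw [Hdt, Hdxx, habs, hψ x t,
    hsplitF _ ((0 * Real.cos (ω*t) - x * (-Real.sin (ω*t) * ω)) / Real.cos (ω*t)^2)
      (-(1 / Real.cos (ω*t)^2 * ω) / ω),
    hsplitF _ (1 / Real.cos (ω*t)) 0,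
    hsplitΦ _ (1 / Real.cos (ω*t)) 0, key, hTc]
  simp only [Complex.ofReal_mul, Complex.ofReal_div, Complex.ofReal_neg, Complex.ofReal_inv,
    Complex.ofReal_pow, Complex.ofReal_one, Complex.ofReal_ofNat, Complex.ofReal_sub,
    Complex.ofReal_add, Complex.ofReal_zero]
  rw [hSQ2]
  field_simp
  have hq : ((Real.sqrt (Real.cos (ω*t)) : ℝ) : ℂ) * ((Real.sqrt (Real.cos (ω*t)) : ℝ) : ℂ)⁻¹ = 1 :=
    mul_inv_cancel₀ hSQC
  have hw : (ω:ℂ) * (ω:ℂ)⁻¹ = 1 := mul_inv_cancel₀ hωC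
  have hIsq : Complex.I^2 = -1 := Complex.I_sq
  have hSCc : Complex.sin ((ω:ℂ) * (t:ℂ))^2 + ((Real.sqrt (Real.cos (ω*t)) : ℝ) : ℂ)^4 = 1 := by
    rw [show (ω:ℂ) * (t:ℂ) = ((ω*t : ℝ) : ℂ) by push_cast; ring, ← Complex.ofReal_sin]
    exact_mod_cast hSC
  linear_combination (2 * (ω:ℂ)^2 * (x:ℂ)^2 * χ (x / Real.cos (ω*t)) (-(Real.tan (ω*t) / ω)) * (((Real.sin (ω*t) : ℝ) : ℂ)^2 - 1)) * hIsq + (-2 * (ω:ℂ)^2 * (x:ℂ)^2 * χ (x / Real.cos (ω*t)) (-(Real.tan (ω*t) / ω))) * hSC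
end

section
/- Let k, α₀, β₀, γ₀, δ₀, ε₀, κ₀, μ₀ be real constants and let I be an interval containing 0 on which 1 + 4α₀t ≠ 0. Then the functions α(t) = α₀/(1+4α₀t), β(t) = β₀/(1+4α₀t), γ(t) = γ₀ − β₀²t/(1+4α₀t), δ(t) = kt + (δ₀ + kt)/(1+4α₀t), ε(t) = ε₀ − 2β₀t(δ₀ + kt)/(1+4α₀t), κ(t) = κ₀ − k²t³/3 − t(δ₀ + kt)²/(1+4α₀t) satisfy on I the Riccati-type system with coefficients a = 1, b = c = d = g = 0, f = 2k: namely α' + 4α² = 0, β' + 4αβ = 0, γ' + β² = 0, δ' + 4αδ = 2k, ε' = −2δβ, κ' = −δ², and moreover μ(t) = μ₀(1 + 4α₀t) satisfies μ' = 4αμ. -/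
/-- Explicit general solution of the Riccati-type system for a soliton in
linearly inhomogeneous plasma (`a = 1`, `f = 2k`, `b = c = d = g = 0`), with
`1 + 4α₀t` nonvanishing on an interval `S` containing `0`. -/
theorem riccati_solution_inhomogeneous_plasma
    (k α₀ β₀ γ₀ δ₀ ε₀ κ₀ μ₀ : ℝ)
    (S : Set ℝ) (hS : Set.OrdConnected S) (h0S : (0:ℝ) ∈ S)
    (hne : ∀ t ∈ S, 1 + 4 * α₀ * t ≠ 0)
    (α β γ δ ε κ μ : ℝ → ℝ)
    (hα : ∀ t, α t = α₀ / (1 + 4 * α₀ * t))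
    (hβ : ∀ t, β t = β₀ / (1 + 4 * α₀ * t))
    (hγ : ∀ t, γ t = γ₀ - β₀ ^ 2 * t / (1 + 4 * α₀ * t))
    (hδ : ∀ t, δ t = k * t + (δ₀ + k * t) / (1 + 4 * α₀ * t))
    (hε : ∀ t, ε t = ε₀ - 2 * β₀ * t * (δ₀ + k * t) / (1 + 4 * α₀ * t))
    (hκ : ∀ t, κ t = κ₀ - k ^ 2 * t ^ 3 / 3 - t * (δ₀ + k * t) ^ 2 / (1 + 4 * α₀ * t))
    (hμ : ∀ t, μ t = μ₀ * (1 + 4 * α₀ * t)) :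
    ∀ t ∈ S,
      deriv α t + 4 * (α t) ^ 2 = 0 ∧
      deriv β t + 4 * α t * β t = 0 ∧
      deriv γ t + (β t) ^ 2 = 0 ∧
      deriv δ t + 4 * α t * δ t = 2 * k ∧
      deriv ε t = -(2 * δ t * β t) ∧
      deriv κ t = -(δ t) ^ 2 ∧
      deriv μ t = 4 * α t * μ t := by
  intro t ht
  have hD : (1 + 4 * α₀ * t) ≠ 0 := hne t ht
  have hDd : HasDerivAt (fun x : ℝ => 1 + 4 * α₀ * x) (4 * α₀) t := by
    simpa using ((hasDerivAt_id t).const_mul (4 * α₀)).const_add 1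
  have hkx : HasDerivAt (fun x : ℝ => δ₀ + k * x) k t := by
    simpa using ((hasDerivAt_id t).const_mul k).const_add δ₀
  rw [funext hα, funext hβ, funext hγ, funext hδ, funext hε, funext hκ, funext hμ]
  refine ⟨?_, ?_, ?_, ?_, ?_, ?_, ?_⟩
  · have h := (hasDerivAt_const t α₀).div hDd hD
    simp only [id_eq, Pi.sub_def, Pi.add_def, Pi.mul_def, Pi.div_def, Pi.pow_def] at h
    rw [h.deriv]
    field_simp
    ring
  · have h := (hasDerivAt_const t β₀).div hDd hD
    simp only [id_eq, Pi.sub_def, Pi.add_def, Pi.mul_def, Pi.div_def, Pi.pow_def] at h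
    rw [h.deriv]
    field_simp
    ring
  · have h := (hasDerivAt_const t γ₀).sub
      ((((hasDerivAt_id t).const_mul (β₀ ^ 2)).div hDd hD))
    simp only [id_eq, Pi.sub_def, Pi.add_def, Pi.mul_def, Pi.div_def, Pi.pow_def] at h
    rw [h.deriv]
    field_simp
    ring
  · have h := (((hasDerivAt_id t).const_mul k).add (hkx.div hDd hD))
    simp only [id_eq, Pi.sub_def, Pi.add_def, Pi.mul_def, Pi.div_def, Pi.pow_def] at h
    rw [h.deriv]
    field_simp
    ring
  · have h := (hasDerivAt_const t ε₀).sub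
      (((((hasDerivAt_id t).const_mul (2 * β₀)).mul hkx)).div hDd hD)
    simp only [id_eq, Pi.sub_def, Pi.add_def, Pi.mul_def, Pi.div_def, Pi.pow_def] at h
    rw [h.deriv]
    have hD' : 1 + t * 4 * α₀ ≠ 0 := by convert hD using 1; ring
    field_simp
    ring
  · have h := ((hasDerivAt_const t κ₀).sub
      ((((hasDerivAt_pow 3 t).const_mul (k ^ 2))).div_const 3)).sub
      ((((hasDerivAt_id t).mul (hkx.pow 2))).div hDd hD)
    simp only [id_eq, Pi.sub_def, Pi.add_def, Pi.mul_def, Pi.div_def, Pi.pow_def] at h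
    rw [h.deriv]
    have hD' : 1 + t * 4 * α₀ ≠ 0 := by convert hD using 1; ring
    field_simp
    ring
  · have h := (hDd.const_mul μ₀)
    rw [h.deriv]
    field_simp
end

section
/- Let k and h₀ be real constants and let χ : ℝ × ℝ → ℂ be twice continuously differentiable satisfying iχ_τ + h₀|χ|²χ = χ_ξξ. Then the function ψ(x, t) = e^{i(2ktx − 4k²t³/3)} χ(x − 2kt², −t) satisfies iψ_t + ψ_xx + 2kxψ = h₀|ψ|²ψ on ℝ × ℝ (Tappert's transformation, producing a soliton moving with acceleration in linearly inhomogeneous plasma). -/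
open Complex

/-- Tappert's transformation `ψ(x,t) = e^{i(2ktx - 4k²t³/3)} χ(x - 2kt², -t)`
maps solutions of the autonomous equation `iχ_τ + h₀|χ|²χ = χ_ξξ` to solutions of
`iψ_t + ψ_xx + 2kxψ = h₀|ψ|²ψ`, the equation of a soliton moving with acceleration in
linearly inhomogeneous plasma. -/
theorem tappert_transformation
    (k h₀ : ℝ)
    (χ : ℝ → ℝ → ℂ)
    (hχ : ContDiff ℝ 2 (fun p : ℝ × ℝ => χ p.1 p.2))
    (hNLS : ∀ ξ τ : ℝ, Complex.I * deriv (fun s => χ ξ s) τ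
        + (h₀ : ℂ) * ((‖χ ξ τ‖ : ℝ) : ℂ) ^ 2 * χ ξ τ
        = deriv (fun u => deriv (fun v => χ v τ) u) ξ)
    (ψ : ℝ → ℝ → ℂ)
    (hψ : ∀ x t : ℝ, ψ x t =
        Complex.exp (Complex.I *
            (2 * (k : ℂ) * (t : ℂ) * (x : ℂ) - 4 * (k : ℂ) ^ 2 * (t : ℂ) ^ 3 / 3)) *
          χ (x - 2 * k * t ^ 2) (-t)) :
    ∀ x t : ℝ,
      Complex.I * deriv (fun s => ψ x s) t
          + deriv (fun u => deriv (fun v => ψ v t) u) x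
          + 2 * (k : ℂ) * (x : ℂ) * ψ x t
        = (h₀ : ℂ) * ((‖ψ x t‖ : ℝ) : ℂ) ^ 2 * ψ x t := by
  intro x t
  set F : ℝ × ℝ → ℂ := fun p => χ p.1 p.2 with hFdef
  have hdF : Differentiable ℝ F := hχ.differentiable (by norm_num)
  have hdF' : Differentiable ℝ (fderiv ℝ F) :=
    (hχ.fderiv_right (m := 1) (by norm_num)).differentiable (by norm_num)
  have hdF₁ : Differentiable ℝ (fun q : ℝ × ℝ => fderiv ℝ F q ((1:ℝ), (0:ℝ))) :=
    fun q => (hdF' q).clm_apply (differentiableAt_const _)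
  -- abbreviations (as plain terms, used consistently)
  -- B₁ = ∂₁χ at p, B₂ = ∂₂χ at p, A = ∂₁∂₁χ at p, with p = (x - 2kt², -t)
  -- E = exp(I (2ktx - 4k²t³/3))
  have hsD : ∀ u : ℝ, HasDerivAt (fun s : ℝ => (s : ℂ)) 1 u := by
    intro u
    exact (hasDerivAt_id (u:ℂ)).comp_ofReal
  -- time derivative of ψ x ·
  have hγt : HasDerivAt (fun s : ℝ => ((x - 2*k*s^2 : ℝ), (-s : ℝ))) ((-(4*k*t) : ℝ), (-1 : ℝ)) t := by
    have h1 : HasDerivAt (fun s : ℝ => x - 2*k*s^2) (-(4*k*t)) t := by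
      have h := ((hasDerivAt_pow 2 t).const_mul (2*k)).const_sub x
      rw [show -(4*k*t) = -(2*k*((2:ℕ) * t^(2-1))) by push_cast; ring]
      exact h
    exact HasDerivAt.prodMk h1 ((hasDerivAt_id t).neg)
  have hχt : HasDerivAt (fun s : ℝ => χ (x - 2*k*s^2) (-s))
      (fderiv ℝ F (x - 2*k*t^2, -t) ((-(4*k*t) : ℝ), (-1 : ℝ))) t :=
    by have := (hdF (x - 2*k*t^2, -t)).hasFDerivAt.comp_hasDerivAt t hγt; exact this
  have hlin : fderiv ℝ F (x - 2*k*t^2, -t) ((-(4*k*t) : ℝ), (-1 : ℝ))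
      = (-(4*(k:ℂ)*(t:ℂ))) * fderiv ℝ F (x - 2*k*t^2, -t) ((1:ℝ), (0:ℝ))
        + (-1 : ℂ) * fderiv ℝ F (x - 2*k*t^2, -t) ((0:ℝ), (1:ℝ)) := by
    have hsplit : ((-(4*k*t) : ℝ), (-1 : ℝ))
        = (-(4*k*t) : ℝ) • ((1:ℝ), (0:ℝ)) + (-1 : ℝ) • ((0:ℝ), (1:ℝ)) := by
      simp [Prod.ext_iff]
    rw [hsplit, map_add, map_smul, map_smul, Complex.real_smul, Complex.real_smul]
    push_cast; ring
  have hEt : HasDerivAt (fun s : ℝ => Complex.exp (Complex.I *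
        (2*(k:ℂ)*(s:ℂ)*(x:ℂ) - 4*(k:ℂ)^2*(s:ℂ)^3/3)))
      (Complex.I * (2*(k:ℂ)*(x:ℂ) - 4*(k:ℂ)^2*(t:ℂ)^2)
        * Complex.exp (Complex.I * (2*(k:ℂ)*(t:ℂ)*(x:ℂ) - 4*(k:ℂ)^2*(t:ℂ)^3/3))) t := by
    have h := (((((hsD t).const_mul (2*(k:ℂ))).mul_const ((x:ℂ))).sub
        ((((hasDerivAt_pow 3 ((t:ℝ):ℂ)).comp_ofReal).const_mul (4*(k:ℂ)^2)).div_const 3)).const_mul Complex.I).cexp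
    convert h using 1
    · rfl
    beta_reduce
    simp only [Pi.sub_apply]
    push_cast; ring
  have h1 : deriv (fun s => ψ x s) t
      = Complex.I * (2*(k:ℂ)*(x:ℂ) - 4*(k:ℂ)^2*(t:ℂ)^2)
          * Complex.exp (Complex.I * (2*(k:ℂ)*(t:ℂ)*(x:ℂ) - 4*(k:ℂ)^2*(t:ℂ)^3/3))
          * χ (x - 2*k*t^2) (-t)
        + Complex.exp (Complex.I * (2*(k:ℂ)*(t:ℂ)*(x:ℂ) - 4*(k:ℂ)^2*(t:ℂ)^3/3))
          * ((-(4*(k:ℂ)*(t:ℂ))) * fderiv ℝ F (x - 2*k*t^2, -t) ((1:ℝ), (0:ℝ))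
            + (-1 : ℂ) * fderiv ℝ F (x - 2*k*t^2, -t) ((0:ℝ), (1:ℝ))) := by
    have hfun : (fun s : ℝ => ψ x s) = fun s : ℝ =>
        Complex.exp (Complex.I * (2*(k:ℂ)*(s:ℂ)*(x:ℂ) - 4*(k:ℂ)^2*(s:ℂ)^3/3))
          * χ (x - 2*k*s^2) (-s) := funext fun s => hψ x s
    rw [hfun]
    have hd : HasDerivAt (fun s : ℝ =>
        Complex.exp (Complex.I * (2*(k:ℂ)*(s:ℂ)*(x:ℂ) - 4*(k:ℂ)^2*(s:ℂ)^3/3))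
          * χ (x - 2*k*s^2) (-s)) _ t := hEt.mul hχt
    rw [hd.deriv]
    rw [hlin]
  -- x-derivatives
  have hγx : ∀ u : ℝ, HasDerivAt (fun v : ℝ => ((v - 2*k*t^2 : ℝ), (-t : ℝ))) ((1:ℝ), (0:ℝ)) u :=
    fun u => HasDerivAt.prodMk ((hasDerivAt_id u).sub_const _) (hasDerivAt_const u _)
  have hχx : ∀ u : ℝ, HasDerivAt (fun v : ℝ => χ (v - 2*k*t^2) (-t))
      (fderiv ℝ F (u - 2*k*t^2, -t) ((1:ℝ), (0:ℝ))) u := fun u =>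
    by have := (hdF (u - 2*k*t^2, -t)).hasFDerivAt.comp_hasDerivAt u (hγx u); exact this
  have hEx : ∀ u : ℝ, HasDerivAt (fun v : ℝ => Complex.exp (Complex.I *
        (2*(k:ℂ)*(t:ℂ)*(v:ℂ) - 4*(k:ℂ)^2*(t:ℂ)^3/3)))
      (Complex.I * (2*(k:ℂ)*(t:ℂ))
        * Complex.exp (Complex.I * (2*(k:ℂ)*(t:ℂ)*(u:ℂ) - 4*(k:ℂ)^2*(t:ℂ)^3/3))) u := by
    intro u
    have h := ((((hsD u).const_mul (2*(k:ℂ)*(t:ℂ))).sub_const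
        (4*(k:ℂ)^2*(t:ℂ)^3/3)).const_mul Complex.I).cexp
    convert h using 1
    beta_reduce
    ring
  have hDx : ∀ u : ℝ, deriv (fun v => ψ v t) u
      = Complex.I * (2*(k:ℂ)*(t:ℂ))
          * Complex.exp (Complex.I * (2*(k:ℂ)*(t:ℂ)*(u:ℂ) - 4*(k:ℂ)^2*(t:ℂ)^3/3))
          * χ (u - 2*k*t^2) (-t)
        + Complex.exp (Complex.I * (2*(k:ℂ)*(t:ℂ)*(u:ℂ) - 4*(k:ℂ)^2*(t:ℂ)^3/3))
          * fderiv ℝ F (u - 2*k*t^2, -t) ((1:ℝ), (0:ℝ)) := by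
    intro u
    have hfun : (fun v : ℝ => ψ v t) = fun v : ℝ =>
        Complex.exp (Complex.I * (2*(k:ℂ)*(t:ℂ)*(v:ℂ) - 4*(k:ℂ)^2*(t:ℂ)^3/3))
          * χ (v - 2*k*t^2) (-t) := funext fun v => hψ v t
    rw [hfun]
    have hd := (hEx u).mul (hχx u)
    exact hd.deriv
  have hF1x : HasDerivAt (fun u : ℝ => fderiv ℝ F (u - 2*k*t^2, -t) ((1:ℝ), (0:ℝ)))
      (fderiv ℝ (fun q : ℝ × ℝ => fderiv ℝ F q ((1:ℝ), (0:ℝ))) (x - 2*k*t^2, -t) ((1:ℝ), (0:ℝ))) x :=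
    by have := (hdF₁ (x - 2*k*t^2, -t)).hasFDerivAt.comp_hasDerivAt x (hγx x); exact this
  have h2 : deriv (fun u => deriv (fun v => ψ v t) u) x
      = Complex.I * (2*(k:ℂ)*(t:ℂ))
          * (Complex.I * (2*(k:ℂ)*(t:ℂ))
              * Complex.exp (Complex.I * (2*(k:ℂ)*(t:ℂ)*(x:ℂ) - 4*(k:ℂ)^2*(t:ℂ)^3/3))
              * χ (x - 2*k*t^2) (-t)
            + Complex.exp (Complex.I * (2*(k:ℂ)*(t:ℂ)*(x:ℂ) - 4*(k:ℂ)^2*(t:ℂ)^3/3))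
              * fderiv ℝ F (x - 2*k*t^2, -t) ((1:ℝ), (0:ℝ)))
        + (Complex.I * (2*(k:ℂ)*(t:ℂ))
              * Complex.exp (Complex.I * (2*(k:ℂ)*(t:ℂ)*(x:ℂ) - 4*(k:ℂ)^2*(t:ℂ)^3/3))
              * fderiv ℝ F (x - 2*k*t^2, -t) ((1:ℝ), (0:ℝ))
          + Complex.exp (Complex.I * (2*(k:ℂ)*(t:ℂ)*(x:ℂ) - 4*(k:ℂ)^2*(t:ℂ)^3/3))
              * fderiv ℝ (fun q : ℝ × ℝ => fderiv ℝ F q ((1:ℝ), (0:ℝ))) (x - 2*k*t^2, -t) ((1:ℝ), (0:ℝ))) := by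
    have hfun : (fun u : ℝ => deriv (fun v => ψ v t) u) = fun u : ℝ =>
        Complex.I * (2*(k:ℂ)*(t:ℂ))
          * Complex.exp (Complex.I * (2*(k:ℂ)*(t:ℂ)*(u:ℂ) - 4*(k:ℂ)^2*(t:ℂ)^3/3))
          * χ (u - 2*k*t^2) (-t)
        + Complex.exp (Complex.I * (2*(k:ℂ)*(t:ℂ)*(u:ℂ) - 4*(k:ℂ)^2*(t:ℂ)^3/3))
          * fderiv ℝ F (u - 2*k*t^2, -t) ((1:ℝ), (0:ℝ)) := funext hDx
    rw [hfun]
    have hd := (((hEx x).const_mul (Complex.I * (2*(k:ℂ)*(t:ℂ)))).mul (hχx x)).add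
      ((hEx x).mul hF1x)
    refine hd.deriv.trans ?_
    ring
  -- translate the autonomous NLS at the shifted point
  have hd2 : deriv (fun s => χ (x - 2*k*t^2) s) (-t)
      = fderiv ℝ F (x - 2*k*t^2, -t) ((0:ℝ), (1:ℝ)) :=
    ((hdF (x - 2*k*t^2, -t)).hasFDerivAt.comp_hasDerivAt (-t)
      (HasDerivAt.prodMk (hasDerivAt_const (-t) (x - 2*k*t^2)) (hasDerivAt_id (-t)))).deriv
  have hout : deriv (fun u => deriv (fun v => χ v (-t)) u) (x - 2*k*t^2)
      = fderiv ℝ (fun q : ℝ × ℝ => fderiv ℝ F q ((1:ℝ), (0:ℝ))) (x - 2*k*t^2, -t) ((1:ℝ), (0:ℝ)) := by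
    have e1 : (fun u : ℝ => deriv (fun v => χ v (-t)) u)
        = fun u : ℝ => fderiv ℝ F (u, -t) ((1:ℝ), (0:ℝ)) := by
      funext u
      exact ((hdF (u, -t)).hasFDerivAt.comp_hasDerivAt u
        (HasDerivAt.prodMk (hasDerivAt_id u) (hasDerivAt_const u (-t)))).deriv
    rw [e1]
    exact ((hdF₁ (x - 2*k*t^2, -t)).hasFDerivAt.comp_hasDerivAt (x - 2*k*t^2)
      (HasDerivAt.prodMk (hasDerivAt_id (x - 2*k*t^2)) (hasDerivAt_const (x - 2*k*t^2) (-t)))).deriv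
  have h3 : fderiv ℝ (fun q : ℝ × ℝ => fderiv ℝ F q ((1:ℝ), (0:ℝ))) (x - 2*k*t^2, -t) ((1:ℝ), (0:ℝ))
      = Complex.I * fderiv ℝ F (x - 2*k*t^2, -t) ((0:ℝ), (1:ℝ))
        + (h₀:ℂ) * ((‖χ (x - 2*k*t^2) (-t)‖ : ℝ) : ℂ)^2 * χ (x - 2*k*t^2) (-t) := by
    have h := hNLS (x - 2*k*t^2) (-t)
    rw [hd2, hout] at h
    exact h.symm
  have habs : ((‖ψ x t‖ : ℝ) : ℂ) = ((‖χ (x - 2*k*t^2) (-t)‖ : ℝ) : ℂ) := by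
    have hre : Complex.I * (2*(k:ℂ)*(t:ℂ)*(x:ℂ) - 4*(k:ℂ)^2*(t:ℂ)^3/3)
        = ((2*k*t*x - 4*k^2*t^3/3 : ℝ) : ℂ) * Complex.I := by push_cast; ring
    rw [hψ x t, norm_mul, hre, Complex.norm_exp_ofReal_mul_I, one_mul]
  rw [h1, h2, h3, habs, hψ x t]
  linear_combination (norm := (push_cast; ring_nf))
    (2*(k:ℂ)*(x:ℂ) * Complex.exp (Complex.I * (2*(k:ℂ)*(t:ℂ)*(x:ℂ) - 4*(k:ℂ)^2*(t:ℂ)^3/3))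
      * χ (x - 2*k*t^2) (-t)) * Complex.I_sq
end
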